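/- arXiv:2505.13640 — 9 statements merged into one kernel-verified Lean document; each statement's English description precedes it below -/
import Mathlib

section
/- Let h, w be positive even integers and let W : Fin h × Fin w → Bool be such that every filled cell has at most one filled orthogonal neighbor. Then the number of filled cells of W is at most h·w/2, and this bound is attained by some such W. -/
abbrev cellAdj {h w : ℕ} (p q : Fin h × Fin w) : Prop :=
  (p.1 = q.1 ∧ (p.2.val + 1 = q.2.val ∨ q.2.val + 1 = p.2.val)) ∨
  (p.2 = q.2 ∧ (p.1.val + 1 = q.1.val ∨ q.1.val + 1 = p.1.val))

/-- number of filled orthogonal neighbors of `p` -/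
def degW {h w : ℕ} (W : Fin h × Fin w → Bool) (p : Fin h × Fin w) : ℕ :=
  (Finset.univ.filter (fun q => cellAdj p q ∧ W q = true)).card

/-- every filled cell has at most `d` filled orthogonal neighbors -/
def degLEW {h w : ℕ} (W : Fin h × Fin w → Bool) (d : ℕ) : Prop :=
  ∀ p, W p = true → degW W p ≤ d

/-- number of filled cells -/
def filledCount {h w : ℕ} (W : Fin h × Fin w → Bool) : ℕ :=
  (Finset.univ.filter (fun p => W p = true)).card

lemma nat_center (a1 a2 b1 b2 c1 c2 : ℕ)
    (h1 : a1/2 = b1/2) (h2 : a1/2 = c1/2) (h3 : a2/2 = b2/2) (h4 : a2/2 = c2/2)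
    (d1 : a1 ≠ b1 ∨ a2 ≠ b2) (d2 : a1 ≠ c1 ∨ a2 ≠ c2) (d3 : b1 ≠ c1 ∨ b2 ≠ c2) :
    ((a1 = b1 ∧ (a2+1=b2 ∨ b2+1=a2)) ∨ (a2 = b2 ∧ (a1+1=b1 ∨ b1+1=a1))) ∧
    ((a1 = c1 ∧ (a2+1=c2 ∨ c2+1=a2)) ∨ (a2 = c2 ∧ (a1+1=c1 ∨ c1+1=a1))) ∨
    ((b1 = a1 ∧ (b2+1=a2 ∨ a2+1=b2)) ∨ (b2 = a2 ∧ (b1+1=a1 ∨ a1+1=b1))) ∧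
    ((b1 = c1 ∧ (b2+1=c2 ∨ c2+1=b2)) ∨ (b2 = c2 ∧ (b1+1=c1 ∨ c1+1=b1))) ∨
    ((c1 = a1 ∧ (c2+1=a2 ∨ a2+1=c2)) ∨ (c2 = a2 ∧ (c1+1=a1 ∨ a1+1=c1))) ∧
    ((c1 = b1 ∧ (c2+1=b2 ∨ b2+1=c2)) ∨ (c2 = b2 ∧ (c1+1=b1 ∨ b1+1=c1))) := by
  omega

lemma numAdj_cellAdj {h w : ℕ} {p q : Fin h × Fin w}
    (hn : (p.1.val = q.1.val ∧ (p.2.val+1=q.2.val ∨ q.2.val+1=p.2.val)) ∨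
          (p.2.val = q.2.val ∧ (p.1.val+1=q.1.val ∨ q.1.val+1=p.1.val))) :
    cellAdj p q := by
  rcases hn with ⟨h1, h2⟩ | ⟨h1, h2⟩
  · exact Or.inl ⟨Fin.ext h1, h2⟩
  · exact Or.inr ⟨Fin.ext h1, h2⟩

lemma two_le_degW {h w : ℕ} (W : Fin h × Fin w → Bool) (p q r : Fin h × Fin w)
    (hqr : q ≠ r) (h1 : cellAdj p q) (h2 : cellAdj p r)
    (hWq : W q = true) (hWr : W r = true) : 2 ≤ degW W p := by
  have hsub : ({q, r} : Finset (Fin h × Fin w)) ⊆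
      Finset.univ.filter (fun s => cellAdj p s ∧ W s = true) := by
    intro x hx
    simp only [Finset.mem_insert, Finset.mem_singleton] at hx
    rcases hx with rfl | rfl <;> simp [Finset.mem_filter, *]
  have := Finset.card_le_card hsub
  rwa [Finset.card_insert_of_notMem (by simpa using hqr), Finset.card_singleton] at this

/-- upper bound: partition the grid into 2×2 blocks; each block holds at most 2 filled cells -/
lemma upperBound {h w : ℕ} (heh : h % 2 = 0) (hew : w % 2 = 0)
    (W : Fin h × Fin w → Bool) (hd : degLEW W 1) : filledCount W ≤ h * w / 2 := by
  classical
  have hdvdh : 2 ∣ h := Nat.dvd_of_mod_eq_zero heh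
  have hdvdw : 2 ∣ w := Nat.dvd_of_mod_eq_zero hew
  set f : Fin h × Fin w → Fin (h/2) × Fin (w/2) := fun p =>
    (⟨p.1.val / 2, Nat.div_lt_div_of_lt_of_dvd hdvdh p.1.isLt⟩,
     ⟨p.2.val / 2, Nat.div_lt_div_of_lt_of_dvd hdvdw p.2.isLt⟩) with hf
  have hcard := Finset.card_eq_sum_card_fiberwise
    (f := f) (s := Finset.univ.filter (fun p => W p = true)) (t := Finset.univ)
    (fun x _ => Finset.mem_univ _)
  have hfib : ∀ b : Fin (h/2) × Fin (w/2),
      ((Finset.univ.filter (fun p => W p = true)).filter (fun p => f p = b)).card ≤ 2 := by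
    intro b
    by_contra hc
    push_neg at hc
    rw [Finset.filter_filter] at hc
    obtain ⟨x, y, z, hx, hy, hz, hxy, hxz, hyz⟩ := Finset.two_lt_card_iff.mp hc
    simp only [Finset.mem_filter, Finset.mem_univ, true_and] at hx hy hz
    obtain ⟨hWx, hfx⟩ := hx; obtain ⟨hWy, hfy⟩ := hy; obtain ⟨hWz, hfz⟩ := hz
    have e1 : x.1.val / 2 = y.1.val / 2 := by
      have := congrArg (fun t => t.1.val) (hfx.trans hfy.symm); simpa [hf] using this
    have e2 : x.1.val / 2 = z.1.val / 2 := by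
      have := congrArg (fun t => t.1.val) (hfx.trans hfz.symm); simpa [hf] using this
    have e3 : x.2.val / 2 = y.2.val / 2 := by
      have := congrArg (fun t => t.2.val) (hfx.trans hfy.symm); simpa [hf] using this
    have e4 : x.2.val / 2 = z.2.val / 2 := by
      have := congrArg (fun t => t.2.val) (hfx.trans hfz.symm); simpa [hf] using this
    have ne1 : x.1.val ≠ y.1.val ∨ x.2.val ≠ y.2.val := by
      by_contra hcc; push_neg at hcc
      exact hxy (Prod.ext (Fin.ext hcc.1) (Fin.ext hcc.2))
    have ne2 : x.1.val ≠ z.1.val ∨ x.2.val ≠ z.2.val := by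
      by_contra hcc; push_neg at hcc
      exact hxz (Prod.ext (Fin.ext hcc.1) (Fin.ext hcc.2))
    have ne3 : y.1.val ≠ z.1.val ∨ y.2.val ≠ z.2.val := by
      by_contra hcc; push_neg at hcc
      exact hyz (Prod.ext (Fin.ext hcc.1) (Fin.ext hcc.2))
    rcases nat_center x.1.val x.2.val y.1.val y.2.val z.1.val z.2.val e1 e2 e3 e4 ne1 ne2 ne3 with
      ⟨ha, hb⟩ | ⟨ha, hb⟩ | ⟨ha, hb⟩
    · exact absurd (hd x hWx) (by
        have := two_le_degW W x y z hyz (numAdj_cellAdj ha) (numAdj_cellAdj hb) hWy hWz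
        omega)
    · exact absurd (hd y hWy) (by
        have := two_le_degW W y x z hxz (numAdj_cellAdj ha) (numAdj_cellAdj hb) hWx hWz
        omega)
    · exact absurd (hd z hWz) (by
        have := two_le_degW W z x y hxy (numAdj_cellAdj ha) (numAdj_cellAdj hb) hWx hWy
        omega)
  calc filledCount W = _ := hcard
    _ ≤ ∑ _b : Fin (h/2) × Fin (w/2), 2 := Finset.sum_le_sum (fun b _ => hfib b)
    _ = (h/2) * (w/2) * 2 := by simp [Finset.sum_const, mul_comm]
    _ ≤ h * w / 2 := by
        obtain ⟨a, rfl⟩ := hdvdh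
        obtain ⟨b, rfl⟩ := hdvdw
        have h1 : 2*a/2 = a := by omega
        have h2 : 2*b/2 = b := by omega
        have h3 : 2*a*(2*b)/2 = a*b*2 := by
          rw [show 2*a*(2*b) = a*b*2*2 by ring, Nat.mul_div_cancel _ (by norm_num)]
        rw [h1, h2, h3]

/-- the extremal word: horizontal dominoes in a brick pattern -/
def W0 {h w : ℕ} : Fin h × Fin w → Bool :=
  fun p => decide ((p.2.val + 2 * p.1.val) % 4 < 2)

lemma W0_deg {h w : ℕ} : degLEW (W0 (h := h) (w := w)) 1 := by
  intro p hp
  rw [degW, Finset.card_le_one]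
  intro q hq r hr
  simp only [Finset.mem_filter, Finset.mem_univ, true_and, W0,
    decide_eq_true_eq, Prod.ext_iff, Fin.ext_iff] at hq hr hp ⊢
  simp only [cellAdj, Fin.ext_iff] at hq hr
  omega

lemma W0_count {h w : ℕ} (heh : h % 2 = 0) :
    filledCount (W0 (h := h) (w := w)) = h * w / 2 := by
  classical
  have key : filledCount (W0 (h := h) (w := w)) =
      (Finset.univ : Finset (Fin (h/2) × Fin w)).card := by
    rw [filledCount]
    refine Finset.card_bij' (fun p _ =>
        ((⟨p.1.val / 2, Nat.div_lt_div_of_lt_of_dvd (Nat.dvd_of_mod_eq_zero heh) p.1.isLt⟩ :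
          Fin (h/2)), p.2))
      (fun q _ => ((⟨2 * q.1.val + (if q.2.val % 4 < 2 then 0 else 1), by
          have := q.1.isLt; split <;> omega⟩ : Fin h), q.2))
      (fun p hp => Finset.mem_univ _) ?_ ?_ ?_
    · intro q hq
      simp only [Finset.mem_filter, Finset.mem_univ, true_and, W0,
        decide_eq_true_eq]
      split <;> omega
    · intro p hp
      simp only [Finset.mem_filter, Finset.mem_univ, true_and, W0,
        decide_eq_true_eq] at hp
      refine Prod.ext (Fin.ext ?_) rfl
      simp only []
      split <;> omega
    · intro q hq
      refine Prod.ext (Fin.ext ?_) rfl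
      simp only []
      split <;> omega
  rw [key, Finset.card_univ, Fintype.card_prod, Fintype.card_fin, Fintype.card_fin]
  obtain ⟨a, rfl⟩ := Nat.dvd_of_mod_eq_zero heh
  rw [show 2 * a * w = a * w * 2 by ring, Nat.mul_div_cancel _ (by norm_num),
    show 2 * a / 2 = a by omega]

theorem stmt1 (h w : ℕ) (hh : 0 < h) (hw : 0 < w)
    (heh : h % 2 = 0) (hew : w % 2 = 0) :
    (∀ W : Fin h × Fin w → Bool, degLEW W 1 → filledCount W ≤ h * w / 2) ∧
    (∃ W : Fin h × Fin w → Bool, degLEW W 1 ∧ filledCount W = h * w / 2) := by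
  exact ⟨fun W hd => upperBound heh hew W hd, W0, W0_deg, W0_count heh⟩
end

section
/- Let h be an odd positive integer, w an even positive integer, and W : Fin h × Fin w → Bool such that every filled cell has at most one filled orthogonal neighbor. Then the number of filled cells of W is at most (h-1)·w/2 + ⌈2w/3⌉, and this bound is attained by some such W. -/
/- ===== auxiliary lemmas ===== -/

lemma no_two {h w : ℕ} (W : Fin h × Fin w → Bool) (hd : degLEW W 1)
    (p q1 q2 : Fin h × Fin w) (hp : W p = true)
    (h1 : cellAdj p q1) (h2 : cellAdj p q2)
    (w1 : W q1 = true) (w2 : W q2 = true) (hne : q1 ≠ q2) : False := by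
  have hcard : 1 < (Finset.univ.filter (fun q => cellAdj p q ∧ W q = true)).card :=
    Finset.one_lt_card.mpr ⟨q1, Finset.mem_filter.mpr ⟨Finset.mem_univ _, h1, w1⟩,
      q2, Finset.mem_filter.mpr ⟨Finset.mem_univ _, h2, w2⟩, hne⟩
  have hdeg := hd p hp
  unfold degW at hdeg
  omega

def Fv {h w : ℕ} (W : Fin h × Fin w → Bool) (i j : ℕ) : ℕ :=
  if hi : i < h then if hj : j < w then (if W (⟨i, hi⟩, ⟨j, hj⟩) then 1 else 0) else 0 else 0

lemma Fv_le_one {h w : ℕ} (W : Fin h × Fin w → Bool) (i j : ℕ) : Fv W i j ≤ 1 := by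
  unfold Fv; split_ifs <;> omega

lemma Fv_one {h w : ℕ} (W : Fin h × Fin w → Bool) {i j : ℕ} (hi : i < h) (hj : j < w)
    (hf : Fv W i j = 1) : W (⟨i, hi⟩, ⟨j, hj⟩) = true := by
  unfold Fv at hf
  rw [dif_pos hi, dif_pos hj] at hf
  by_cases hb : W (⟨i, hi⟩, ⟨j, hj⟩) = true
  · exact hb
  · simp [hb] at hf

lemma numH3 {h w : ℕ} (W : Fin h × Fin w → Bool) (hd : degLEW W 1) {i j : ℕ}
    (hi : i < h) (hj : j + 2 < w) :
    Fv W i j + Fv W i (j+1) + Fv W i (j+2) ≤ 2 := by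
  by_contra hcon
  push_neg at hcon
  have f1 := Fv_le_one W i j
  have f2 := Fv_le_one W i (j+1)
  have f3 := Fv_le_one W i (j+2)
  have w1 := Fv_one W hi (show j < w by omega) (by omega)
  have w2 := Fv_one W hi (show j+1 < w by omega) (by omega)
  have w3 := Fv_one W hi hj (by omega)
  exact no_two W hd (⟨i, hi⟩, ⟨j+1, by omega⟩) (⟨i, hi⟩, ⟨j, by omega⟩) (⟨i, hi⟩, ⟨j+2, hj⟩)
    w2 (Or.inl ⟨rfl, Or.inr rfl⟩) (Or.inl ⟨rfl, Or.inl rfl⟩) w1 w3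
    (by intro he; simp only [Prod.mk.injEq, Fin.mk.injEq] at he; omega)

lemma numB22 {h w : ℕ} (W : Fin h × Fin w → Bool) (hd : degLEW W 1) {i j : ℕ}
    (hi : i + 1 < h) (hj : j + 1 < w) :
    Fv W i j + Fv W i (j+1) + Fv W (i+1) j + Fv W (i+1) (j+1) ≤ 2 := by
  by_contra hcon
  push_neg at hcon
  have f1 := Fv_le_one W i j
  have f2 := Fv_le_one W i (j+1)
  have f3 := Fv_le_one W (i+1) j
  have f4 := Fv_le_one W (i+1) (j+1)
  have hi' : i < h := by omega
  have hj' : j < w := by omega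
  have hcases : (Fv W i j = 1 ∧ Fv W i (j+1) = 1 ∧ Fv W (i+1) j = 1) ∨
      (Fv W i j = 1 ∧ Fv W i (j+1) = 1 ∧ Fv W (i+1) (j+1) = 1) ∨
      (Fv W i j = 1 ∧ Fv W (i+1) j = 1 ∧ Fv W (i+1) (j+1) = 1) ∨
      (Fv W i (j+1) = 1 ∧ Fv W (i+1) j = 1 ∧ Fv W (i+1) (j+1) = 1) := by omega
  rcases hcases with ⟨e1, e2, e3⟩ | ⟨e1, e2, e3⟩ | ⟨e1, e2, e3⟩ | ⟨e1, e2, e3⟩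
  · -- corner (i,j), neighbors (i,j+1),(i+1,j)
    exact no_two W hd (⟨i, hi'⟩, ⟨j, hj'⟩) (⟨i, hi'⟩, ⟨j+1, hj⟩) (⟨i+1, hi⟩, ⟨j, hj'⟩)
      (Fv_one W hi' hj' e1) (Or.inl ⟨rfl, Or.inl rfl⟩) (Or.inr ⟨rfl, Or.inl rfl⟩)
      (Fv_one W hi' hj e2) (Fv_one W hi hj' e3)
      (by intro he; simp only [Prod.mk.injEq, Fin.mk.injEq] at he; omega)
  · -- corner (i,j+1), neighbors (i,j),(i+1,j+1)
    exact no_two W hd (⟨i, hi'⟩, ⟨j+1, hj⟩) (⟨i, hi'⟩, ⟨j, hj'⟩) (⟨i+1, hi⟩, ⟨j+1, hj⟩)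
      (Fv_one W hi' hj e2) (Or.inl ⟨rfl, Or.inr rfl⟩) (Or.inr ⟨rfl, Or.inl rfl⟩)
      (Fv_one W hi' hj' e1) (Fv_one W hi hj e3)
      (by intro he; simp only [Prod.mk.injEq, Fin.mk.injEq] at he; omega)
  · -- corner (i+1,j), neighbors (i,j),(i+1,j+1)
    exact no_two W hd (⟨i+1, hi⟩, ⟨j, hj'⟩) (⟨i, hi'⟩, ⟨j, hj'⟩) (⟨i+1, hi⟩, ⟨j+1, hj⟩)
      (Fv_one W hi hj' e2) (Or.inr ⟨rfl, Or.inr rfl⟩) (Or.inl ⟨rfl, Or.inl rfl⟩)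
      (Fv_one W hi' hj' e1) (Fv_one W hi hj e3)
      (by intro he; simp only [Prod.mk.injEq, Fin.mk.injEq] at he; omega)
  · -- corner (i+1,j+1), neighbors (i,j+1),(i+1,j)
    exact no_two W hd (⟨i+1, hi⟩, ⟨j+1, hj⟩) (⟨i, hi'⟩, ⟨j+1, hj⟩) (⟨i+1, hi⟩, ⟨j, hj'⟩)
      (Fv_one W hi hj e3) (Or.inr ⟨rfl, Or.inr rfl⟩) (Or.inl ⟨rfl, Or.inr rfl⟩)
      (Fv_one W hi' hj e1) (Fv_one W hi hj' e2)
      (by intro he; simp only [Prod.mk.injEq, Fin.mk.injEq] at he; omega)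

lemma rowBound : ∀ (n : ℕ) (u : ℕ → ℕ), (∀ j, u j ≤ 1) →
    (∀ j, j + 2 < n → u j + u (j+1) + u (j+2) ≤ 2) →
    ∑ j ∈ Finset.range n, u j ≤ (2*n+2)/3 := by
  intro n
  induction n using Nat.strong_induction_on with
  | _ n ih =>
    intro u h1 h3
    match n, ih with
    | 0, _ => simp
    | 1, _ =>
      rw [Finset.sum_range_one]
      have := h1 0; omega
    | 2, _ =>
      rw [Finset.sum_range_succ, Finset.sum_range_one]
      have := h1 0; have := h1 1; omega
    | (m+3), ih =>
      rw [Finset.sum_range_succ, Finset.sum_range_succ, Finset.sum_range_succ]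
      have hm := ih m (by omega) u h1 (fun j hj => h3 j (by omega))
      have := h3 m (by omega)
      omega

lemma sum_pair (m : ℕ) (u : ℕ → ℕ) (hu : ∀ k, k < m → u (2*k) + u (2*k+1) ≤ 2) :
    ∑ j ∈ Finset.range (2*m), u j ≤ 2*m := by
  induction m with
  | zero => simp
  | succ n ih =>
    have e : 2*(n+1) = (2*n)+1+1 := by ring
    rw [e, Finset.sum_range_succ, Finset.sum_range_succ]
    have h1 := hu n (by omega)
    have h2 := ih (fun k hk => hu k (by omega))
    omega

lemma sum_split (m : ℕ) (R : ℕ → ℕ) :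
    ∑ i ∈ Finset.range (2*m+1), R i = R 0 + ∑ k ∈ Finset.range m, (R (2*k+1) + R (2*k+2)) := by
  induction m with
  | zero => simp
  | succ n ih =>
    have e : 2*(n+1)+1 = (2*n+1)+1+1 := by ring
    rw [e, Finset.sum_range_succ, Finset.sum_range_succ, ih, Finset.sum_range_succ]
    omega

lemma filledCount_eq {h w : ℕ} (W : Fin h × Fin w → Bool) :
    filledCount W = ∑ i : Fin h, ∑ j : Fin w, (if W (i, j) then 1 else 0) := by
  rw [filledCount, Finset.card_filter, Fintype.sum_prod_type]

lemma sum_eq_Fv {h w : ℕ} (W : Fin h × Fin w → Bool) :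
    (∑ i : Fin h, ∑ j : Fin w, (if W (i, j) then 1 else 0)) =
      ∑ i ∈ Finset.range h, ∑ j ∈ Finset.range w, Fv W i j := by
  rw [← Fin.sum_univ_eq_sum_range (fun i => ∑ j ∈ Finset.range w, Fv W i j) h]
  apply Finset.sum_congr rfl
  intro i _
  rw [← Fin.sum_univ_eq_sum_range (fun j => Fv W i.val j) w]
  apply Finset.sum_congr rfl
  intro j _
  simp [Fv, i.isLt, j.isLt]

/- ===== the construction ===== -/

def Wc (h w : ℕ) : Fin h × Fin w → Bool :=
  fun p => if p.1.val % 2 = 0 then decide (p.2.val % 3 ≠ 2) else decide (p.2.val % 3 = 2)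

lemma Wc_true {h w : ℕ} {p : Fin h × Fin w} :
    Wc h w p = true ↔
      (p.1.val % 2 = 0 ∧ p.2.val % 3 ≠ 2) ∨ (p.1.val % 2 = 1 ∧ p.2.val % 3 = 2) := by
  unfold Wc
  split_ifs with hs
  · simp [hs]
    try omega
  · simp [hs]
    try omega

lemma Wc_deg (h w : ℕ) : degLEW (Wc h w) 1 := by
  intro p hp
  rw [degW]
  apply Finset.card_le_one.mpr
  intro a ha b hb
  simp only [Finset.mem_filter, Finset.mem_univ, true_and] at ha hb
  obtain ⟨ca, wa⟩ := ha
  obtain ⟨cb, wb⟩ := hb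
  rw [Wc_true] at hp wa wb
  have goal : a.1.val = b.1.val ∧ a.2.val = b.2.val := by
    simp only [cellAdj, Prod.ext_iff, Fin.ext_iff] at ca cb
    omega
  have h1 : a.1 = b.1 := Fin.ext goal.1
  have h2 : a.2 = b.2 := Fin.ext goal.2
  exact Prod.ext h1 h2

lemma Asum : ∀ n : ℕ, ∑ j ∈ Finset.range n, (if j % 3 = 2 then 0 else 1) = (2*n+2)/3 := by
  intro n
  induction n using Nat.strong_induction_on with
  | _ n ih =>
    match n, ih with
    | 0, _ => simp
    | 1, _ => simp
    | 2, _ => decide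
    | (m+3), ih =>
      rw [Finset.sum_range_succ, Finset.sum_range_succ, Finset.sum_range_succ, ih m (by omega)]
      rcases (show m % 3 = 0 ∨ m % 3 = 1 ∨ m % 3 = 2 by omega) with h0 | h0 | h0
      · rw [if_neg (show ¬ (m % 3 = 2) by omega), if_neg (show ¬ ((m+1) % 3 = 2) by omega),
          if_pos (show (m+2) % 3 = 2 by omega)]
        omega
      · rw [if_neg (show ¬ (m % 3 = 2) by omega), if_pos (show (m+1) % 3 = 2 by omega),
          if_neg (show ¬ ((m+2) % 3 = 2) by omega)]
        omega
      · rw [if_pos (show m % 3 = 2 by omega), if_neg (show ¬ ((m+1) % 3 = 2) by omega),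
          if_neg (show ¬ ((m+2) % 3 = 2) by omega)]
        omega

lemma Bsum (n : ℕ) :
    ∑ j ∈ Finset.range n, (if j % 3 = 2 then 1 else 0) = n - (2*n+2)/3 := by
  have h1 : ∑ j ∈ Finset.range n, ((if j % 3 = 2 then 0 else 1) + (if j % 3 = 2 then 1 else 0)) = n := by
    rw [Finset.sum_congr rfl (fun j _ => by split_ifs <;> rfl)]
    simp
  rw [Finset.sum_add_distrib, Asum] at h1
  omega

theorem stmt2 (h w : ℕ) (hh : 0 < h) (hw : 0 < w)
    (hoh : h % 2 = 1) (hew : w % 2 = 0) :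
    (∀ W : Fin h × Fin w → Bool, degLEW W 1 →
      filledCount W ≤ (h - 1) * w / 2 + (2 * w + 2) / 3) ∧
    (∃ W : Fin h × Fin w → Bool, degLEW W 1 ∧
      filledCount W = (h - 1) * w / 2 + (2 * w + 2) / 3) := by
  obtain ⟨m, rfl⟩ : ∃ m, h = 2*m+1 := ⟨h/2, by omega⟩
  have hfront : (2*m+1-1) * w / 2 = m * w := by
    rw [show (2*m+1-1) = 2*m from by omega, show 2*m*w = m*w*2 from by ring]
    exact Nat.mul_div_cancel _ (by norm_num)
  constructor
  · -- upper bound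
    intro W hd
    rw [filledCount_eq, sum_eq_Fv]
    have row0 : ∑ j ∈ Finset.range w, Fv W 0 j ≤ (2*w+2)/3 :=
      rowBound w _ (fun j => Fv_le_one W 0 j) (fun j hj => numH3 W hd (by omega) hj)
    have pairs : ∑ k ∈ Finset.range m,
        ((∑ j ∈ Finset.range w, Fv W (2*k+1) j) + (∑ j ∈ Finset.range w, Fv W (2*k+2) j)) ≤ m * w := by
      calc ∑ k ∈ Finset.range m,
            ((∑ j ∈ Finset.range w, Fv W (2*k+1) j) + (∑ j ∈ Finset.range w, Fv W (2*k+2) j))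
          ≤ ∑ _k ∈ Finset.range m, w := by
            apply Finset.sum_le_sum
            intro k hk
            rw [Finset.mem_range] at hk
            rw [← Finset.sum_add_distrib]
            have hw2 : w = 2 * (w/2) := by omega
            calc ∑ j ∈ Finset.range w, (Fv W (2*k+1) j + Fv W (2*k+2) j)
                = ∑ j ∈ Finset.range (2*(w/2)), (Fv W (2*k+1) j + Fv W (2*k+2) j) := by rw [← hw2]
              _ ≤ 2 * (w/2) := by
                  apply sum_pair
                  intro k' hk'
                  have hB := numB22 W hd (i := 2*k+1) (j := 2*k')
                    (by omega) (by omega)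
                  rw [show 2*k+1+1 = 2*k+2 from rfl] at hB
                  omega
              _ = w := by omega
        _ = m * w := by rw [Finset.sum_const, Finset.card_range, smul_eq_mul]
    calc ∑ i ∈ Finset.range (2*m+1), ∑ j ∈ Finset.range w, Fv W i j
        = (∑ j ∈ Finset.range w, Fv W 0 j) + ∑ k ∈ Finset.range m,
            ((∑ j ∈ Finset.range w, Fv W (2*k+1) j) + (∑ j ∈ Finset.range w, Fv W (2*k+2) j)) :=
          sum_split m _
      _ ≤ (2*w+2)/3 + m * w := Nat.add_le_add row0 pairs
      _ = (2*m+1-1) * w / 2 + (2*w+2)/3 := by rw [hfront]; exact Nat.add_comm _ _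
  · -- construction
    refine ⟨Wc (2*m+1) w, Wc_deg _ _, ?_⟩
    rw [filledCount_eq, sum_eq_Fv]
    have hrow : ∀ i : ℕ, i < 2*m+1 → ∑ j ∈ Finset.range w, Fv (Wc (2*m+1) w) i j =
        if i % 2 = 0 then (2*w+2)/3 else w - (2*w+2)/3 := by
      intro i hi
      have hterm : ∀ j : ℕ, j < w → Fv (Wc (2*m+1) w) i j =
          if i % 2 = 0 then (if j % 3 = 2 then 0 else 1) else (if j % 3 = 2 then 1 else 0) := by
        intro j hj
        by_cases hie : i % 2 = 0 <;> by_cases hj3 : j % 3 = 2 <;>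
          simp [Fv, Wc, hi, hj, hie, hj3]
      rw [Finset.sum_congr rfl (fun j hj => hterm j (Finset.mem_range.mp hj))]
      by_cases hie : i % 2 = 0
      · simp only [if_pos hie]
        exact Asum w
      · simp only [if_neg hie]
        exact Bsum w
    have hA : (2*w+2)/3 ≤ w := by omega
    have h0 : ∑ j ∈ Finset.range w, Fv (Wc (2*m+1) w) 0 j = (2*w+2)/3 := by
      rw [hrow 0 (by omega)]; norm_num
    have hpair : ∀ k ∈ Finset.range m,
        ((∑ j ∈ Finset.range w, Fv (Wc (2*m+1) w) (2*k+1) j) +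
         (∑ j ∈ Finset.range w, Fv (Wc (2*m+1) w) (2*k+2) j)) = w := by
      intro k hk
      rw [Finset.mem_range] at hk
      rw [hrow (2*k+1) (by omega), hrow (2*k+2) (by omega)]
      rw [if_neg (by omega), if_pos (by omega)]
      omega
    calc ∑ i ∈ Finset.range (2*m+1), ∑ j ∈ Finset.range w, Fv (Wc (2*m+1) w) i j
        = (∑ j ∈ Finset.range w, Fv (Wc (2*m+1) w) 0 j) + ∑ k ∈ Finset.range m,
            ((∑ j ∈ Finset.range w, Fv (Wc (2*m+1) w) (2*k+1) j) +
             (∑ j ∈ Finset.range w, Fv (Wc (2*m+1) w) (2*k+2) j)) := sum_split m _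
      _ = (2*w+2)/3 + ∑ _k ∈ Finset.range m, w := by
          rw [h0]; congr 1; exact Finset.sum_congr rfl hpair
      _ = (2*w+2)/3 + m * w := by rw [Finset.sum_const, Finset.card_range, smul_eq_mul]
      _ = (2*m+1-1) * w / 2 + (2*w+2)/3 := by rw [hfront]; exact Nat.add_comm _ _
end

section
/- For all positive integers h and w, there exists a 2-dimensional binary word W : Fin h × Fin w → Bool in which every filled cell has degree at most 3 among filled cells, all boundary cells of the grid are filled, and the number of filled cells is maximal among all words of dimension h × w with maximum degree at most 3. -/
namespace Aux3Full

variable {h w : ℕ}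

def nUp (p : Fin h × Fin w) : Fin h × Fin w :=
  (⟨p.1.val - 1, Nat.lt_of_le_of_lt (Nat.sub_le _ _) p.1.2⟩, p.2)

def nDown (p : Fin h × Fin w) : Fin h × Fin w :=
  (⟨min (p.1.val + 1) (h - 1), by have := p.1.2; omega⟩, p.2)

def nLeft (p : Fin h × Fin w) : Fin h × Fin w :=
  (p.1, ⟨p.2.val - 1, Nat.lt_of_le_of_lt (Nat.sub_le _ _) p.2.2⟩)

def nRight (p : Fin h × Fin w) : Fin h × Fin w :=
  (p.1, ⟨min (p.2.val + 1) (w - 1), by have := p.2.2; omega⟩)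

lemma adjSubset {p r : Fin h × Fin w} (hr : cellAdj p r) :
    r = nUp p ∨ r = nDown p ∨ r = nLeft p ∨ r = nRight p := by
  have h1 := r.1.2; have h2 := r.2.2; have h3 := p.1.2; have h4 := p.2.2
  simp only [cellAdj, nUp, nDown, nLeft, nRight, Prod.ext_iff, Fin.ext_iff, Fin.val_mk,
    and_true, true_and] at hr ⊢
  omega

lemma selfT {p : Fin h × Fin w}
    (hb : p.1.val = 0 ∨ p.1.val = h - 1 ∨ p.2.val = 0 ∨ p.2.val = w - 1) :
    p = nUp p ∨ p = nDown p ∨ p = nLeft p ∨ p = nRight p := by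
  have h1 := p.1.2; have h2 := p.2.2
  simp only [nUp, nDown, nLeft, nRight, Prod.ext_iff, Fin.ext_iff, Fin.val_mk,
    and_true, true_and]
  omega

lemma not_selfAdj {p : Fin h × Fin w} : ¬ cellAdj p p := by
  simp only [cellAdj]; omega

lemma card4 {α : Type*} [DecidableEq α] (a b c d : α) :
    ({a, b, c, d} : Finset α).card ≤ 4 := by
  have t1 := Finset.card_insert_le a ({b, c, d} : Finset α)
  have t2 := Finset.card_insert_le b ({c, d} : Finset α)
  have t3 := Finset.card_insert_le c ({d} : Finset α)
  simp only [Finset.card_singleton] at *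
  omega

lemma deg_le_three {W : Fin h × Fin w → Bool} {p x : Fin h × Fin w}
    (hxT : x = nUp p ∨ x = nDown p ∨ x = nLeft p ∨ x = nRight p)
    (hxS : ¬(cellAdj p x ∧ W x = true)) : degW W p ≤ 3 := by
  have hsub : Finset.univ.filter (fun q => cellAdj p q ∧ W q = true) ⊆
      ({nUp p, nDown p, nLeft p, nRight p} : Finset _).erase x := by
    intro r hr
    simp only [Finset.mem_filter, Finset.mem_univ, true_and] at hr
    refine Finset.mem_erase.2 ⟨?_, ?_⟩
    · rintro rfl; exact hxS hr
    · simp only [Finset.mem_insert, Finset.mem_singleton]; exact adjSubset hr.1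
  have hx4 : x ∈ ({nUp p, nDown p, nLeft p, nRight p} : Finset (Fin h × Fin w)) := by
    simp only [Finset.mem_insert, Finset.mem_singleton]; exact hxT
  have hle := Finset.card_le_card hsub
  rw [Finset.card_erase_of_mem hx4] at hle
  have h4 := card4 (nUp p) (nDown p) (nLeft p) (nRight p)
  unfold degW
  omega

lemma deg_ge_four {W : Fin h × Fin w → Bool} {p : Fin h × Fin w}
    (hi : 0 < p.1.val ∧ p.1.val < h - 1 ∧ 0 < p.2.val ∧ p.2.val < w - 1)
    (hall : ∀ q, cellAdj p q → W q = true) : 4 ≤ degW W p := by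
  have h1 := p.1.2; have h2 := p.2.2
  have aU : cellAdj p (nUp p) := by
    simp only [cellAdj, nUp, Prod.ext_iff, Fin.ext_iff, Fin.val_mk, and_true, true_and]; omega
  have aD : cellAdj p (nDown p) := by
    simp only [cellAdj, nDown, Prod.ext_iff, Fin.ext_iff, Fin.val_mk, and_true, true_and]; omega
  have aL : cellAdj p (nLeft p) := by
    simp only [cellAdj, nLeft, Prod.ext_iff, Fin.ext_iff, Fin.val_mk, and_true, true_and]; omega
  have aR : cellAdj p (nRight p) := by
    simp only [cellAdj, nRight, Prod.ext_iff, Fin.ext_iff, Fin.val_mk, and_true, true_and]; omega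
  have hsub : ({nUp p, nDown p, nLeft p, nRight p} : Finset (Fin h × Fin w)) ⊆
      Finset.univ.filter (fun q => cellAdj p q ∧ W q = true) := by
    intro r hr
    simp only [Finset.mem_insert, Finset.mem_singleton] at hr
    simp only [Finset.mem_filter, Finset.mem_univ, true_and]
    rcases hr with rfl | rfl | rfl | rfl
    exacts [⟨aU, hall _ aU⟩, ⟨aD, hall _ aD⟩, ⟨aL, hall _ aL⟩, ⟨aR, hall _ aR⟩]
  have d1 : nUp p ∉ ({nDown p, nLeft p, nRight p} : Finset (Fin h × Fin w)) := by
    simp only [Finset.mem_insert, Finset.mem_singleton, nUp, nDown, nLeft, nRight,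
      Prod.ext_iff, Fin.ext_iff, Fin.val_mk, and_true, true_and, not_or]
    refine ⟨?_, ?_, ?_⟩ <;> intro hc <;> omega
  have d2 : nDown p ∉ ({nLeft p, nRight p} : Finset (Fin h × Fin w)) := by
    simp only [Finset.mem_insert, Finset.mem_singleton, nDown, nLeft, nRight,
      Prod.ext_iff, Fin.ext_iff, Fin.val_mk, and_true, true_and, not_or]
    refine ⟨?_, ?_⟩ <;> intro hc <;> omega
  have d3 : nLeft p ∉ ({nRight p} : Finset (Fin h × Fin w)) := by
    simp only [Finset.mem_singleton, nLeft, nRight, Prod.ext_iff, Fin.ext_iff, Fin.val_mk,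
      and_true, true_and]
    intro hc; omega
  have hcard : ({nUp p, nDown p, nLeft p, nRight p} : Finset (Fin h × Fin w)).card = 4 := by
    rw [Finset.card_insert_of_notMem d1, Finset.card_insert_of_notMem d2,
      Finset.card_insert_of_notMem d3, Finset.card_singleton]
  have := Finset.card_le_card hsub
  unfold degW
  omega

end Aux3Full

namespace Aux3Full

variable {h w : ℕ}

def clampF (p : Fin h × Fin w) : Fin h × Fin w :=
  (⟨min (max p.1.val 1) (h - 2), by have := p.1.2; omega⟩,
   ⟨min (max p.2.val 1) (w - 2), by have := p.2.2; omega⟩)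

lemma clampF_interior {p : Fin h × Fin w}
    (hi : 0 < p.1.val ∧ p.1.val < h - 1 ∧ 0 < p.2.val ∧ p.2.val < w - 1) :
    clampF p = p := by
  simp only [clampF, Prod.ext_iff, Fin.ext_iff, Fin.val_mk, and_true, true_and]
  omega

lemma clampF_adj {p e : Fin h × Fin w}
    (hi : 0 < p.1.val ∧ p.1.val < h - 1 ∧ 0 < p.2.val ∧ p.2.val < w - 1)
    (hadj : cellAdj p e) : clampF e = e ∨ clampF e = p := by
  have h1 := e.1.2; have h2 := e.2.2
  simp only [cellAdj, clampF, Prod.ext_iff, Fin.ext_iff, Fin.val_mk, and_true, true_and] at hadj ⊢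
  omega

lemma clampF_range (h3 : 3 ≤ h) (w3 : 3 ≤ w) (q : Fin h × Fin w) :
    0 < (clampF q).1.val ∧ (clampF q).1.val < h - 1 ∧
    0 < (clampF q).2.val ∧ (clampF q).2.val < w - 1 := by
  have h1 := q.1.2; have h2 := q.2.2
  simp only [clampF, Fin.val_mk]
  omega

end Aux3Full

theorem stmt3 (h w : ℕ) (hh : 0 < h) (hw : 0 < w) :
    ∃ W : Fin h × Fin w → Bool,
      degLEW W 3 ∧
      (∀ p : Fin h × Fin w,
        p.1.val = 0 ∨ p.1.val = h - 1 ∨ p.2.val = 0 ∨ p.2.val = w - 1 →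
        W p = true) ∧
      (∀ W' : Fin h × Fin w → Bool, degLEW W' 3 → filledCount W' ≤ filledCount W) := by
  by_cases hsmall : h ≤ 2 ∨ w ≤ 2
  · refine ⟨fun _ => true, ?_, fun _ _ => rfl, ?_⟩
    · intro p _
      refine Aux3Full.deg_le_three (Aux3Full.selfT ?_)
        (fun hc => Aux3Full.not_selfAdj hc.1)
      have := p.1.2; have := p.2.2
      rcases hsmall with hs | hs <;> omega
    · intro W' _
      unfold filledCount
      have he : (Finset.univ.filter fun p : Fin h × Fin w => (fun _ => true) p = true)
          = Finset.univ := by simp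
      rw [he]
      exact Finset.card_filter_le _ _
  · push_neg at hsmall
    have h3 : 3 ≤ h := by omega
    have w3 : 3 ≤ w := by omega
    haveI : DecidablePred (fun W : Fin h × Fin w → Bool => degLEW W 3) :=
      fun _ => Classical.propDecidable _
    obtain ⟨W0, hW0S, hW0max⟩ :=
      (Finset.univ.filter (fun W : Fin h × Fin w → Bool => degLEW W 3)).exists_max_image
        filledCount ⟨fun _ => false, by
          refine Finset.mem_filter.2 ⟨Finset.mem_univ _, ?_⟩
          intro p hp; exact absurd hp (by simp)⟩
    have hW0 : degLEW W0 3 := (Finset.mem_filter.1 hW0S).2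
    set W : Fin h × Fin w → Bool :=
      fun p => decide (∀ q, W0 q = false → Aux3Full.clampF q ≠ p) with hWdef
    have hWfalse : ∀ p, W p = false ↔ ∃ q, W0 q = false ∧ Aux3Full.clampF q = p := by
      intro p
      rw [hWdef]
      simp only [decide_eq_false_iff_not, not_forall, exists_prop, not_not]
    have hbdry : ∀ p : Fin h × Fin w,
        p.1.val = 0 ∨ p.1.val = h - 1 ∨ p.2.val = 0 ∨ p.2.val = w - 1 → W p = true := by
      intro p hb
      cases hWp : W p with
      | false =>
        exfalso
        obtain ⟨q, hq, heq⟩ := (hWfalse p).1 hWp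
        have hr := Aux3Full.clampF_range h3 w3 q
        rw [heq] at hr
        omega
      | true => rfl
    have hdeg : degLEW W 3 := by
      intro p hWp
      by_cases hint : 0 < p.1.val ∧ p.1.val < h - 1 ∧ 0 < p.2.val ∧ p.2.val < w - 1
      · have hempty : ∃ q, (q = p ∨ cellAdj p q) ∧ W0 q = false := by
          by_contra hc
          push_neg at hc
          have hallT : ∀ q, (q = p ∨ cellAdj p q) → W0 q = true := by
            intro q hq
            cases hb : W0 q with
            | false => exact absurd hb (hc q hq)
            | true => rfl
          have h4 := Aux3Full.deg_ge_four hint (fun q hq => hallT q (Or.inr hq))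
          have hle := hW0 p (hallT p (Or.inl rfl))
          omega
        obtain ⟨q, hq, hq0⟩ := hempty
        have hWq : W (Aux3Full.clampF q) = false := (hWfalse _).2 ⟨q, hq0, rfl⟩
        have hcl : Aux3Full.clampF q = q ∨ Aux3Full.clampF q = p := by
          rcases hq with rfl | hadj
          · exact Or.inr (Aux3Full.clampF_interior hint)
          · exact Aux3Full.clampF_adj hint hadj
        rcases hcl with hcq | hcp
        · rw [hcq] at hWq
          rcases hq with rfl | hadj
          · rw [hWp] at hWq; exact absurd hWq (by simp)
          · exact Aux3Full.deg_le_three (Aux3Full.adjSubset hadj)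
              (fun hc => absurd hWq (by rw [hc.2]; simp))
        · rw [hcp, hWp] at hWq; exact absurd hWq (by simp)
      · refine Aux3Full.deg_le_three (Aux3Full.selfT ?_)
          (fun hc => Aux3Full.not_selfAdj hc.1)
        have := p.1.2; have := p.2.2
        omega
    have key : ∀ X : Fin h × Fin w → Bool,
        filledCount X + (Finset.univ.filter (fun p => X p = false)).card
          = Fintype.card (Fin h × Fin w) := by
      intro X
      have hsplit := Finset.card_filter_add_card_filter_not
        (s := (Finset.univ : Finset (Fin h × Fin w))) (p := fun p => X p = true)
      have hcongr : (Finset.univ.filter fun p : Fin h × Fin w => ¬ X p = true)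
          = Finset.univ.filter (fun p => X p = false) := by
        apply Finset.filter_congr
        intro x _
        simp
      rw [hcongr] at hsplit
      simpa [filledCount, Finset.card_univ] using hsplit
    have himg : (Finset.univ.filter fun p : Fin h × Fin w => W p = false) ⊆
        (Finset.univ.filter fun p : Fin h × Fin w => W0 p = false).image Aux3Full.clampF := by
      intro p hp
      simp only [Finset.mem_filter, Finset.mem_univ, true_and] at hp
      obtain ⟨q, hq, heq⟩ := (hWfalse p).1 hp
      exact Finset.mem_image.2 ⟨q, Finset.mem_filter.2 ⟨Finset.mem_univ _, hq⟩, heq⟩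
    have hcard := (Finset.card_le_card himg).trans Finset.card_image_le
    refine ⟨W, hdeg, hbdry, ?_⟩
    intro W' hW'
    have hm := hW0max W' (Finset.mem_filter.2 ⟨Finset.mem_univ _, hW'⟩)
    have k1 := key W
    have k2 := key W0
    omega
end

section
/- Let h, w ≥ 3 be integers. The maximum number of filled cells in a 2-dimensional binary word W : Fin h × Fin w → Bool in which every filled cell has at most 3 filled orthogonal neighbors equals h·w − γ(G_{h−2,w−2}), where γ(G_{h−2,w−2}) is the domination number of the (h−2) × (w−2) grid graph. -/
/-- domination number of the m × n grid graph -/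
noncomputable def gridGamma (m n : ℕ) : ℕ :=
  sInf {k : ℕ | ∃ U : Finset (Fin m × Fin n),
    (∀ v, v ∉ U → ∃ u ∈ U, cellAdj u v) ∧ U.card = k}

namespace Stmt4Aux

variable {h w : ℕ}

/-- code of a neighbor: (same row?, plus direction?) -/
def code (p q : Fin h × Fin w) : Bool × Bool :=
  (decide (q.1 = p.1),
   if q.1 = p.1 then decide (p.2.val + 1 = q.2.val) else decide (p.1.val + 1 = q.1.val))

lemma cellAdj_cases {p q : Fin h × Fin w} (hq : cellAdj p q) :
    (q.1 = p.1 ∧ (p.2.val + 1 = q.2.val ∨ q.2.val + 1 = p.2.val)) ∨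
    (q.1 ≠ p.1 ∧ q.2 = p.2 ∧ (p.1.val + 1 = q.1.val ∨ q.1.val + 1 = p.1.val)) := by
  rcases hq with ⟨h1, h2⟩ | ⟨h1, h2⟩
  · exact Or.inl ⟨h1.symm, h2⟩
  · refine Or.inr ⟨?_, h1.symm, h2⟩
    intro he
    have : q.1.val = p.1.val := by rw [he]
    omega

lemma code_injOn {p q q' : Fin h × Fin w} (hq : cellAdj p q) (hq' : cellAdj p q')
    (he : code p q = code p q') : q = q' := by
  have he1 : (q.1 = p.1) ↔ (q'.1 = p.1) := by
    have := congrArg Prod.fst he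
    simpa [code, decide_eq_decide] using this
  have he2 := congrArg Prod.snd he
  rcases cellAdj_cases hq with ⟨h1, h2⟩ | ⟨h1, h2, h3⟩ <;>
    rcases cellAdj_cases hq' with ⟨g1, g2⟩ | ⟨g1, g2, g3⟩
  · simp only [code, h1, g1, if_pos, decide_eq_decide] at he2
    have : q.2.val = q'.2.val := by omega
    exact Prod.ext (h1.trans g1.symm) (Fin.ext this)
  · exact absurd (he1.mp h1) g1
  · exact absurd (he1.mpr g1) h1
  · simp only [code, if_neg h1, if_neg g1, decide_eq_decide] at he2
    have : q.1.val = q'.1.val := by omega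
    exact Prod.ext (Fin.ext this) (h2.trans g2.symm)

lemma degW_le_three {W : Fin h × Fin w → Bool} {p : Fin h × Fin w} (c : Bool × Bool)
    (hc : ∀ q, cellAdj p q → W q = true → code p q ≠ c) : degW W p ≤ 3 := by
  have hcard : (Finset.univ.filter (fun q => cellAdj p q ∧ W q = true)).card ≤
      ((Finset.univ : Finset (Bool × Bool)).erase c).card := by
    apply Finset.card_le_card_of_injOn (code p)
    · intro q hq
      simp only [Finset.mem_coe, Finset.mem_filter, Finset.mem_univ, true_and] at hq
      exact Finset.mem_erase.mpr ⟨hc q hq.1 hq.2, Finset.mem_univ _⟩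
    · intro q hq q' hq' he
      simp only [Finset.coe_filter, Set.mem_setOf_eq] at hq hq'
      exact code_injOn hq.2.1 hq'.2.1 he
  have : ((Finset.univ : Finset (Bool × Bool)).erase c).card = 3 := by
    rw [Finset.card_erase_of_mem (Finset.mem_univ c)]
    simp
  rw [degW]
  omega

lemma degW_le_three_of_empty {W : Fin h × Fin w → Bool} {p q0 : Fin h × Fin w}
    (h0 : cellAdj p q0) (hW : W q0 = false) : degW W p ≤ 3 := by
  apply degW_le_three (code p q0)
  intro q hq hWq hc
  have := code_injOn hq h0 hc
  rw [this, hW] at hWq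
  exact absurd hWq (by simp)

lemma degW_le_three_boundary {W : Fin h × Fin w → Bool} {p : Fin h × Fin w}
    (hp : p.1.val = 0 ∨ p.1.val = h - 1 ∨ p.2.val = 0 ∨ p.2.val = w - 1) : degW W p ≤ 3 := by
  have hh : p.1.val < h := p.1.isLt
  rcases hp with hp | hp | hp | hp
  · apply degW_le_three (false, false)
    intro q hq _ hc
    rcases cellAdj_cases hq with ⟨h1, _⟩ | ⟨h1, _, h3⟩
    · simp [code, h1] at hc
    · simp only [code, if_neg h1, Prod.mk.injEq, decide_eq_false_iff_not] at hc
      have := q.1.isLt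
      omega
  · apply degW_le_three (false, true)
    intro q hq _ hc
    rcases cellAdj_cases hq with ⟨h1, _⟩ | ⟨h1, _, h3⟩
    · simp [code, h1] at hc
    · simp only [code, if_neg h1, Prod.mk.injEq, decide_eq_true_eq] at hc
      have := q.1.isLt
      omega
  · apply degW_le_three (true, false)
    intro q hq _ hc
    rcases cellAdj_cases hq with ⟨h1, h2⟩ | ⟨h1, _, _⟩
    · simp only [code, if_pos h1, Prod.mk.injEq, decide_eq_false_iff_not] at hc
      omega
    · simp [code, h1] at hc
  · apply degW_le_three (true, true)
    intro q hq _ hc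
    rcases cellAdj_cases hq with ⟨h1, h2⟩ | ⟨h1, _, _⟩
    · simp only [code, if_pos h1, Prod.mk.injEq, decide_eq_true_eq] at hc
      have := q.2.isLt
      omega
    · simp [code, h1] at hc



/-- embed interior coordinate -/
def emb {n : ℕ} (hn : 3 ≤ n) (v : Fin (n - 2)) : Fin n :=
  ⟨v.val + 1, by have := v.isLt; omega⟩

/-- clamp a full coordinate to the interior -/
def cl {n : ℕ} (hn : 3 ≤ n) (i : Fin n) : Fin (n - 2) :=
  ⟨min (max i.val 1) (n - 2) - 1, by have := i.isLt; omega⟩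

lemma cl_em {n : ℕ} (hn : 3 ≤ n) (v : Fin (n - 2)) : cl hn (emb hn v) = v := by
  have := v.isLt
  apply Fin.ext
  simp only [cl, emb]
  omega

lemma cl_adj {n : ℕ} (hn : 3 ≤ n) (v : Fin (n - 2)) (i : Fin n)
    (hi : i.val = v.val ∨ i.val = v.val + 2) :
    (cl hn i).val = v.val ∨ (cl hn i).val + 1 = v.val ∨ v.val + 1 = (cl hn i).val := by
  have := v.isLt
  have := i.isLt
  simp only [cl]
  omega

variable {h w : ℕ}

def iot (hh : 3 ≤ h) (hw : 3 ≤ w) (v : Fin (h - 2) × Fin (w - 2)) : Fin h × Fin w :=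
  (emb hh v.1, emb hw v.2)

def pim (hh : 3 ≤ h) (hw : 3 ≤ w) (p : Fin h × Fin w) : Fin (h - 2) × Fin (w - 2) :=
  (cl hh p.1, cl hw p.2)

lemma pim_iot (hh : 3 ≤ h) (hw : 3 ≤ w) (v : Fin (h - 2) × Fin (w - 2)) :
    pim hh hw (iot hh hw v) = v := by
  simp [pim, iot, cl_em]

lemma iot_injective (hh : 3 ≤ h) (hw : 3 ≤ w) : Function.Injective (iot hh hw) := by
  intro a b he
  have := congrArg (pim hh hw) he
  rwa [pim_iot, pim_iot] at this

lemma iot_adj (hh : 3 ≤ h) (hw : 3 ≤ w) {u v : Fin (h - 2) × Fin (w - 2)}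
    (huv : cellAdj u v) : cellAdj (iot hh hw u) (iot hh hw v) := by
  rcases huv with ⟨h1, h2⟩ | ⟨h1, h2⟩
  · left
    refine ⟨Fin.ext ?_, ?_⟩
    · simp [iot, emb, h1]
    · simp only [iot, emb]
      omega
  · right
    refine ⟨Fin.ext ?_, ?_⟩
    · simp [iot, emb, h1]
    · simp only [iot, emb]
      omega

/-- key: if q is adjacent (in the full grid) to the embedded interior vertex v,
then its clamp is v or adjacent to v in the interior grid. -/
lemma pim_dominates (hh : 3 ≤ h) (hw : 3 ≤ w) {v : Fin (h - 2) × Fin (w - 2)}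
    {q : Fin h × Fin w} (hq : cellAdj (iot hh hw v) q) :
    pim hh hw q = v ∨ cellAdj (pim hh hw q) v := by
  rcases cellAdj_cases hq with ⟨h1, h2⟩ | ⟨h1, h2, h3⟩
  · -- same row: q.1.val = v.1.val + 1, column is v.2.val or v.2.val + 2
    simp only [iot, emb] at h1 h2
    have hq1 : q.1.val = v.1.val + 1 := by
      have := congrArg Fin.val h1
      simpa using this
    have hr : cl hh q.1 = v.1 := by
      have hvlt := v.1.isLt
      apply Fin.ext
      simp only [cl]
      omega
    rcases cl_adj hw v.2 q.2 (by omega) with hc | hc | hc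
    · refine Or.inl (Prod.ext ?_ ?_)
      · simpa [pim] using hr
      · exact Fin.ext (by simpa [pim] using hc)
    · refine Or.inr (Or.inl ⟨by simpa [pim] using hr, Or.inl ?_⟩)
      simpa [pim] using hc
    · refine Or.inr (Or.inl ⟨by simpa [pim] using hr, Or.inr ?_⟩)
      simpa [pim] using hc
  · -- same column
    simp only [iot, emb] at h1 h2 h3
    have hq2 : q.2.val = v.2.val + 1 := by
      have := congrArg Fin.val h2
      simpa using this
    have hr : cl hw q.2 = v.2 := by
      have hvlt := v.2.isLt
      apply Fin.ext
      simp only [cl]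
      omega
    rcases cl_adj hh v.1 q.1 (by omega) with hc | hc | hc
    · refine Or.inl (Prod.ext ?_ ?_)
      · exact Fin.ext (by simpa [pim] using hc)
      · simpa [pim] using hr
    · refine Or.inr (Or.inr ⟨by simpa [pim] using hr, Or.inl ?_⟩)
      simpa [pim] using hc
    · refine Or.inr (Or.inr ⟨by simpa [pim] using hr, Or.inr ?_⟩)
      simpa [pim] using hc


lemma cellAdj_symm {p q : Fin h × Fin w} (hq : cellAdj p q) : cellAdj q p := by
  rcases hq with ⟨h1, h2⟩ | ⟨h1, h2⟩
  · exact Or.inl ⟨h1.symm, h2.symm⟩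
  · exact Or.inr ⟨h1.symm, h2.symm⟩

lemma exists_empty_neighbor (hh : 3 ≤ h) (hw : 3 ≤ w) {W : Fin h × Fin w → Bool}
    {v : Fin (h - 2) × Fin (w - 2)} (hdeg : degW W (iot hh hw v) ≤ 3) :
    ∃ q, cellAdj (iot hh hw v) q ∧ W q = false := by
  by_contra hall
  push_neg at hall
  have hall' : ∀ q, cellAdj (iot hh hw v) q → W q = true := by
    intro q hq
    have := hall q hq
    cases hWq : W q
    · exact absurd hWq this
    · rfl
  have hv1 := v.1.isLt
  have hv2 := v.2.isLt
  set p := iot hh hw v with hp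
  have hp1 : p.1.val = v.1.val + 1 := rfl
  have hp2 : p.2.val = v.2.val + 1 := rfl
  set a : Fin h × Fin w := (⟨v.1.val, by omega⟩, p.2) with hadef
  set b : Fin h × Fin w := (⟨v.1.val + 2, by omega⟩, p.2) with hbdef
  set c : Fin h × Fin w := (p.1, ⟨v.2.val, by omega⟩) with hcdef
  set d : Fin h × Fin w := (p.1, ⟨v.2.val + 2, by omega⟩) with hddef
  have ha : cellAdj p a := Or.inr ⟨rfl, Or.inr (by show v.1.val + 1 = p.1.val; omega)⟩
  have hb : cellAdj p b := Or.inr ⟨rfl, Or.inl (by show p.1.val + 1 = v.1.val + 2; omega)⟩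
  have hc : cellAdj p c := Or.inl ⟨rfl, Or.inr (by show v.2.val + 1 = p.2.val; omega)⟩
  have hd : cellAdj p d := Or.inl ⟨rfl, Or.inl (by show p.2.val + 1 = v.2.val + 2; omega)⟩
  have hab : a ≠ b := by
    intro he
    have h1 := congrArg (fun x : Fin h × Fin w => x.1.val) he
    simp only [hadef, hbdef] at h1
    omega
  have hac : a ≠ c := by
    intro he
    have h1 := congrArg (fun x : Fin h × Fin w => x.1.val) he
    simp only [hadef, hcdef, hp1] at h1
    omega
  have had : a ≠ d := by
    intro he
    have h1 := congrArg (fun x : Fin h × Fin w => x.1.val) he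
    simp only [hadef, hddef, hp1] at h1
    omega
  have hbc : b ≠ c := by
    intro he
    have h1 := congrArg (fun x : Fin h × Fin w => x.1.val) he
    simp only [hbdef, hcdef, hp1] at h1
    omega
  have hbd : b ≠ d := by
    intro he
    have h1 := congrArg (fun x : Fin h × Fin w => x.1.val) he
    simp only [hbdef, hddef, hp1] at h1
    omega
  have hcd : c ≠ d := by
    intro he
    have h2 := congrArg (fun x : Fin h × Fin w => x.2.val) he
    simp only [hcdef, hddef] at h2
    omega
  have hsub : ({a, b, c, d} : Finset (Fin h × Fin w)) ⊆
      Finset.univ.filter (fun q => cellAdj p q ∧ W q = true) := by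
    intro x hx
    simp only [Finset.mem_insert, Finset.mem_singleton] at hx
    rcases hx with rfl | rfl | rfl | rfl <;>
      exact Finset.mem_filter.mpr ⟨Finset.mem_univ _, by assumption, hall' _ (by assumption)⟩
  have hcard4 : ({a, b, c, d} : Finset (Fin h × Fin w)).card = 4 := by
    rw [Finset.card_insert_of_notMem (by simp [hab, hac, had]),
        Finset.card_insert_of_notMem (by simp [hbc, hbd]),
        Finset.card_insert_of_notMem (by simp [hcd]), Finset.card_singleton]
  have := Finset.card_le_card hsub
  rw [hcard4] at this
  rw [degW] at hdeg
  omega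

end Stmt4Aux

open Stmt4Aux

theorem stmt4 (h w : ℕ) (hh : 3 ≤ h) (hw : 3 ≤ w) :
    IsGreatest {n : ℕ | ∃ W : Fin h × Fin w → Bool, degLEW W 3 ∧ filledCount W = n}
      (h * w - gridGamma (h - 2) (w - 2)) := by
  classical
  have hne : {k : ℕ | ∃ U : Finset (Fin (h - 2) × Fin (w - 2)),
      (∀ v, v ∉ U → ∃ u ∈ U, cellAdj u v) ∧ U.card = k}.Nonempty :=
    ⟨(Finset.univ : Finset (Fin (h - 2) × Fin (w - 2))).card, Finset.univ,
      fun v hv => absurd (Finset.mem_univ v) hv, rfl⟩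
  have hcu : (Finset.univ : Finset (Fin h × Fin w)).card = h * w := by
    simp [Finset.card_univ]
  constructor
  · -- membership: fill everything except an embedded minimum dominating set
    obtain ⟨U, hU, hUcard⟩ := Nat.sInf_mem hne
    refine ⟨fun p => !(decide (p ∈ U.image (iot hh hw))), ?_, ?_⟩
    · intro p hp
      simp only [Bool.not_eq_true', decide_eq_false_iff_not] at hp
      by_cases hb : p.1.val = 0 ∨ p.1.val = h - 1 ∨ p.2.val = 0 ∨ p.2.val = w - 1
      · exact degW_le_three_boundary hb
      · push_neg at hb
        obtain ⟨b1, b2, b3, b4⟩ := hb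
        have hp1 := p.1.isLt
        have hp2 := p.2.isLt
        set v : Fin (h - 2) × Fin (w - 2) :=
          (⟨p.1.val - 1, by omega⟩, ⟨p.2.val - 1, by omega⟩) with hvdef
        have hiv : iot hh hw v = p := by
          refine Prod.ext (Fin.ext ?_) (Fin.ext ?_) <;> simp only [iot, emb, hvdef] <;> omega
        have hvU : v ∉ U := by
          intro hvU
          exact hp (hiv ▸ Finset.mem_image_of_mem _ hvU)
        obtain ⟨u, huU, hadj⟩ := hU v hvU
        have hadj' : cellAdj p (iot hh hw u) :=
          hiv ▸ cellAdj_symm (iot_adj hh hw hadj)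
        refine degW_le_three_of_empty hadj' ?_
        simp [Finset.mem_image_of_mem _ huU]
    · have hfe : Finset.univ.filter
          (fun p => (!(decide (p ∈ U.image (iot hh hw)))) = true) =
          Finset.univ \ U.image (iot hh hw) := by
        ext p
        simp
      rw [filledCount, hfe, Finset.card_sdiff_of_subset (Finset.subset_univ _),
        Finset.card_image_of_injective _ (iot_injective hh hw), hUcard, hcu]
      rfl
  · -- upper bound
    rintro x ⟨W, hdeg, rfl⟩
    set E := Finset.univ.filter (fun p => ¬(W p = true)) with hEdef
    have hsum : filledCount W + E.card = h * w := by
      rw [filledCount, hEdef, Finset.card_filter_add_card_filter_not, hcu]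
    have hdomset : (∀ v, v ∉ E.image (pim hh hw) → ∃ u ∈ E.image (pim hh hw), cellAdj u v) := by
      intro v hv
      have hWiv : W (iot hh hw v) = true := by
        by_contra hWv
        refine hv (Finset.mem_image.mpr ⟨iot hh hw v, ?_, pim_iot hh hw v⟩)
        simp only [hEdef, Finset.mem_filter, Finset.mem_univ, true_and]
        exact hWv
      obtain ⟨q, hq, hWq⟩ := exists_empty_neighbor hh hw (hdeg _ hWiv)
      have hqE : q ∈ E := by
        simp only [hEdef, Finset.mem_filter, Finset.mem_univ, true_and, hWq]
        simp
      rcases pim_dominates hh hw hq with he | hadj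
      · exact absurd (Finset.mem_image.mpr ⟨q, hqE, he⟩) hv
      · exact ⟨pim hh hw q, Finset.mem_image_of_mem _ hqE, hadj⟩
    have hγ : gridGamma (h - 2) (w - 2) ≤ (E.image (pim hh hw)).card :=
      Nat.sInf_le ⟨E.image (pim hh hw), hdomset, rfl⟩
    have := Finset.card_image_le (s := E) (f := pim hh hw)
    omega
end

section
/- Let h ≥ 3 be an integer and let W : Fin h × Fin 2 → Bool be such that every filled cell has at most 2 filled orthogonal neighbors. Then the number of filled cells of W is at most ⌈3·(2h)/4⌉ (i.e., (3·2h+2)/4 if h is odd and 3·2h/4 if h is even), and this bound is attained. -/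
set_option maxRecDepth 100000

/-! ### Auxiliary machinery -/

def restrW (h r a : ℕ) (har : a + r ≤ h) (W : Fin h × Fin 2 → Bool) :
    Fin r × Fin 2 → Bool :=
  fun p => W (⟨a + p.1.val, by omega⟩, p.2)

lemma restr_deg {h r a : ℕ} (har : a + r ≤ h) (W : Fin h × Fin 2 → Bool)
    (hW : degLEW W 2) : degLEW (restrW h r a har W) 2 := by
  intro p hp
  have key : degW (restrW h r a har W) p
      ≤ degW W (⟨a + p.1.val, by omega⟩, p.2) := by
    unfold degW
    apply Finset.card_le_card_of_injOn
      (fun q => ((⟨a + q.1.val, by omega⟩ : Fin h), q.2))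
    · intro q hq
      simp only [Finset.mem_coe, Finset.mem_filter, Finset.mem_univ, true_and] at hq ⊢
      refine ⟨?_, hq.2⟩
      have hadj := hq.1
      simp only [cellAdj, Fin.ext_iff] at hadj ⊢
      omega
    · intro x _ y _ hxy
      simp only [Prod.mk.injEq, Fin.mk.injEq] at hxy
      exact Prod.ext (Fin.ext (by omega)) hxy.2
  exact key.trans (hW _ hp)

lemma sum_split_s6 {h : ℕ} (r : ℕ) (hr : r ≤ h) (f : Fin h → ℕ) :
    ∑ i : Fin h, f i = ∑ i : Fin r, f ⟨0 + i.val, by omega⟩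
      + ∑ i : Fin (h - r), f ⟨r + i.val, by omega⟩ := by
  have hh : r + (h - r) = h := by omega
  rw [← Equiv.sum_comp (finCongr hh) f, Fin.sum_univ_add]
  congr 1 <;>
    refine Finset.sum_congr rfl fun i _ => ?_ <;> congr 1 <;> apply Fin.ext <;> simp

lemma split_count {h : ℕ} (r : ℕ) (hr : r ≤ h) (W : Fin h × Fin 2 → Bool)
    (pf1 : 0 + r ≤ h) (pf2 : r + (h - r) ≤ h) :
    filledCount W = filledCount (restrW h r 0 pf1 W)
      + filledCount (restrW h (h - r) r pf2 W) := by
  unfold filledCount restrW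
  rw [Finset.card_filter, Finset.card_filter, Finset.card_filter,
    Fintype.sum_prod_type, Fintype.sum_prod_type, Fintype.sum_prod_type]
  exact sum_split_s6 r hr (fun i => ∑ j : Fin 2, if W (i, j) = true then 1 else 0)

lemma count_le {m : ℕ} (V : Fin m × Fin 2 → Bool) : filledCount V ≤ 2 * m := by
  unfold filledCount
  calc (Finset.univ.filter (fun p => V p = true)).card
      ≤ (Finset.univ : Finset (Fin m × Fin 2)).card := Finset.card_filter_le _ _
    _ = 2 * m := by simp [Finset.card_univ]; ring

/-! ### Finite checks -/

lemma b3 : ∀ W : Fin 3 × Fin 2 → Bool, degLEW W 2 → filledCount W ≤ 5 := by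
  unfold degLEW; decide

set_option maxHeartbeats 1000000 in
lemma b4 : ∀ W : Fin 4 × Fin 2 → Bool, degLEW W 2 → filledCount W ≤ 6 := by
  unfold degLEW; decide

lemma cases2 : ∀ V : Fin 2 × Fin 2 → Bool,
    (V (0,0) = true ∧ V (0,1) = true ∧ V (1,0) = true ∧ V (1,1) = true)
    ∨ filledCount V ≤ 3 := by decide

lemma cap3 : ∀ V : Fin 3 × Fin 2 → Bool,
    V (2,0) = false → V (2,1) = false → filledCount V ≤ 4 := by decide

/-! ### Forcing an empty row after two full rows -/

lemma two_lt_degW {h w : ℕ} (W : Fin h × Fin w → Bool) (p a b c : Fin h × Fin w)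
    (hab : a ≠ b) (hac : a ≠ c) (hbc : b ≠ c)
    (ha : cellAdj p a ∧ W a = true) (hb : cellAdj p b ∧ W b = true)
    (hc : cellAdj p c ∧ W c = true) : 2 < degW W p := by
  unfold degW
  refine Finset.two_lt_card.mpr ⟨a, ?_, b, ?_, c, ?_, hab, hac, hbc⟩ <;>
    simp only [Finset.mem_filter, Finset.mem_univ, true_and] <;> assumption

lemma row2 {h : ℕ} (hh : 3 ≤ h) (W : Fin h × Fin 2 → Bool) (hW : degLEW W 2)
    (f00 : W (⟨0, by omega⟩, 0) = true) (f01 : W (⟨0, by omega⟩, 1) = true)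
    (f10 : W (⟨1, by omega⟩, 0) = true) (f11 : W (⟨1, by omega⟩, 1) = true) :
    W (⟨2, by omega⟩, 0) = false ∧ W (⟨2, by omega⟩, 1) = false := by
  constructor
  · by_contra hcon
    rw [Bool.not_eq_false] at hcon
    have h3 := two_lt_degW W (⟨1, by omega⟩, 0) (⟨1, by omega⟩, 1)
      (⟨0, by omega⟩, 0) (⟨2, by omega⟩, 0)
      (by simp [Prod.ext_iff, Fin.ext_iff]) (by simp [Prod.ext_iff, Fin.ext_iff])
      (by simp [Prod.ext_iff, Fin.ext_iff])
      ⟨Or.inl ⟨rfl, Or.inl rfl⟩, f11⟩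
      ⟨Or.inr ⟨rfl, Or.inr rfl⟩, f00⟩
      ⟨Or.inr ⟨rfl, Or.inl rfl⟩, hcon⟩
    exact absurd (hW _ f10) (by omega)
  · by_contra hcon
    rw [Bool.not_eq_false] at hcon
    have h3 := two_lt_degW W (⟨1, by omega⟩, 1) (⟨1, by omega⟩, 0)
      (⟨0, by omega⟩, 1) (⟨2, by omega⟩, 1)
      (by simp [Prod.ext_iff, Fin.ext_iff]) (by simp [Prod.ext_iff, Fin.ext_iff])
      (by simp [Prod.ext_iff, Fin.ext_iff])
      ⟨Or.inl ⟨rfl, Or.inr rfl⟩, f10⟩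
      ⟨Or.inr ⟨rfl, Or.inr rfl⟩, f01⟩
      ⟨Or.inr ⟨rfl, Or.inl rfl⟩, hcon⟩
    exact absurd (hW _ f11) (by omega)

/-! ### The upper bound -/

lemma bound : ∀ h : ℕ, 3 ≤ h → ∀ W : Fin h × Fin 2 → Bool, degLEW W 2 →
    filledCount W ≤ (3 * h + 1) / 2 := by
  intro h
  induction h using Nat.strong_induction_on with
  | _ h IH =>
    intro hh W hW
    by_cases e3 : h = 3
    · subst e3; simpa using b3 W hW
    by_cases e4 : h = 4
    · subst e4; simpa using b4 W hW
    have h5 : 5 ≤ h := by omega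
    rcases cases2 (restrW h 2 0 (by omega) W) with ⟨f00, f01, f10, f11⟩ | hle3
    · obtain ⟨e20, e21⟩ := row2 (by omega) W hW f00 f01 f10 f11
      rw [split_count 3 (by omega) W (by omega) (by omega)]
      have hA : filledCount (restrW h 3 0 (by omega) W) ≤ 4 :=
        cap3 _ e20 e21
      have hB : filledCount (restrW h (h - 3) 3 (by omega) W) ≤
          if 3 ≤ h - 3 then (3 * (h - 3) + 1) / 2 else 2 * (h - 3) := by
        split_ifs with h6
        · exact IH (h - 3) (by omega) h6 _ (restr_deg _ W hW)
        · exact count_le _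
      split_ifs at hB <;> omega
    · rw [split_count 2 (by omega) W (by omega) (by omega)]
      have hB := IH (h - 2) (by omega) (by omega) _
        (restr_deg (show 2 + (h - 2) ≤ h by omega) W hW)
      omega

/-! ### The extremal configuration -/

def patt (h : ℕ) : Fin h × Fin 2 → Bool :=
  fun p => !decide ((p.1.val % 4 = 1 ∧ p.2.val = 1) ∨ (p.1.val % 4 = 3 ∧ p.2.val = 0))

lemma patt_spec {h : ℕ} (p : Fin h × Fin 2) :
    patt h p = true ↔ ¬((p.1.val % 4 = 1 ∧ p.2.val = 1) ∨ (p.1.val % 4 = 3 ∧ p.2.val = 0)) := by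
  simp [patt]; tauto

set_option maxHeartbeats 2000000 in
lemma patt_arith (n ar ac br bc cr cc pc : ℕ)
    (h1 : pc ≤ 1) (h2 : ac ≤ 1) (h3 : bc ≤ 1) (h4 : cc ≤ 1)
    (hp : ¬((n % 4 = 1 ∧ pc = 1) ∨ (n % 4 = 3 ∧ pc = 0)))
    (hpa : ¬((ar % 4 = 1 ∧ ac = 1) ∨ (ar % 4 = 3 ∧ ac = 0)))
    (hpb : ¬((br % 4 = 1 ∧ bc = 1) ∨ (br % 4 = 3 ∧ bc = 0)))
    (hpc2 : ¬((cr % 4 = 1 ∧ cc = 1) ∨ (cr % 4 = 3 ∧ cc = 0)))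
    (hA : (ar = n ∧ ac = 1 - pc) ∨ (ac = pc ∧ ar = n + 1) ∨ (ac = pc ∧ ar + 1 = n))
    (hB : (br = n ∧ bc = 1 - pc) ∨ (bc = pc ∧ br = n + 1) ∨ (bc = pc ∧ br + 1 = n))
    (hC : (cr = n ∧ cc = 1 - pc) ∨ (cc = pc ∧ cr = n + 1) ∨ (cc = pc ∧ cr + 1 = n))
    (hab : ¬(ar = br ∧ ac = bc)) (hac : ¬(ar = cr ∧ ac = cc)) (hbc : ¬(br = cr ∧ bc = cc)) :
    False := by
  push_neg at hp hpa hpb hpc2 hab hac hbc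
  rcases hA with ⟨e1, e2⟩ | ⟨e1, e2⟩ | ⟨e1, e2⟩ <;>
  rcases hB with ⟨f1, f2⟩ | ⟨f1, f2⟩ | ⟨f1, f2⟩ <;>
  rcases hC with ⟨g1, g2⟩ | ⟨g1, g2⟩ | ⟨g1, g2⟩ <;>
  subst_vars <;> omega

lemma adj_cases {h : ℕ} (p q : Fin h × Fin 2) (hadj : cellAdj p q) :
    (q.1.val = p.1.val ∧ q.2.val = 1 - p.2.val) ∨
    (q.2.val = p.2.val ∧ q.1.val = p.1.val + 1) ∨
    (q.2.val = p.2.val ∧ q.1.val + 1 = p.1.val) := by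
  have := p.2.isLt; have := q.2.isLt
  simp only [cellAdj, Fin.ext_iff] at hadj; omega

lemma patt_deg (h : ℕ) : degLEW (patt h) 2 := by
  intro p hp
  by_contra hgt
  push_neg at hgt
  unfold degW at hgt
  obtain ⟨a, ha, b, hb, c, hc, hab, hac, hbc⟩ := Finset.two_lt_card.mp hgt
  simp only [Finset.mem_filter, Finset.mem_univ, true_and] at ha hb hc
  rw [patt_spec] at hp
  obtain ⟨hadja, hpa⟩ := ha
  obtain ⟨hadjb, hpb⟩ := hb
  obtain ⟨hadjc, hpc⟩ := hc
  rw [patt_spec] at hpa hpb hpc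
  exact patt_arith p.1.val a.1.val a.2.val b.1.val b.2.val c.1.val c.2.val p.2.val
    (by omega) (by omega) (by omega) (by omega)
    hp hpa hpb hpc
    (adj_cases p a hadja) (adj_cases p b hadjb) (adj_cases p c hadjc)
    (fun hx => hab (Prod.ext (Fin.ext hx.1) (Fin.ext hx.2)))
    (fun hx => hac (Prod.ext (Fin.ext hx.1) (Fin.ext hx.2)))
    (fun hx => hbc (Prod.ext (Fin.ext hx.1) (Fin.ext hx.2)))

lemma sum_parity : ∀ m : ℕ, (∑ i : Fin m, (2 - i.val % 2)) = 2 * m - m / 2 := by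
  intro m
  induction m with
  | zero => simp
  | succ n ih =>
    rw [Fin.sum_univ_castSucc]
    simp only [Fin.coe_castSucc, ih, Fin.val_last]
    omega

lemma patt_count (h : ℕ) : filledCount (patt h) = 2 * h - h / 2 := by
  unfold filledCount
  rw [Finset.card_filter, Fintype.sum_prod_type]
  have hrow : ∀ i : Fin h,
      (∑ j : Fin 2, if patt h (i, j) = true then 1 else 0) = 2 - i.val % 2 := by
    intro i
    have key : ∀ j : Fin 2, (if patt h (i, j) = true then 1 else 0)
        = (if (i.val % 4 = 1 ∧ j.val = 1) ∨ (i.val % 4 = 3 ∧ j.val = 0) then 0 else 1) := by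
      intro j
      by_cases hb : (i.val % 4 = 1 ∧ j.val = 1) ∨ (i.val % 4 = 3 ∧ j.val = 0)
      · rw [if_pos hb, if_neg]; rw [patt_spec]; tauto
      · rw [if_neg hb, if_pos]; rw [patt_spec (p := (i, j))]; exact hb
    rw [Fin.sum_univ_two, key 0, key 1]
    norm_num
    split_ifs <;> omega
  rw [Finset.sum_congr rfl (fun i _ => hrow i)]
  exact sum_parity h

/-! ### Main theorem -/

theorem stmt6 (h : ℕ) (hh : 3 ≤ h) :
    (∀ W : Fin h × Fin 2 → Bool, degLEW W 2 →
      filledCount W ≤ (if h % 2 = 0 then 3 * (2 * h) / 4 else (3 * (2 * h) + 2) / 4)) ∧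
    (∃ W : Fin h × Fin 2 → Bool, degLEW W 2 ∧
      filledCount W = (if h % 2 = 0 then 3 * (2 * h) / 4 else (3 * (2 * h) + 2) / 4)) := by
  constructor
  · intro W hW
    have hb := bound h hh W hW
    split_ifs with hpar <;> omega
  · refine ⟨patt h, patt_deg h, ?_⟩
    have hc := patt_count h
    split_ifs with hpar <;> omega
end

section
/- Let h ≥ 3 be an integer and let W : Fin h × Fin 3 → Bool be such that every filled cell has at most 2 filled orthogonal neighbors. Then the number of filled cells of W is at most 2h + 2, and this bound is attained by some such W. -/
set_option linter.unreachableTactic false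
set_option linter.unusedTactic false

abbrev Pat := Bool × Bool × Bool

def aP : Pat → ℕ := fun p => p.1.toNat + p.2.1.toNat + p.2.2.toNat

abbrev VP (p q r : Pat) : Prop :=
  (q.1 = true → p.1.toNat + r.1.toNat + q.2.1.toNat ≤ 2) ∧
  (q.2.1 = true → p.2.1.toNat + r.2.1.toNat + q.1.toNat + q.2.2.toNat ≤ 2) ∧
  (q.2.2 = true → p.2.2.toNat + r.2.2.toNat + q.2.1.toNat ≤ 2)

def idxP : Pat → ℕ := fun p => p.1.toNat + 2 * p.2.1.toNat + 4 * p.2.2.toNat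

def cTbl : List ℕ := [18, 19, 19, 20, 19, 20, 20, 21, 18, 19, 19, 20, 19, 20, 20, 21, 18, 19, 19, 20, 19, 20, 20, 21, 19, 20, 20, 20, 20, 21, 21, 21, 18, 19, 19, 20, 19, 20, 20, 21, 19, 20, 20, 21, 20, 21, 21, 22, 19, 20, 20, 21, 20, 21, 20, 21, 20, 20, 0, 0, 20, 21, 0, 0]

def cN (p q : Pat) : ℕ := cTbl.getD (idxP p * 8 + idxP q) 0

lemma Lbase : ∀ p q : Pat, VP (false,false,false) p q → aP p + aP q + 16 ≤ cN p q := by decide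
lemma Lstep : ∀ p q r : Pat, VP p q r → aP r + cN p q ≤ 2 + cN q r := by decide
lemma Lfinal : ∀ p q : Pat, VP p q (false,false,false) → cN p q ≤ 22 := by decide

lemma countP_le_degW {h w : ℕ} (W : Fin h × Fin w → Bool) (p : Fin h × Fin w)
    (l : List (Fin h × Fin w)) (hnd : l.Nodup) (hadj : ∀ q ∈ l, cellAdj p q) :
    l.countP (fun q => W q) ≤ degW W p := by
  have h1 : (l.filter (fun q => W q)).toFinset ⊆
      Finset.univ.filter (fun q => cellAdj p q ∧ W q = true) := by
    intro q hq
    simp only [List.mem_toFinset, List.mem_filter] at hq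
    simp only [Finset.mem_filter, Finset.mem_univ, true_and]
    exact ⟨hadj q hq.1, hq.2⟩
  have h2 := Finset.card_le_card h1
  rwa [List.toFinset_card_of_nodup (hnd.filter _), ← List.countP_eq_length_filter] at h2

lemma deg_le_two {h w : ℕ} (W : Fin h × Fin w → Bool) (hd : degLEW W 2)
    (p u v : Fin h × Fin w) (hp : W p = true)
    (hu : cellAdj p u) (hv : cellAdj p v) (duv : u ≠ v) :
    (W u).toNat + (W v).toNat ≤ 2 := by
  have hc := countP_le_degW W p [u, v] (by simp [duv])
    (by intro q hq; simp at hq; rcases hq with rfl | rfl; exacts [hu, hv])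
  have h2 := hd p hp
  have h3 := le_trans hc h2
  cases hWu : W u <;> cases hWv : W v <;>
    simp_all [List.countP_cons, List.countP_nil]

lemma deg_le_three {h w : ℕ} (W : Fin h × Fin w → Bool) (hd : degLEW W 2)
    (p u v x : Fin h × Fin w) (hp : W p = true)
    (hu : cellAdj p u) (hv : cellAdj p v) (hx : cellAdj p x)
    (duv : u ≠ v) (dux : u ≠ x) (dvx : v ≠ x) :
    (W u).toNat + (W v).toNat + (W x).toNat ≤ 2 := by
  have hc := countP_le_degW W p [u, v, x] (by simp [duv, dux, dvx])
    (by intro q hq; simp at hq; rcases hq with rfl | rfl | rfl; exacts [hu, hv, hx])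
  have h2 := hd p hp
  have h3 := le_trans hc h2
  cases hWu : W u <;> cases hWv : W v <;> cases hWx : W x <;>
    simp_all [List.countP_cons, List.countP_nil]

lemma deg_le_four {h w : ℕ} (W : Fin h × Fin w → Bool) (hd : degLEW W 2)
    (p u v x y : Fin h × Fin w) (hp : W p = true)
    (hu : cellAdj p u) (hv : cellAdj p v) (hx : cellAdj p x) (hy : cellAdj p y)
    (duv : u ≠ v) (dux : u ≠ x) (duy : u ≠ y) (dvx : v ≠ x) (dvy : v ≠ y) (dxy : x ≠ y) :
    (W u).toNat + (W v).toNat + (W x).toNat + (W y).toNat ≤ 2 := by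
  have hc := countP_le_degW W p [u, v, x, y] (by simp [duv, dux, duy, dvx, dvy, dxy])
    (by intro q hq; simp at hq; rcases hq with rfl | rfl | rfl | rfl; exacts [hu, hv, hx, hy])
  have h2 := hd p hp
  have h3 := le_trans hc h2
  cases hWu : W u <;> cases hWv : W v <;> cases hWx : W x <;> cases hWy : W y <;>
    simp_all [List.countP_cons, List.countP_nil]

def gW {h : ℕ} (W : Fin h × Fin 3 → Bool) (i j : ℕ) : Bool :=
  if hij : i < h ∧ j < 3 then W (⟨i, hij.1⟩, ⟨j, hij.2⟩) else false

def patW {h : ℕ} (W : Fin h × Fin 3 → Bool) (i : ℕ) : Pat :=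
  (gW W i 0, gW W i 1, gW W i 2)

lemma gW_eq {h : ℕ} (W : Fin h × Fin 3 → Bool) {i j : ℕ} (hi : i < h) (hj : j < 3) :
    gW W i j = W (⟨i, hi⟩, ⟨j, hj⟩) := dif_pos ⟨hi, hj⟩

lemma gW_oob {h : ℕ} (W : Fin h × Fin 3 → Bool) {i : ℕ} (hi : ¬ i < h) (j : ℕ) :
    gW W i j = false := dif_neg (by tauto)

lemma gW_true_lt {h : ℕ} {W : Fin h × Fin 3 → Bool} {i j : ℕ} (hg : gW W i j = true) :
    i < h := by
  by_contra hi
  rw [gW_oob W hi] at hg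
  exact Bool.false_ne_true hg

lemma VS {h : ℕ} (W : Fin h × Fin 3 → Bool) (hd : degLEW W 2) (i : ℕ) :
    VP (patW W i) (patW W (i + 1)) (patW W (i + 2)) := by
  refine ⟨?_, ?_, ?_⟩ <;> intro hq <;>
    simp only [patW] at hq ⊢
  · -- column 0
    have h1 : i + 1 < h := gW_true_lt hq
    have h0 : i < h := by omega
    rw [gW_eq W h1 (by norm_num)] at hq
    rw [gW_eq W h0 (by norm_num), gW_eq W h1 (show (1:ℕ) < 3 by norm_num)]
    by_cases h2 : i + 2 < h
    · rw [gW_eq W h2 (by norm_num)]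
      exact deg_le_three W hd (⟨i+1,h1⟩, ⟨0, by norm_num⟩)
        (⟨i,h0⟩, ⟨0, by norm_num⟩) (⟨i+2,h2⟩, ⟨0, by norm_num⟩) (⟨i+1,h1⟩, ⟨1, by norm_num⟩) hq
        (by right; exact ⟨rfl, Or.inr rfl⟩)
        (by right; exact ⟨rfl, Or.inl rfl⟩)
        (by left; exact ⟨rfl, Or.inl rfl⟩)
        (by simp [Prod.ext_iff, Fin.ext_iff] <;> omega)
        (by simp [Prod.ext_iff, Fin.ext_iff] <;> omega)
        (by simp [Prod.ext_iff, Fin.ext_iff] <;> omega)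
    · rw [gW_oob W h2]
      have := deg_le_two W hd (⟨i+1,h1⟩, ⟨0, by norm_num⟩)
        (⟨i,h0⟩, ⟨0, by norm_num⟩) (⟨i+1,h1⟩, ⟨1, by norm_num⟩) hq
        (by right; exact ⟨rfl, Or.inr rfl⟩)
        (by left; exact ⟨rfl, Or.inl rfl⟩)
        (by simp [Prod.ext_iff, Fin.ext_iff])
      simpa using this
  · -- column 1
    have h1 : i + 1 < h := gW_true_lt hq
    have h0 : i < h := by omega
    rw [gW_eq W h1 (by norm_num)] at hq
    rw [gW_eq W h0 (by norm_num), gW_eq W h1 (show (0:ℕ) < 3 by norm_num),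
      gW_eq W h1 (show (2:ℕ) < 3 by norm_num)]
    by_cases h2 : i + 2 < h
    · rw [gW_eq W h2 (by norm_num)]
      exact deg_le_four W hd (⟨i+1,h1⟩, ⟨1, by norm_num⟩)
        (⟨i,h0⟩, ⟨1, by norm_num⟩) (⟨i+2,h2⟩, ⟨1, by norm_num⟩)
        (⟨i+1,h1⟩, ⟨0, by norm_num⟩) (⟨i+1,h1⟩, ⟨2, by norm_num⟩) hq
        (by right; exact ⟨rfl, Or.inr rfl⟩)
        (by right; exact ⟨rfl, Or.inl rfl⟩)
        (by left; exact ⟨rfl, Or.inr rfl⟩)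
        (by left; exact ⟨rfl, Or.inl rfl⟩)
        (by simp [Prod.ext_iff, Fin.ext_iff] <;> omega)
        (by simp [Prod.ext_iff, Fin.ext_iff] <;> omega)
        (by simp [Prod.ext_iff, Fin.ext_iff] <;> omega)
        (by simp [Prod.ext_iff, Fin.ext_iff] <;> omega)
        (by simp [Prod.ext_iff, Fin.ext_iff] <;> omega)
        (by simp [Prod.ext_iff, Fin.ext_iff])
    · rw [gW_oob W h2]
      have := deg_le_three W hd (⟨i+1,h1⟩, ⟨1, by norm_num⟩)
        (⟨i,h0⟩, ⟨1, by norm_num⟩) (⟨i+1,h1⟩, ⟨0, by norm_num⟩)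
        (⟨i+1,h1⟩, ⟨2, by norm_num⟩) hq
        (by right; exact ⟨rfl, Or.inr rfl⟩)
        (by left; exact ⟨rfl, Or.inr rfl⟩)
        (by left; exact ⟨rfl, Or.inl rfl⟩)
        (by simp [Prod.ext_iff, Fin.ext_iff] <;> omega)
        (by simp [Prod.ext_iff, Fin.ext_iff] <;> omega)
        (by simp [Prod.ext_iff, Fin.ext_iff])
      simpa using this
  · -- column 2
    have h1 : i + 1 < h := gW_true_lt hq
    have h0 : i < h := by omega
    rw [gW_eq W h1 (by norm_num)] at hq
    rw [gW_eq W h0 (by norm_num), gW_eq W h1 (show (1:ℕ) < 3 by norm_num)]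
    by_cases h2 : i + 2 < h
    · rw [gW_eq W h2 (by norm_num)]
      exact deg_le_three W hd (⟨i+1,h1⟩, ⟨2, by norm_num⟩)
        (⟨i,h0⟩, ⟨2, by norm_num⟩) (⟨i+2,h2⟩, ⟨2, by norm_num⟩) (⟨i+1,h1⟩, ⟨1, by norm_num⟩) hq
        (by right; exact ⟨rfl, Or.inr rfl⟩)
        (by right; exact ⟨rfl, Or.inl rfl⟩)
        (by left; exact ⟨rfl, Or.inr rfl⟩)
        (by simp [Prod.ext_iff, Fin.ext_iff] <;> omega)
        (by simp [Prod.ext_iff, Fin.ext_iff] <;> omega)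
        (by simp [Prod.ext_iff, Fin.ext_iff] <;> omega)
    · rw [gW_oob W h2]
      have := deg_le_two W hd (⟨i+1,h1⟩, ⟨2, by norm_num⟩)
        (⟨i,h0⟩, ⟨2, by norm_num⟩) (⟨i+1,h1⟩, ⟨1, by norm_num⟩) hq
        (by right; exact ⟨rfl, Or.inr rfl⟩)
        (by left; exact ⟨rfl, Or.inr rfl⟩)
        (by simp [Prod.ext_iff, Fin.ext_iff])
      simpa using this

lemma V0 {h : ℕ} (W : Fin h × Fin 3 → Bool) (hd : degLEW W 2) (hh : 3 ≤ h) :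
    VP (false, false, false) (patW W 0) (patW W 1) := by
  have h0 : 0 < h := by omega
  have h1 : 1 < h := by omega
  refine ⟨?_, ?_, ?_⟩ <;> intro hq <;> simp only [patW] at hq ⊢
  · rw [gW_eq W h0 (by norm_num)] at hq
    rw [gW_eq W h1 (show (0:ℕ) < 3 by norm_num), gW_eq W h0 (show (1:ℕ) < 3 by norm_num)]
    have := deg_le_two W hd (⟨0,h0⟩, ⟨0, by norm_num⟩)
      (⟨1,h1⟩, ⟨0, by norm_num⟩) (⟨0,h0⟩, ⟨1, by norm_num⟩) hq
      (by right; exact ⟨rfl, Or.inl rfl⟩)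
      (by left; exact ⟨rfl, Or.inl rfl⟩)
      (by simp [Prod.ext_iff, Fin.ext_iff])
    simpa using this
  · rw [gW_eq W h0 (by norm_num)] at hq
    rw [gW_eq W h1 (show (1:ℕ) < 3 by norm_num), gW_eq W h0 (show (0:ℕ) < 3 by norm_num),
      gW_eq W h0 (show (2:ℕ) < 3 by norm_num)]
    have := deg_le_three W hd (⟨0,h0⟩, ⟨1, by norm_num⟩)
      (⟨1,h1⟩, ⟨1, by norm_num⟩) (⟨0,h0⟩, ⟨0, by norm_num⟩) (⟨0,h0⟩, ⟨2, by norm_num⟩) hq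
      (by right; exact ⟨rfl, Or.inl rfl⟩)
      (by left; exact ⟨rfl, Or.inr rfl⟩)
      (by left; exact ⟨rfl, Or.inl rfl⟩)
      (by simp [Prod.ext_iff, Fin.ext_iff])
      (by simp [Prod.ext_iff, Fin.ext_iff])
      (by simp [Prod.ext_iff, Fin.ext_iff])
    simpa using this
  · rw [gW_eq W h0 (by norm_num)] at hq
    rw [gW_eq W h1 (show (2:ℕ) < 3 by norm_num), gW_eq W h0 (show (1:ℕ) < 3 by norm_num)]
    have := deg_le_two W hd (⟨0,h0⟩, ⟨2, by norm_num⟩)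
      (⟨1,h1⟩, ⟨2, by norm_num⟩) (⟨0,h0⟩, ⟨1, by norm_num⟩) hq
      (by right; exact ⟨rfl, Or.inl rfl⟩)
      (by left; exact ⟨rfl, Or.inr rfl⟩)
      (by simp [Prod.ext_iff, Fin.ext_iff])
    simpa using this

lemma filledCount_eq_sum {h : ℕ} (W : Fin h × Fin 3 → Bool) :
    filledCount W = ∑ i ∈ Finset.range h, aP (patW W i) := by
  have step1 : filledCount W = ∑ p : Fin h × Fin 3, (W p).toNat := by
    rw [filledCount, Finset.card_filter]
    refine Finset.sum_congr rfl fun p _ => ?_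
    cases W p <;> simp
  rw [step1, Fintype.sum_prod_type, ← Fin.sum_univ_eq_sum_range (fun i => aP (patW W i)) h]
  refine Finset.sum_congr rfl fun i _ => ?_
  rw [Fin.sum_univ_three]
  have e0 : gW W i.val 0 = W (i, 0) := by rw [gW_eq W i.isLt (by norm_num)]; rfl
  have e1 : gW W i.val 1 = W (i, 1) := by rw [gW_eq W i.isLt (by norm_num)]; rfl
  have e2 : gW W i.val 2 = W (i, 2) := by rw [gW_eq W i.isLt (by norm_num)]; rfl
  simp only [patW, aP, e0, e1, e2]

theorem upper {h : ℕ} (hh : 3 ≤ h) (W : Fin h × Fin 3 → Bool) (hd : degLEW W 2) :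
    filledCount W ≤ 2 * h + 2 := by
  have key : ∀ k, (∑ i ∈ Finset.range (k + 2), aP (patW W i)) + 16
      ≤ 2 * k + cN (patW W k) (patW W (k + 1)) := by
    intro k
    induction k with
    | zero =>
      have := Lbase _ _ (V0 W hd hh)
      simpa [Finset.sum_range_succ] using this
    | succ k ih =>
      have hstep := Lstep _ _ _ (VS W hd k)
      rw [show k + 1 + 2 = (k + 2) + 1 by omega, Finset.sum_range_succ,
        show k + 1 + 1 = k + 2 from rfl]
      omega
  have hk := key (h - 2)
  rw [show h - 2 + 2 = h by omega] at hk
  have hfin : cN (patW W (h - 2)) (patW W (h - 2 + 1)) ≤ 22 := by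
    have hv := VS W hd (h - 2)
    rw [show h - 2 + 2 = h by omega] at hv
    have hp : patW W h = (false, false, false) := by
      simp [patW, gW_oob W (lt_irrefl h)]
    rw [hp] at hv
    exact Lfinal _ _ hv
  rw [filledCount_eq_sum]
  omega

lemma degW_le_two {h w : ℕ} (W : Fin h × Fin w → Bool) (p u v : Fin h × Fin w)
    (hsub : ∀ q, cellAdj p q → W q = true → q = u ∨ q = v) : degW W p ≤ 2 := by
  have h1 : Finset.univ.filter (fun q => cellAdj p q ∧ W q = true) ⊆ {u, v} := by
    intro q hq
    simp only [Finset.mem_filter, Finset.mem_univ, true_and] at hq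
    simp only [Finset.mem_insert, Finset.mem_singleton]
    exact hsub q hq.1 hq.2
  calc degW W p ≤ ({u, v} : Finset _).card := Finset.card_le_card h1
    _ ≤ 2 := by
      refine le_trans (Finset.card_insert_le _ _) ?_
      simp

theorem exist7 {h : ℕ} (hh : 3 ≤ h) :
    ∃ W : Fin h × Fin 3 → Bool, degLEW W 2 ∧ filledCount W = 2 * h + 2 := by
  refine ⟨fun p => decide (p.2.val ≠ 1 ∨ p.1.val = 0 ∨ p.1.val = h - 1), ?_, ?_⟩
  · intro p hp
    obtain ⟨⟨i, hi⟩, ⟨j, hj⟩⟩ := p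
    simp only [decide_eq_true_eq] at hp
    -- case analysis on j and position of i
    interval_cases j
    · -- j = 0, always filled
      rcases eq_or_ne i 0 with rfl | hi0
      · -- i = 0 : neighbors (1,0), (0,1)
        refine degW_le_two _ _ (⟨1, by omega⟩, ⟨0, by norm_num⟩) (⟨0, by omega⟩, ⟨1, by norm_num⟩) ?_
        intro q hadj hWq
        obtain ⟨⟨qi, hqi⟩, ⟨qj, hqj⟩⟩ := q
        simp only [cellAdj, Fin.ext_iff, Prod.ext_iff] at hadj ⊢
        simp only [decide_eq_true_eq] at hWq
        omega
      · rcases eq_or_ne i (h - 1) with rfl | hih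
        · refine degW_le_two _ _ (⟨h - 2, by omega⟩, ⟨0, by norm_num⟩)
            (⟨h - 1, by omega⟩, ⟨1, by norm_num⟩) ?_
          intro q hadj hWq
          obtain ⟨⟨qi, hqi⟩, ⟨qj, hqj⟩⟩ := q
          simp only [cellAdj, Fin.ext_iff, Prod.ext_iff] at hadj ⊢
          simp only [decide_eq_true_eq] at hWq
          omega
        · refine degW_le_two _ _ (⟨i - 1, by omega⟩, ⟨0, by norm_num⟩)
            (⟨i + 1, by omega⟩, ⟨0, by norm_num⟩) ?_
          intro q hadj hWq
          obtain ⟨⟨qi, hqi⟩, ⟨qj, hqj⟩⟩ := q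
          simp only [cellAdj, Fin.ext_iff, Prod.ext_iff] at hadj ⊢
          simp only [decide_eq_true_eq] at hWq
          omega
    · -- j = 1, filled only if i = 0 or i = h-1
      rcases hp with hp | hp | hp
      · omega
      · subst hp
        refine degW_le_two _ _ (⟨0, by omega⟩, ⟨0, by norm_num⟩) (⟨0, by omega⟩, ⟨2, by norm_num⟩) ?_
        intro q hadj hWq
        obtain ⟨⟨qi, hqi⟩, ⟨qj, hqj⟩⟩ := q
        simp only [cellAdj, Fin.ext_iff, Prod.ext_iff] at hadj ⊢
        simp only [decide_eq_true_eq] at hWq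
        omega
      · subst hp
        refine degW_le_two _ _ (⟨h - 1, by omega⟩, ⟨0, by norm_num⟩)
          (⟨h - 1, by omega⟩, ⟨2, by norm_num⟩) ?_
        intro q hadj hWq
        obtain ⟨⟨qi, hqi⟩, ⟨qj, hqj⟩⟩ := q
        simp only [cellAdj, Fin.ext_iff, Prod.ext_iff] at hadj ⊢
        simp only [decide_eq_true_eq] at hWq
        omega
    · -- j = 2
      rcases eq_or_ne i 0 with rfl | hi0
      · refine degW_le_two _ _ (⟨1, by omega⟩, ⟨2, by norm_num⟩) (⟨0, by omega⟩, ⟨1, by norm_num⟩) ?_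
        intro q hadj hWq
        obtain ⟨⟨qi, hqi⟩, ⟨qj, hqj⟩⟩ := q
        simp only [cellAdj, Fin.ext_iff, Prod.ext_iff] at hadj ⊢
        simp only [decide_eq_true_eq] at hWq
        omega
      · rcases eq_or_ne i (h - 1) with rfl | hih
        · refine degW_le_two _ _ (⟨h - 2, by omega⟩, ⟨2, by norm_num⟩)
            (⟨h - 1, by omega⟩, ⟨1, by norm_num⟩) ?_
          intro q hadj hWq
          obtain ⟨⟨qi, hqi⟩, ⟨qj, hqj⟩⟩ := q
          simp only [cellAdj, Fin.ext_iff, Prod.ext_iff] at hadj ⊢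
          simp only [decide_eq_true_eq] at hWq
          omega
        · refine degW_le_two _ _ (⟨i - 1, by omega⟩, ⟨2, by norm_num⟩)
            (⟨i + 1, by omega⟩, ⟨2, by norm_num⟩) ?_
          intro q hadj hWq
          obtain ⟨⟨qi, hqi⟩, ⟨qj, hqj⟩⟩ := q
          simp only [cellAdj, Fin.ext_iff, Prod.ext_iff] at hadj ⊢
          simp only [decide_eq_true_eq] at hWq
          omega
  · -- count
    have step1 : filledCount (fun p : Fin h × Fin 3 =>
        decide (p.2.val ≠ 1 ∨ p.1.val = 0 ∨ p.1.val = h - 1))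
        = ∑ i : Fin h, ∑ j : Fin 3,
          (if (j.val ≠ 1 ∨ i.val = 0 ∨ i.val = h - 1) then 1 else 0) := by
      rw [filledCount, Finset.card_filter, Fintype.sum_prod_type]
      refine Finset.sum_congr rfl fun i _ => Finset.sum_congr rfl fun j _ => ?_
      simp
    rw [step1]
    have step2 : ∀ i : Fin h, (∑ j : Fin 3,
        (if (j.val ≠ 1 ∨ i.val = 0 ∨ i.val = h - 1) then 1 else 0) : ℕ)
        = 2 + (if (i.val = 0 ∨ i.val = h - 1) then 1 else 0) := by
      intro i
      rw [Fin.sum_univ_three]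
      norm_num
      omega
    rw [Finset.sum_congr rfl fun i _ => step2 i, Finset.sum_add_distrib]
    have c1 : (∑ _i : Fin h, 2) = 2 * h := by
      simp [Finset.sum_const, mul_comm]
    have c2 : (∑ i : Fin h, (if (i.val = 0 ∨ i.val = h - 1) then 1 else 0) : ℕ) = 2 := by
      have hb : (∑ i : Fin h, (if (i.val = 0 ∨ i.val = h - 1) then 1 else 0) : ℕ)
          = (Finset.univ.filter (fun i : Fin h => i.val = 0 ∨ i.val = h - 1)).card := by
        rw [Finset.card_filter]
      rw [hb]
      have he : Finset.univ.filter (fun i : Fin h => i.val = 0 ∨ i.val = h - 1)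
          = {(⟨0, by omega⟩ : Fin h), ⟨h - 1, by omega⟩} := by
        ext x
        simp only [Finset.mem_filter, Finset.mem_univ, true_and, Finset.mem_insert,
          Finset.mem_singleton, Fin.ext_iff]
      rw [he, Finset.card_insert_of_notMem (by simp [Fin.ext_iff]; omega),
        Finset.card_singleton]
    rw [c1, c2]

theorem stmt7 (h : ℕ) (hh : 3 ≤ h) :
    (∀ W : Fin h × Fin 3 → Bool, degLEW W 2 → filledCount W ≤ 2 * h + 2) ∧
    (∃ W : Fin h × Fin 3 → Bool, degLEW W 2 ∧ filledCount W = 2 * h + 2) := by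
  exact ⟨fun W hd => upper hh W hd, exist7 hh⟩
end

section
/- For every integer h ≥ 4, there exists a 2-dimensional binary word W : Fin h × Fin 4 → Bool in which every filled cell has at most 2 filled orthogonal neighbors, and whose number of filled cells equals 8h/3 + 4/3 if h ≡ 1 (mod 3), 8h/3 + 1 if h ≡ 0 (mod 3), and 8h/3 + 2/3 if h ≡ 2 (mod 3). -/
/-! ### auxiliary construction -/

def fcell (h r c : ℕ) : Bool :=
  if r = 0 then true
  else if r = 1 then decide (c = 0 ∨ c = 3)
  else if h % 3 = 1 ∧ r = h - 1 then true
  else if h % 3 = 1 ∧ r = h - 2 then decide (c = 0 ∨ c = 3)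
  else if (r - 2) % 3 = 0 then decide (c ≠ 1)
  else if (r - 2) % 3 = 1 then decide (c = 1 ∨ c = 2)
  else decide (c ≠ 2)

lemma fcell_iff (h r c : ℕ) : fcell h r c = true ↔
    (r = 0 ∨
     (r = 1 ∧ (c = 0 ∨ c = 3)) ∨
     (2 ≤ r ∧ h % 3 = 1 ∧ r = h - 1) ∨
     (2 ≤ r ∧ h % 3 = 1 ∧ r = h - 2 ∧ r ≠ h - 1 ∧ (c = 0 ∨ c = 3)) ∨
     (2 ≤ r ∧ ¬(h % 3 = 1 ∧ (r = h - 1 ∨ r = h - 2)) ∧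
       (((r - 2) % 3 = 0 ∧ c ≠ 1) ∨ ((r - 2) % 3 = 1 ∧ (c = 1 ∨ c = 2)) ∨
        ((r - 2) % 3 = 2 ∧ c ≠ 2)))) := by
  unfold fcell
  split_ifs <;> simp_all <;> omega

lemma noUDL (h r c : ℕ) (hh : 4 ≤ h) (hc : c < 4)
    (hp : fcell h r c = true) (h1 : 1 ≤ r ∧ fcell h (r - 1) c = true)
    (h2 : r + 1 < h ∧ fcell h (r + 1) c = true)
    (h3 : 1 ≤ c ∧ fcell h r (c - 1) = true) : False := by
  simp only [fcell_iff] at hp h1 h2 h3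
  omega

lemma noUDR (h r c : ℕ) (hh : 4 ≤ h) (hc : c < 4)
    (hp : fcell h r c = true) (h1 : 1 ≤ r ∧ fcell h (r - 1) c = true)
    (h2 : r + 1 < h ∧ fcell h (r + 1) c = true)
    (h4 : c + 1 < 4 ∧ fcell h r (c + 1) = true) : False := by
  simp only [fcell_iff] at hp h1 h2 h4
  omega

lemma noULR (h r c : ℕ) (hh : 4 ≤ h) (hc : c < 4)
    (hp : fcell h r c = true) (h1 : 1 ≤ r ∧ fcell h (r - 1) c = true)
    (h3 : 1 ≤ c ∧ fcell h r (c - 1) = true)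
    (h4 : c + 1 < 4 ∧ fcell h r (c + 1) = true) : False := by
  simp only [fcell_iff] at hp h1 h3 h4
  omega

lemma noDLR (h r c : ℕ) (hh : 4 ≤ h) (hc : c < 4)
    (hp : fcell h r c = true) (h2 : r + 1 < h ∧ fcell h (r + 1) c = true)
    (h3 : 1 ≤ c ∧ fcell h r (c - 1) = true)
    (h4 : c + 1 < 4 ∧ fcell h r (c + 1) = true) : False := by
  simp only [fcell_iff] at hp h2 h3 h4
  omega

lemma core (h r c : ℕ) (hh : 4 ≤ h) (hr : r < h) (hc : c < 4)
    (hp : fcell h r c = true) :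
    (if 1 ≤ r ∧ fcell h (r - 1) c = true then 1 else 0) +
    (if r + 1 < h ∧ fcell h (r + 1) c = true then 1 else 0) +
    (if 1 ≤ c ∧ fcell h r (c - 1) = true then 1 else 0) +
    (if c + 1 < 4 ∧ fcell h r (c + 1) = true then 1 else 0) ≤ 2 := by
  split_ifs <;> first
    | decide
    | exact (noUDL h r c hh hc hp ‹_› ‹_› ‹_›).elim
    | exact (noUDR h r c hh hc hp ‹_› ‹_› ‹_›).elim
    | exact (noULR h r c hh hc hp ‹_› ‹_› ‹_›).elim
    | exact (noDLR h r c hh hc hp ‹_› ‹_› ‹_›).elim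

-- bound degW by four directional indicators, for any W given by a coordinate function
lemma degW_le_dirs {h : ℕ} (g : ℕ → ℕ → Bool) (p : Fin h × Fin 4) :
    degW (fun q : Fin h × Fin 4 => g q.1.val q.2.val) p ≤
    (if 1 ≤ p.1.val ∧ g (p.1.val - 1) p.2.val = true then 1 else 0) +
    (if p.1.val + 1 < h ∧ g (p.1.val + 1) p.2.val = true then 1 else 0) +
    (if 1 ≤ p.2.val ∧ g p.1.val (p.2.val - 1) = true then 1 else 0) +
    (if p.2.val + 1 < 4 ∧ g p.1.val (p.2.val + 1) = true then 1 else 0) := by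
  classical
  set U : Finset (Fin h × Fin 4) :=
    Finset.univ.filter (fun q => q.1.val + 1 = p.1.val ∧ q.2 = p.2 ∧ g q.1.val q.2.val = true) with hU
  set D : Finset (Fin h × Fin 4) :=
    Finset.univ.filter (fun q => p.1.val + 1 = q.1.val ∧ q.2 = p.2 ∧ g q.1.val q.2.val = true) with hD
  set L : Finset (Fin h × Fin 4) :=
    Finset.univ.filter (fun q => q.2.val + 1 = p.2.val ∧ q.1 = p.1 ∧ g q.1.val q.2.val = true) with hL
  set R : Finset (Fin h × Fin 4) :=
    Finset.univ.filter (fun q => p.2.val + 1 = q.2.val ∧ q.1 = p.1 ∧ g q.1.val q.2.val = true) with hR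
  have hsub : (Finset.univ.filter
      (fun q : Fin h × Fin 4 => cellAdj p q ∧ g q.1.val q.2.val = true)) ⊆ U ∪ D ∪ L ∪ R := by
    intro q hq
    simp only [Finset.mem_filter, Finset.mem_univ, true_and, cellAdj] at hq
    simp only [hU, hD, hL, hR, Finset.mem_union, Finset.mem_filter, Finset.mem_univ, true_and]
    obtain ⟨hadj, hg⟩ := hq
    rcases hadj with ⟨he, hor⟩ | ⟨he, hor⟩
    · rcases hor with h1 | h1
      · exact Or.inr ⟨h1, he.symm, hg⟩
      · exact Or.inl (Or.inr ⟨h1, he.symm, hg⟩)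
    · rcases hor with h1 | h1
      · exact Or.inl (Or.inl (Or.inr ⟨h1, he.symm, hg⟩))
      · exact Or.inl (Or.inl (Or.inl ⟨h1, he.symm, hg⟩))
  have cardU : U.card ≤ (if 1 ≤ p.1.val ∧ g (p.1.val - 1) p.2.val = true then 1 else 0) := by
    split_ifs with hcond
    · refine Finset.card_le_one.mpr (fun a ha b hb => ?_)
      simp only [hU, Finset.mem_filter] at ha hb
      have : a.1 = b.1 := Fin.ext (by omega)
      exact Prod.ext this (ha.2.2.1.trans hb.2.2.1.symm)
    · refine Nat.le_of_eq (Finset.card_eq_zero.mpr (Finset.filter_eq_empty_iff.mpr ?_))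
      rintro q - ⟨h1, h2, h3⟩
      have e1 : q.1.val = p.1.val - 1 := by omega
      have e2 : q.2.val = p.2.val := by rw [h2]
      rw [e1, e2] at h3
      exact hcond ⟨by omega, h3⟩
  have cardD : D.card ≤ (if p.1.val + 1 < h ∧ g (p.1.val + 1) p.2.val = true then 1 else 0) := by
    split_ifs with hcond
    · refine Finset.card_le_one.mpr (fun a ha b hb => ?_)
      simp only [hD, Finset.mem_filter] at ha hb
      have : a.1 = b.1 := Fin.ext (by omega)
      exact Prod.ext this (ha.2.2.1.trans hb.2.2.1.symm)
    · refine Nat.le_of_eq (Finset.card_eq_zero.mpr (Finset.filter_eq_empty_iff.mpr ?_))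
      rintro q - ⟨h1, h2, h3⟩
      have e1 : q.1.val = p.1.val + 1 := by omega
      have e2 : q.2.val = p.2.val := by rw [h2]
      rw [e1, e2] at h3
      exact hcond ⟨by have := q.1.isLt; omega, h3⟩
  have cardL : L.card ≤ (if 1 ≤ p.2.val ∧ g p.1.val (p.2.val - 1) = true then 1 else 0) := by
    split_ifs with hcond
    · refine Finset.card_le_one.mpr (fun a ha b hb => ?_)
      simp only [hL, Finset.mem_filter] at ha hb
      have : a.2 = b.2 := Fin.ext (by omega)
      exact Prod.ext (ha.2.2.1.trans hb.2.2.1.symm) this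
    · refine Nat.le_of_eq (Finset.card_eq_zero.mpr (Finset.filter_eq_empty_iff.mpr ?_))
      rintro q - ⟨h1, h2, h3⟩
      have e1 : q.2.val = p.2.val - 1 := by omega
      have e2 : q.1.val = p.1.val := by rw [h2]
      rw [e1, e2] at h3
      exact hcond ⟨by omega, h3⟩
  have cardR : R.card ≤ (if p.2.val + 1 < 4 ∧ g p.1.val (p.2.val + 1) = true then 1 else 0) := by
    split_ifs with hcond
    · refine Finset.card_le_one.mpr (fun a ha b hb => ?_)
      simp only [hR, Finset.mem_filter] at ha hb
      have : a.2 = b.2 := Fin.ext (by omega)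
      exact Prod.ext (ha.2.2.1.trans hb.2.2.1.symm) this
    · refine Nat.le_of_eq (Finset.card_eq_zero.mpr (Finset.filter_eq_empty_iff.mpr ?_))
      rintro q - ⟨h1, h2, h3⟩
      have e1 : q.2.val = p.2.val + 1 := by omega
      have e2 : q.1.val = p.1.val := by rw [h2]
      rw [e1, e2] at h3
      exact hcond ⟨by have := q.2.isLt; omega, h3⟩
  calc degW (fun q : Fin h × Fin 4 => g q.1.val q.2.val) p
      ≤ (U ∪ D ∪ L ∪ R).card := Finset.card_le_card hsub
    _ ≤ U.card + D.card + L.card + R.card := by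
        refine le_trans (Finset.card_union_le _ _) ?_
        refine Nat.add_le_add_right (le_trans (Finset.card_union_le _ _) ?_) _
        exact Nat.add_le_add_right (Finset.card_union_le _ _) _
    _ ≤ _ := by omega

def rowcnt (h r : ℕ) : ℕ :=
  (if fcell h r 0 = true then 1 else 0) + (if fcell h r 1 = true then 1 else 0) +
  (if fcell h r 2 = true then 1 else 0) + (if fcell h r 3 = true then 1 else 0)

def rcnt (r : ℕ) : ℕ :=
  if r = 0 then 4 else if r = 1 then 2
  else if (r - 2) % 3 = 0 then 3 else if (r - 2) % 3 = 1 then 2 else 3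

lemma fcell_pat (h r c : ℕ) (hr : 2 ≤ r) (hcap : ¬(h % 3 = 1 ∧ (r = h - 1 ∨ r = h - 2))) :
    fcell h r c = (if (r - 2) % 3 = 0 then decide (c ≠ 1)
      else if (r - 2) % 3 = 1 then decide (c = 1 ∨ c = 2) else decide (c ≠ 2)) := by
  unfold fcell
  rw [if_neg (by omega), if_neg (by omega), if_neg (by tauto), if_neg (by tauto)]

lemma rowcnt_eq (h r : ℕ) (hcap : ¬(h % 3 = 1 ∧ 2 ≤ r ∧ (r = h - 1 ∨ r = h - 2))) :
    rowcnt h r = rcnt r := by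
  rcases Nat.lt_or_ge r 2 with hr | hr
  · interval_cases r <;> simp [rowcnt, rcnt, fcell]
  · have hcap' : ¬(h % 3 = 1 ∧ (r = h - 1 ∨ r = h - 2)) := by tauto
    unfold rowcnt
    simp only [fcell_pat h r _ hr hcap']
    unfold rcnt
    rw [if_neg (by omega : ¬ r = 0), if_neg (by omega : ¬ r = 1)]
    have h3 : (r - 2) % 3 = 0 ∨ (r - 2) % 3 = 1 ∨ (r - 2) % 3 = 2 := by omega
    rcases h3 with h3 | h3 | h3 <;> simp [h3] <;> omega

lemma rowcnt_cap1 (h : ℕ) (hh : 4 ≤ h) (h3 : h % 3 = 1) : rowcnt h (h - 2) = 2 := by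
  have e : ∀ c : ℕ, fcell h (h - 2) c = decide (c = 0 ∨ c = 3) := by
    intro c
    unfold fcell
    rw [if_neg (by omega), if_neg (by omega), if_neg (by omega), if_pos ⟨h3, rfl⟩]
  unfold rowcnt
  simp [e]

lemma rowcnt_cap2 (h : ℕ) (hh : 4 ≤ h) (h3 : h % 3 = 1) : rowcnt h (h - 1) = 4 := by
  have e : ∀ c : ℕ, fcell h (h - 1) c = true := by
    intro c
    unfold fcell
    rw [if_neg (by omega), if_neg (by omega), if_pos ⟨h3, rfl⟩]
  unfold rowcnt
  simp [e]

lemma sum_rcnt (k : ℕ) (hk : 2 ≤ k) :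
    ∑ r ∈ Finset.range k, rcnt r = 6 + (8 * (k - 2) + 1) / 3 := by
  induction k with
  | zero => omega
  | succ n ih =>
    rcases Nat.lt_or_ge n 2 with hn | hn
    · interval_cases n
      · omega
      · simp [Finset.sum_range_succ, rcnt]
    · rw [Finset.sum_range_succ, ih hn]
      unfold rcnt
      rw [if_neg (by omega), if_neg (by omega)]
      split_ifs <;> omega


theorem stmt9 (h : ℕ) (hh : 4 ≤ h) :
    ∃ W : Fin h × Fin 4 → Bool, degLEW W 2 ∧
      filledCount W =
        (if h % 3 = 1 then (8 * h + 4) / 3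
         else if h % 3 = 0 then (8 * h + 3) / 3
         else (8 * h + 2) / 3) := by
  refine ⟨fun p => fcell h p.1.val p.2.val, ?_, ?_⟩
  · intro p hp
    refine le_trans (degW_le_dirs (fcell h) p) ?_
    exact core h p.1.val p.2.val hh p.1.isLt p.2.isLt hp
  · have hFC : filledCount (fun p : Fin h × Fin 4 => fcell h p.1.val p.2.val)
        = ∑ r ∈ Finset.range h, rowcnt h r := by
      rw [filledCount, Finset.card_filter, Fintype.sum_prod_type,
        ← Fin.sum_univ_eq_sum_range (fun r => rowcnt h r) h]
      refine Finset.sum_congr rfl (fun r _ => ?_)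
      rw [Fin.sum_univ_four]
      rfl
    rw [hFC]
    by_cases h3 : h % 3 = 1
    · obtain ⟨m, rfl⟩ : ∃ m, h = m + 2 := ⟨h - 2, by omega⟩
      rw [Finset.sum_range_succ, Finset.sum_range_succ]
      have e1 : rowcnt (m + 2) m = 2 := by
        have := rowcnt_cap1 (m + 2) hh h3
        simpa using this
      have e2 : rowcnt (m + 2) (m + 1) = 4 := by
        have := rowcnt_cap2 (m + 2) hh h3
        simpa using this
      have e3 : ∑ r ∈ Finset.range m, rowcnt (m + 2) r = ∑ r ∈ Finset.range m, rcnt r := by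
        refine Finset.sum_congr rfl (fun r hr => ?_)
        rw [Finset.mem_range] at hr
        exact rowcnt_eq (m + 2) r (by omega)
      rw [e1, e2, e3, sum_rcnt m (by omega)]
      rw [if_pos h3]
      omega
    · have e3 : ∑ r ∈ Finset.range h, rowcnt h r = ∑ r ∈ Finset.range h, rcnt r :=
        Finset.sum_congr rfl (fun r hr => rowcnt_eq h r (by omega))
      rw [e3, sum_rcnt h (by omega), if_neg h3]
      split_ifs <;> omega
end

section
/- Let h ≥ 4 be an integer and W : Fin h × Fin 4 → Bool with every filled cell having at most 2 filled orthogonal neighbors. Then the number of filled cells is at most (8h+4)/3 if h ≡ 1 (mod 3), at most (8h+3)/3 if h ≡ 0 (mod 3), and at most (8h+2)/3 if h ≡ 2 (mod 3). -/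
namespace Stmt10Aux

abbrev R4 := Bool × Bool × Bool × Bool
def eR : R4 := (false, false, false, false)
def popR (r : R4) : ℕ := r.1.toNat + r.2.1.toNat + r.2.2.1.toNat + r.2.2.2.toNat
def okP (a b c : R4) : Prop :=
  (b.1 = true → a.1.toNat + c.1.toNat + b.2.1.toNat ≤ 2) ∧
  (b.2.1 = true → a.2.1.toNat + c.2.1.toNat + b.1.toNat + b.2.2.1.toNat ≤ 2) ∧
  (b.2.2.1 = true → a.2.2.1.toNat + c.2.2.1.toNat + b.2.1.toNat + b.2.2.2.toNat ≤ 2) ∧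
  (b.2.2.2 = true → a.2.2.2.toNat + c.2.2.2.toNat + b.2.2.1.toNat ≤ 2)

instance (a b c : R4) : Decidable (okP a b c) := by unfold okP; infer_instance

def idxR (r : R4) : ℕ := r.1.toNat + 2*r.2.1.toNat + 4*r.2.2.1.toNat + 8*r.2.2.2.toNat
def tab (l : List (List ℕ)) (a b : R4) : ℕ := (l.getD (idxR a) []).getD (idxR b) 0

def C0 : List (List Nat) :=
[[52, 55, 55, 58, 55, 58, 58, 61, 55, 58, 58, 61, 58, 61, 61, 64],
 [0, 0, 0, 0, 0, 0, 0, 0, 0, 0, 0, 0, 0, 0, 0, 0],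
 [0, 0, 0, 0, 0, 0, 0, 0, 0, 0, 0, 0, 0, 0, 0, 0],
 [0, 0, 0, 0, 0, 0, 0, 0, 0, 0, 0, 0, 0, 0, 0, 0],
 [0, 0, 0, 0, 0, 0, 0, 0, 0, 0, 0, 0, 0, 0, 0, 0],
 [0, 0, 0, 0, 0, 0, 0, 0, 0, 0, 0, 0, 0, 0, 0, 0],
 [0, 0, 0, 0, 0, 0, 0, 0, 0, 0, 0, 0, 0, 0, 0, 0],
 [0, 0, 0, 0, 0, 0, 0, 0, 0, 0, 0, 0, 0, 0, 0, 0],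
 [0, 0, 0, 0, 0, 0, 0, 0, 0, 0, 0, 0, 0, 0, 0, 0],
 [0, 0, 0, 0, 0, 0, 0, 0, 0, 0, 0, 0, 0, 0, 0, 0],
 [0, 0, 0, 0, 0, 0, 0, 0, 0, 0, 0, 0, 0, 0, 0, 0],
 [0, 0, 0, 0, 0, 0, 0, 0, 0, 0, 0, 0, 0, 0, 0, 0],
 [0, 0, 0, 0, 0, 0, 0, 0, 0, 0, 0, 0, 0, 0, 0, 0],
 [0, 0, 0, 0, 0, 0, 0, 0, 0, 0, 0, 0, 0, 0, 0, 0],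
 [0, 0, 0, 0, 0, 0, 0, 0, 0, 0, 0, 0, 0, 0, 0, 0],
 [0, 0, 0, 0, 0, 0, 0, 0, 0, 0, 0, 0, 0, 0, 0, 0]]

def C1 : List (List Nat) :=
[[44, 47, 47, 50, 47, 50, 50, 53, 47, 50, 50, 53, 50, 53, 53, 56],
 [47, 50, 50, 53, 50, 53, 53, 56, 50, 53, 53, 56, 53, 56, 56, 59],
 [47, 50, 50, 53, 50, 53, 53, 56, 50, 53, 53, 56, 53, 56, 56, 59],
 [50, 53, 53, 56, 53, 56, 56, 59, 53, 56, 56, 59, 56, 59, 59, 62],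
 [47, 50, 50, 53, 50, 53, 53, 56, 50, 53, 53, 56, 53, 56, 56, 59],
 [50, 53, 53, 56, 53, 56, 56, 59, 53, 56, 56, 59, 56, 59, 59, 62],
 [50, 53, 53, 56, 53, 56, 56, 59, 53, 56, 56, 59, 56, 59, 59, 62],
 [53, 56, 0, 0, 56, 59, 0, 0, 56, 59, 0, 0, 59, 62, 0, 0],
 [47, 50, 50, 53, 50, 53, 53, 56, 50, 53, 53, 56, 53, 56, 56, 59],
 [50, 53, 53, 56, 53, 56, 56, 59, 53, 56, 56, 59, 56, 59, 59, 62],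
 [50, 53, 53, 56, 53, 56, 56, 59, 53, 56, 56, 59, 56, 59, 59, 62],
 [53, 56, 56, 59, 56, 59, 59, 62, 56, 59, 59, 62, 59, 62, 62, 65],
 [50, 53, 53, 56, 53, 56, 56, 59, 53, 56, 56, 59, 56, 59, 59, 62],
 [53, 56, 56, 59, 56, 59, 59, 62, 56, 59, 59, 62, 59, 62, 62, 65],
 [53, 56, 56, 59, 0, 0, 0, 0, 56, 59, 59, 62, 0, 0, 0, 0],
 [56, 59, 0, 0, 0, 0, 0, 0, 59, 62, 0, 0, 0, 0, 0, 0]]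

def C2 : List (List Nat) :=
[[48, 51, 51, 54, 51, 54, 54, 57, 51, 54, 54, 57, 54, 57, 57, 60],
 [51, 54, 54, 57, 54, 57, 57, 60, 54, 57, 57, 60, 57, 60, 60, 63],
 [48, 51, 51, 54, 51, 54, 54, 57, 51, 54, 54, 57, 54, 57, 57, 60],
 [51, 54, 54, 54, 54, 57, 57, 57, 54, 57, 57, 57, 57, 60, 60, 60],
 [48, 51, 51, 54, 51, 54, 54, 57, 51, 54, 54, 57, 54, 57, 57, 60],
 [51, 54, 54, 57, 54, 57, 57, 60, 54, 57, 57, 60, 57, 60, 60, 63],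
 [51, 54, 54, 57, 54, 57, 54, 57, 54, 57, 57, 60, 57, 60, 57, 60],
 [54, 54, 0, 0, 54, 54, 0, 0, 57, 57, 0, 0, 57, 57, 0, 0],
 [51, 54, 54, 57, 54, 57, 57, 60, 54, 57, 57, 60, 57, 60, 60, 63],
 [54, 57, 57, 60, 57, 60, 60, 63, 57, 60, 60, 63, 60, 63, 63, 66],
 [51, 54, 54, 57, 54, 57, 57, 60, 54, 57, 57, 60, 57, 60, 60, 63],
 [54, 57, 57, 57, 57, 60, 60, 60, 57, 60, 60, 60, 60, 63, 63, 63],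
 [51, 54, 54, 57, 54, 57, 57, 60, 54, 57, 57, 60, 54, 57, 57, 60],
 [54, 57, 57, 60, 57, 60, 60, 63, 57, 60, 60, 63, 57, 60, 60, 63],
 [54, 57, 54, 57, 0, 0, 0, 0, 54, 57, 54, 57, 0, 0, 0, 0],
 [54, 54, 0, 0, 0, 0, 0, 0, 54, 54, 0, 0, 0, 0, 0, 0]]

def P0 : List (List Nat) :=
[[46, 49, 49, 52, 49, 52, 52, 55, 49, 52, 52, 55, 52, 55, 55, 58],
 [49, 52, 52, 55, 52, 55, 55, 58, 52, 55, 55, 58, 55, 58, 58, 61],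
 [49, 52, 52, 55, 52, 55, 55, 58, 52, 55, 55, 58, 55, 58, 58, 61],
 [52, 52, 55, 55, 55, 55, 58, 58, 55, 55, 58, 58, 58, 58, 61, 61],
 [49, 52, 52, 55, 52, 55, 55, 58, 52, 55, 55, 58, 55, 58, 58, 61],
 [52, 55, 55, 58, 55, 58, 58, 61, 55, 58, 58, 61, 58, 61, 61, 64],
 [52, 55, 55, 58, 55, 58, 58, 61, 55, 58, 58, 61, 58, 61, 61, 64],
 [55, 55, 0, 0, 58, 58, 0, 0, 58, 58, 0, 0, 61, 61, 0, 0],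
 [49, 52, 52, 55, 52, 55, 55, 58, 52, 55, 55, 58, 55, 58, 58, 61],
 [52, 55, 55, 58, 55, 58, 58, 61, 55, 58, 58, 61, 58, 61, 61, 64],
 [52, 55, 55, 58, 55, 58, 58, 61, 55, 58, 58, 61, 58, 61, 61, 64],
 [55, 55, 58, 58, 58, 58, 61, 61, 58, 58, 61, 61, 61, 61, 64, 64],
 [52, 55, 55, 58, 55, 58, 58, 61, 52, 55, 55, 58, 55, 58, 58, 61],
 [55, 58, 58, 61, 58, 61, 61, 64, 55, 58, 58, 61, 58, 61, 61, 64],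
 [55, 58, 58, 61, 0, 0, 0, 0, 55, 58, 58, 61, 0, 0, 0, 0],
 [58, 58, 0, 0, 0, 0, 0, 0, 58, 58, 0, 0, 0, 0, 0, 0]]

def P1 : List (List Nat) :=
[[50, 53, 53, 56, 53, 56, 56, 59, 53, 56, 56, 59, 56, 59, 59, 62],
 [50, 53, 53, 56, 53, 56, 56, 59, 53, 56, 56, 59, 56, 59, 59, 62],
 [50, 53, 53, 56, 53, 56, 56, 59, 53, 56, 56, 59, 56, 59, 59, 62],
 [53, 56, 56, 56, 56, 59, 59, 59, 56, 59, 59, 59, 59, 62, 62, 62],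
 [50, 53, 53, 56, 53, 56, 56, 59, 53, 56, 56, 59, 56, 59, 59, 62],
 [53, 56, 56, 59, 56, 59, 59, 62, 56, 59, 59, 62, 59, 62, 62, 65],
 [53, 56, 56, 59, 56, 59, 56, 59, 56, 59, 59, 62, 59, 62, 59, 62],
 [56, 56, 0, 0, 56, 56, 0, 0, 59, 59, 0, 0, 59, 59, 0, 0],
 [50, 53, 53, 56, 53, 56, 56, 59, 53, 56, 56, 59, 56, 59, 59, 62],
 [50, 53, 53, 56, 53, 56, 56, 59, 53, 56, 56, 59, 56, 59, 59, 62],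
 [53, 56, 56, 59, 56, 59, 59, 62, 56, 59, 59, 62, 59, 62, 62, 65],
 [53, 56, 56, 56, 56, 59, 59, 59, 56, 59, 59, 59, 59, 62, 62, 62],
 [53, 56, 56, 59, 56, 59, 59, 62, 56, 59, 59, 62, 56, 59, 59, 62],
 [53, 56, 56, 59, 56, 59, 59, 62, 56, 59, 59, 62, 56, 59, 59, 62],
 [56, 59, 56, 59, 0, 0, 0, 0, 56, 59, 56, 59, 0, 0, 0, 0],
 [56, 56, 0, 0, 0, 0, 0, 0, 56, 56, 0, 0, 0, 0, 0, 0]]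

def P2 : List (List Nat) :=
[[48, 51, 51, 54, 51, 54, 54, 57, 51, 54, 54, 57, 54, 57, 57, 60],
 [51, 54, 54, 57, 54, 57, 57, 60, 54, 57, 57, 60, 57, 60, 60, 63],
 [48, 51, 51, 54, 51, 54, 54, 57, 51, 54, 54, 57, 54, 57, 57, 60],
 [51, 54, 54, 57, 54, 57, 57, 60, 54, 57, 57, 60, 57, 60, 60, 63],
 [48, 51, 51, 54, 51, 54, 54, 57, 51, 54, 54, 57, 54, 57, 57, 60],
 [51, 54, 54, 57, 54, 57, 57, 60, 54, 57, 57, 60, 57, 60, 60, 63],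
 [51, 54, 54, 57, 54, 57, 54, 57, 54, 57, 57, 60, 57, 60, 57, 60],
 [54, 57, 0, 0, 54, 57, 0, 0, 57, 60, 0, 0, 57, 60, 0, 0],
 [51, 54, 54, 57, 54, 57, 57, 60, 54, 57, 57, 60, 57, 60, 60, 63],
 [51, 54, 54, 57, 54, 57, 57, 60, 54, 57, 57, 60, 57, 60, 60, 63],
 [51, 54, 54, 57, 54, 57, 57, 60, 54, 57, 57, 60, 57, 60, 60, 63],
 [54, 57, 57, 60, 57, 60, 60, 63, 57, 60, 60, 63, 60, 63, 63, 66],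
 [51, 54, 54, 57, 54, 57, 57, 60, 54, 57, 57, 60, 57, 60, 60, 63],
 [54, 57, 57, 60, 57, 60, 60, 63, 57, 60, 60, 63, 60, 63, 63, 66],
 [54, 57, 54, 57, 0, 0, 0, 0, 57, 60, 57, 60, 0, 0, 0, 0],
 [54, 57, 0, 0, 0, 0, 0, 0, 57, 60, 0, 0, 0, 0, 0, 0]]


lemma init_cond : ∀ b : R4, 3 * popR b + 60 ≤ 8 + tab C0 eR b := by decide
lemma step01 : ∀ a b c : R4, okP a b c → tab C0 a b + 3 * popR c ≤ 8 + tab C1 b c := by decide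
lemma step12 : ∀ a b c : R4, okP a b c → tab C1 a b + 3 * popR c ≤ 8 + tab C2 b c := by decide
lemma step2P : ∀ a b c : R4, okP a b c → tab C2 a b + 3 * popR c ≤ 8 + tab P0 b c := by decide
lemma stepP01 : ∀ a b c : R4, okP a b c → tab P0 a b + 3 * popR c ≤ 8 + tab P1 b c := by decide
lemma stepP12 : ∀ a b c : R4, okP a b c → tab P1 a b + 3 * popR c ≤ 8 + tab P2 b c := by decide
lemma stepP20 : ∀ a b c : R4, okP a b c → tab P2 a b + 3 * popR c ≤ 8 + tab P0 b c := by decide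
lemma finalP0 : ∀ a b : R4, okP a b eR → tab P0 a b ≤ 64 := by decide
lemma finalP1 : ∀ a b : R4, okP a b eR → tab P1 a b ≤ 62 := by decide
lemma finalP2 : ∀ a b : R4, okP a b eR → tab P2 a b ≤ 63 := by decide


def Phi (n : ℕ) : R4 → R4 → ℕ :=
  if n = 0 then tab C0 else if n = 1 then tab C1 else if n = 2 then tab C2
  else if n % 3 = 0 then tab P0 else if n % 3 = 1 then tab P1 else tab P2

lemma step_all (n : ℕ) (a b c : R4) (h : okP a b c) :
    Phi n a b + 3 * popR c ≤ 8 + Phi (n + 1) b c := by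
  unfold Phi
  split_ifs <;>
    first
      | contradiction
      | omega
      | exact step01 a b c h
      | exact step12 a b c h
      | exact step2P a b c h
      | exact stepP01 a b c h
      | exact stepP12 a b c h
      | exact stepP20 a b c h

lemma seq_bound (h : ℕ) (hh : 4 ≤ h) (r : ℕ → R4) (hend : r h = eR)
    (hok : ∀ i, i < h → okP (if i = 0 then eR else r (i-1)) (r i) (r (i+1))) :
    3 * (∑ i ∈ Finset.range h, popR (r i)) + 60 ≤
      8 * h + (if (h-1) % 3 = 0 then 64 else if (h-1) % 3 = 1 then 62 else 63) := by
  have inv : ∀ n, 1 ≤ n → n ≤ h →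
      3 * (∑ i ∈ Finset.range n, popR (r i)) + 60 ≤
        8 * n + Phi (n-1) (if n-1 = 0 then eR else r (n-2)) (r (n-1)) := by
    intro n
    induction n with
    | zero => omega
    | succ m ih =>
      intro _ hle
      rcases Nat.eq_zero_or_pos m with hm | hm
      · subst hm
        simpa [Phi, Finset.sum_range_one] using init_cond (r 0)
      · have ihm := ih hm (by omega)
        have hok' := hok (m-1) (by omega)
        have e1 : m - 1 - 1 = m - 2 := by omega
        have e2 : m - 1 + 1 = m := by omega
        rw [e1, e2] at hok'
        have hstep := step_all (m-1) (if m-1 = 0 then eR else r (m-2)) (r (m-1)) (r m) hok'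
        rw [e2] at hstep
        rw [Finset.sum_range_succ]
        have f1 : m + 1 - 1 = m := by omega
        have f2 : m + 1 - 2 = m - 1 := by omega
        rw [f1, f2, if_neg (by omega : ¬ m = 0)]
        omega
  have hn0 : ¬ (h - 1 = 0) := by omega
  have hfin := inv h (by omega) le_rfl
  rw [if_neg hn0] at hfin
  have hok' := hok (h-1) (by omega)
  rw [(by omega : h - 1 + 1 = h), hend, if_neg hn0,
    (by omega : h - 1 - 1 = h - 2)] at hok'
  have hm3 : (h-1) % 3 = 0 ∨ (h-1) % 3 = 1 ∨ (h-1) % 3 = 2 := by omega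
  have hn1 : ¬ (h - 1 = 1) := by omega
  have hn2 : ¬ (h - 1 = 2) := by omega
  rcases hm3 with hm3 | hm3 | hm3
  · rw [if_pos hm3]
    have : Phi (h-1) = tab P0 := by unfold Phi; rw [if_neg hn0, if_neg hn1, if_neg hn2, if_pos hm3]
    rw [this] at hfin
    have := finalP0 _ _ hok'
    omega
  · rw [if_neg (by omega), if_pos hm3]
    have : Phi (h-1) = tab P1 := by
      unfold Phi; rw [if_neg hn0, if_neg hn1, if_neg hn2, if_neg (by omega), if_pos hm3]
    rw [this] at hfin
    have := finalP1 _ _ hok'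
    omega
  · rw [if_neg (by omega), if_neg (by omega)]
    have : Phi (h-1) = tab P2 := by
      unfold Phi; rw [if_neg hn0, if_neg hn1, if_neg hn2, if_neg (by omega), if_neg (by omega)]
    rw [this] at hfin
    have := finalP2 _ _ hok'
    omega


lemma sumA {h : ℕ} (f : Fin h → Bool) (i : Fin h) :
    (∑ a : Fin h, if i = a ∧ f a = true then 1 else 0) = (f i).toNat := by
  rw [Finset.sum_eq_single i]
  · cases hfi : f i <;> simp [hfi]
  · intro b _ hb
    exact if_neg (fun hc => hb hc.1.symm)
  · intro hmem; exact absurd (Finset.mem_univ i) hmem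

lemma sumB {h : ℕ} (f : Fin h → Bool) (i : Fin h) :
    (∑ a : Fin h, if ((i.val + 1 = a.val ∨ a.val + 1 = i.val) ∧ f a = true) then 1 else 0)
      = (if hu : i.val + 1 < h then (f ⟨i.val+1, hu⟩).toNat else 0)
        + (if hd : 1 ≤ i.val then
            (f ⟨i.val-1, Nat.lt_of_le_of_lt (Nat.sub_le _ _) i.isLt⟩).toNat else 0) := by
  have split : ∀ a : Fin h,
      (if ((i.val + 1 = a.val ∨ a.val + 1 = i.val) ∧ f a = true) then (1:ℕ) else 0)
      = (if (i.val + 1 = a.val ∧ f a = true) then 1 else 0)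
        + (if (a.val + 1 = i.val ∧ f a = true) then 1 else 0) := by
    intro a
    by_cases h1 : i.val + 1 = a.val <;> by_cases h2 : a.val + 1 = i.val <;>
      by_cases h3 : f a = true <;> simp [h1, h2, h3] <;> omega
  rw [Finset.sum_congr rfl (fun a _ => split a), Finset.sum_add_distrib]
  congr 1
  · by_cases hu : i.val + 1 < h
    · rw [dif_pos hu, Finset.sum_eq_single ⟨i.val+1, hu⟩]
      · cases hfi : f ⟨i.val+1, hu⟩ <;> simp [hfi]
      · intro b _ hb; exact if_neg (fun hc => hb (Fin.ext hc.1.symm))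
      · intro hmem; exact absurd (Finset.mem_univ _) hmem
    · rw [dif_neg hu, Finset.sum_eq_zero]
      intro a _
      apply if_neg
      rintro ⟨h1, -⟩
      exact hu (h1 ▸ a.isLt)
  · by_cases hd : 1 ≤ i.val
    · rw [dif_pos hd,
        Finset.sum_eq_single ⟨i.val-1, Nat.lt_of_le_of_lt (Nat.sub_le _ _) i.isLt⟩]
      · have hv : (i.val - 1) + 1 = i.val := by omega
        cases hfi : f ⟨i.val-1, Nat.lt_of_le_of_lt (Nat.sub_le _ _) i.isLt⟩ <;>
          simp [hfi, hv]
      · intro b _ hb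
        apply if_neg
        rintro ⟨h1, -⟩
        exact hb (Fin.ext (by simp only []; omega))
      · intro hmem; exact absurd (Finset.mem_univ _) hmem
    · rw [dif_neg hd, Finset.sum_eq_zero]
      intro a _
      apply if_neg
      rintro ⟨h1, -⟩
      omega

lemma deg0 {h : ℕ} (W : Fin h × Fin 4 → Bool) (i : Fin h) :
    degW W (i, 0)
      = (if hu : i.val + 1 < h then (W (⟨i.val+1, hu⟩, 0)).toNat else 0)
      + (if hd : 1 ≤ i.val then
          (W (⟨i.val-1, Nat.lt_of_le_of_lt (Nat.sub_le _ _) i.isLt⟩, 0)).toNat else 0)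
      + (W (i, 1)).toNat := by
  rw [degW, Finset.card_filter, Fintype.sum_prod_type]
  simp only [Fin.sum_univ_four]
  trans (∑ x : Fin h, ((((if ((i.val + 1 = x.val ∨ x.val + 1 = i.val) ∧ W (x, 0) = true) then (1:ℕ) else 0) + (if (i = x ∧ W (x, 1) = true) then (1:ℕ) else 0)) + (0:ℕ)) + (0:ℕ)))
  · refine Finset.sum_congr rfl fun x _ => ?_
    have e0 : (if (cellAdj (i, (0:Fin 4)) (x, (0:Fin 4)) ∧ W (x, 0) = true) then (1:ℕ) else 0) = (if ((i.val + 1 = x.val ∨ x.val + 1 = i.val) ∧ W (x, 0) = true) then (1:ℕ) else 0) := by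
      refine if_congr ?_ rfl rfl
      constructor
      · rintro ⟨⟨-, hor⟩ | ⟨-, hor⟩, hW⟩
        · exact absurd hor (by decide : ¬((0:ℕ) + 1 = 0 ∨ (0:ℕ) + 1 = 0))
        · exact ⟨hor, hW⟩
      · rintro ⟨hor, hW⟩
        exact ⟨Or.inr ⟨rfl, hor⟩, hW⟩
    have e1 : (if (cellAdj (i, (0:Fin 4)) (x, (1:Fin 4)) ∧ W (x, 1) = true) then (1:ℕ) else 0) = (if (i = x ∧ W (x, 1) = true) then (1:ℕ) else 0) := by
      refine if_congr ?_ rfl rfl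
      constructor
      · rintro ⟨⟨heq, -⟩ | ⟨heq, -⟩, hW⟩
        · exact ⟨heq, hW⟩
        · exact absurd heq (by decide : ¬((0:Fin 4) = (1:Fin 4)))
      · rintro ⟨heq, hW⟩
        exact ⟨Or.inl ⟨heq, (by decide : ((0:ℕ) + 1 = 1 ∨ (1:ℕ) + 1 = 0))⟩, hW⟩
    have e2 : (if (cellAdj (i, (0:Fin 4)) (x, (2:Fin 4)) ∧ W (x, 2) = true) then (1:ℕ) else 0) = (0:ℕ) := by
      apply if_neg
      rintro ⟨⟨-, hor⟩ | ⟨heq, -⟩, -⟩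
      · exact absurd hor (by decide : ¬((0:ℕ) + 1 = 2 ∨ (2:ℕ) + 1 = 0))
      · exact absurd heq (by decide : ¬((0:Fin 4) = (2:Fin 4)))
    have e3 : (if (cellAdj (i, (0:Fin 4)) (x, (3:Fin 4)) ∧ W (x, 3) = true) then (1:ℕ) else 0) = (0:ℕ) := by
      apply if_neg
      rintro ⟨⟨-, hor⟩ | ⟨heq, -⟩, -⟩
      · exact absurd hor (by decide : ¬((0:ℕ) + 1 = 3 ∨ (3:ℕ) + 1 = 0))
      · exact absurd heq (by decide : ¬((0:Fin 4) = (3:Fin 4)))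
    rw [e0, e1, e2, e3]
  · simp only [add_zero, zero_add]
    rw [Finset.sum_add_distrib]
    rw [sumB (fun x => W (x, 0)) i, sumA (fun x => W (x, 1)) i]
    try (first
      | omega
      | (simp only []; omega))

lemma deg1 {h : ℕ} (W : Fin h × Fin 4 → Bool) (i : Fin h) :
    degW W (i, 1)
      = (if hu : i.val + 1 < h then (W (⟨i.val+1, hu⟩, 1)).toNat else 0)
      + (if hd : 1 ≤ i.val then
          (W (⟨i.val-1, Nat.lt_of_le_of_lt (Nat.sub_le _ _) i.isLt⟩, 1)).toNat else 0)
      + (W (i, 0)).toNat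
      + (W (i, 2)).toNat := by
  rw [degW, Finset.card_filter, Fintype.sum_prod_type]
  simp only [Fin.sum_univ_four]
  trans (∑ x : Fin h, ((((if (i = x ∧ W (x, 0) = true) then (1:ℕ) else 0) + (if ((i.val + 1 = x.val ∨ x.val + 1 = i.val) ∧ W (x, 1) = true) then (1:ℕ) else 0)) + (if (i = x ∧ W (x, 2) = true) then (1:ℕ) else 0)) + (0:ℕ)))
  · refine Finset.sum_congr rfl fun x _ => ?_
    have e0 : (if (cellAdj (i, (1:Fin 4)) (x, (0:Fin 4)) ∧ W (x, 0) = true) then (1:ℕ) else 0) = (if (i = x ∧ W (x, 0) = true) then (1:ℕ) else 0) := by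
      refine if_congr ?_ rfl rfl
      constructor
      · rintro ⟨⟨heq, -⟩ | ⟨heq, -⟩, hW⟩
        · exact ⟨heq, hW⟩
        · exact absurd heq (by decide : ¬((1:Fin 4) = (0:Fin 4)))
      · rintro ⟨heq, hW⟩
        exact ⟨Or.inl ⟨heq, (by decide : ((1:ℕ) + 1 = 0 ∨ (0:ℕ) + 1 = 1))⟩, hW⟩
    have e1 : (if (cellAdj (i, (1:Fin 4)) (x, (1:Fin 4)) ∧ W (x, 1) = true) then (1:ℕ) else 0) = (if ((i.val + 1 = x.val ∨ x.val + 1 = i.val) ∧ W (x, 1) = true) then (1:ℕ) else 0) := by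
      refine if_congr ?_ rfl rfl
      constructor
      · rintro ⟨⟨-, hor⟩ | ⟨-, hor⟩, hW⟩
        · exact absurd hor (by decide : ¬((1:ℕ) + 1 = 1 ∨ (1:ℕ) + 1 = 1))
        · exact ⟨hor, hW⟩
      · rintro ⟨hor, hW⟩
        exact ⟨Or.inr ⟨rfl, hor⟩, hW⟩
    have e2 : (if (cellAdj (i, (1:Fin 4)) (x, (2:Fin 4)) ∧ W (x, 2) = true) then (1:ℕ) else 0) = (if (i = x ∧ W (x, 2) = true) then (1:ℕ) else 0) := by
      refine if_congr ?_ rfl rfl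
      constructor
      · rintro ⟨⟨heq, -⟩ | ⟨heq, -⟩, hW⟩
        · exact ⟨heq, hW⟩
        · exact absurd heq (by decide : ¬((1:Fin 4) = (2:Fin 4)))
      · rintro ⟨heq, hW⟩
        exact ⟨Or.inl ⟨heq, (by decide : ((1:ℕ) + 1 = 2 ∨ (2:ℕ) + 1 = 1))⟩, hW⟩
    have e3 : (if (cellAdj (i, (1:Fin 4)) (x, (3:Fin 4)) ∧ W (x, 3) = true) then (1:ℕ) else 0) = (0:ℕ) := by
      apply if_neg
      rintro ⟨⟨-, hor⟩ | ⟨heq, -⟩, -⟩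
      · exact absurd hor (by decide : ¬((1:ℕ) + 1 = 3 ∨ (3:ℕ) + 1 = 1))
      · exact absurd heq (by decide : ¬((1:Fin 4) = (3:Fin 4)))
    rw [e0, e1, e2, e3]
  · simp only [add_zero, zero_add]
    rw [Finset.sum_add_distrib, Finset.sum_add_distrib]
    rw [sumB (fun x => W (x, 1)) i, sumA (fun x => W (x, 0)) i, sumA (fun x => W (x, 2)) i]
    try (first
      | omega
      | (simp only []; omega))

lemma deg2 {h : ℕ} (W : Fin h × Fin 4 → Bool) (i : Fin h) :
    degW W (i, 2)
      = (if hu : i.val + 1 < h then (W (⟨i.val+1, hu⟩, 2)).toNat else 0)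
      + (if hd : 1 ≤ i.val then
          (W (⟨i.val-1, Nat.lt_of_le_of_lt (Nat.sub_le _ _) i.isLt⟩, 2)).toNat else 0)
      + (W (i, 1)).toNat
      + (W (i, 3)).toNat := by
  rw [degW, Finset.card_filter, Fintype.sum_prod_type]
  simp only [Fin.sum_univ_four]
  trans (∑ x : Fin h, ((((0:ℕ) + (if (i = x ∧ W (x, 1) = true) then (1:ℕ) else 0)) + (if ((i.val + 1 = x.val ∨ x.val + 1 = i.val) ∧ W (x, 2) = true) then (1:ℕ) else 0)) + (if (i = x ∧ W (x, 3) = true) then (1:ℕ) else 0)))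
  · refine Finset.sum_congr rfl fun x _ => ?_
    have e0 : (if (cellAdj (i, (2:Fin 4)) (x, (0:Fin 4)) ∧ W (x, 0) = true) then (1:ℕ) else 0) = (0:ℕ) := by
      apply if_neg
      rintro ⟨⟨-, hor⟩ | ⟨heq, -⟩, -⟩
      · exact absurd hor (by decide : ¬((2:ℕ) + 1 = 0 ∨ (0:ℕ) + 1 = 2))
      · exact absurd heq (by decide : ¬((2:Fin 4) = (0:Fin 4)))
    have e1 : (if (cellAdj (i, (2:Fin 4)) (x, (1:Fin 4)) ∧ W (x, 1) = true) then (1:ℕ) else 0) = (if (i = x ∧ W (x, 1) = true) then (1:ℕ) else 0) := by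
      refine if_congr ?_ rfl rfl
      constructor
      · rintro ⟨⟨heq, -⟩ | ⟨heq, -⟩, hW⟩
        · exact ⟨heq, hW⟩
        · exact absurd heq (by decide : ¬((2:Fin 4) = (1:Fin 4)))
      · rintro ⟨heq, hW⟩
        exact ⟨Or.inl ⟨heq, (by decide : ((2:ℕ) + 1 = 1 ∨ (1:ℕ) + 1 = 2))⟩, hW⟩
    have e2 : (if (cellAdj (i, (2:Fin 4)) (x, (2:Fin 4)) ∧ W (x, 2) = true) then (1:ℕ) else 0) = (if ((i.val + 1 = x.val ∨ x.val + 1 = i.val) ∧ W (x, 2) = true) then (1:ℕ) else 0) := by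
      refine if_congr ?_ rfl rfl
      constructor
      · rintro ⟨⟨-, hor⟩ | ⟨-, hor⟩, hW⟩
        · exact absurd hor (by decide : ¬((2:ℕ) + 1 = 2 ∨ (2:ℕ) + 1 = 2))
        · exact ⟨hor, hW⟩
      · rintro ⟨hor, hW⟩
        exact ⟨Or.inr ⟨rfl, hor⟩, hW⟩
    have e3 : (if (cellAdj (i, (2:Fin 4)) (x, (3:Fin 4)) ∧ W (x, 3) = true) then (1:ℕ) else 0) = (if (i = x ∧ W (x, 3) = true) then (1:ℕ) else 0) := by
      refine if_congr ?_ rfl rfl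
      constructor
      · rintro ⟨⟨heq, -⟩ | ⟨heq, -⟩, hW⟩
        · exact ⟨heq, hW⟩
        · exact absurd heq (by decide : ¬((2:Fin 4) = (3:Fin 4)))
      · rintro ⟨heq, hW⟩
        exact ⟨Or.inl ⟨heq, (by decide : ((2:ℕ) + 1 = 3 ∨ (3:ℕ) + 1 = 2))⟩, hW⟩
    rw [e0, e1, e2, e3]
  · simp only [add_zero, zero_add]
    rw [Finset.sum_add_distrib, Finset.sum_add_distrib]
    rw [sumB (fun x => W (x, 2)) i, sumA (fun x => W (x, 1)) i, sumA (fun x => W (x, 3)) i]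
    try (first
      | omega
      | (simp only []; omega))

lemma deg3 {h : ℕ} (W : Fin h × Fin 4 → Bool) (i : Fin h) :
    degW W (i, 3)
      = (if hu : i.val + 1 < h then (W (⟨i.val+1, hu⟩, 3)).toNat else 0)
      + (if hd : 1 ≤ i.val then
          (W (⟨i.val-1, Nat.lt_of_le_of_lt (Nat.sub_le _ _) i.isLt⟩, 3)).toNat else 0)
      + (W (i, 2)).toNat := by
  rw [degW, Finset.card_filter, Fintype.sum_prod_type]
  simp only [Fin.sum_univ_four]
  trans (∑ x : Fin h, ((((0:ℕ) + (0:ℕ)) + (if (i = x ∧ W (x, 2) = true) then (1:ℕ) else 0)) + (if ((i.val + 1 = x.val ∨ x.val + 1 = i.val) ∧ W (x, 3) = true) then (1:ℕ) else 0)))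
  · refine Finset.sum_congr rfl fun x _ => ?_
    have e0 : (if (cellAdj (i, (3:Fin 4)) (x, (0:Fin 4)) ∧ W (x, 0) = true) then (1:ℕ) else 0) = (0:ℕ) := by
      apply if_neg
      rintro ⟨⟨-, hor⟩ | ⟨heq, -⟩, -⟩
      · exact absurd hor (by decide : ¬((3:ℕ) + 1 = 0 ∨ (0:ℕ) + 1 = 3))
      · exact absurd heq (by decide : ¬((3:Fin 4) = (0:Fin 4)))
    have e1 : (if (cellAdj (i, (3:Fin 4)) (x, (1:Fin 4)) ∧ W (x, 1) = true) then (1:ℕ) else 0) = (0:ℕ) := by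
      apply if_neg
      rintro ⟨⟨-, hor⟩ | ⟨heq, -⟩, -⟩
      · exact absurd hor (by decide : ¬((3:ℕ) + 1 = 1 ∨ (1:ℕ) + 1 = 3))
      · exact absurd heq (by decide : ¬((3:Fin 4) = (1:Fin 4)))
    have e2 : (if (cellAdj (i, (3:Fin 4)) (x, (2:Fin 4)) ∧ W (x, 2) = true) then (1:ℕ) else 0) = (if (i = x ∧ W (x, 2) = true) then (1:ℕ) else 0) := by
      refine if_congr ?_ rfl rfl
      constructor
      · rintro ⟨⟨heq, -⟩ | ⟨heq, -⟩, hW⟩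
        · exact ⟨heq, hW⟩
        · exact absurd heq (by decide : ¬((3:Fin 4) = (2:Fin 4)))
      · rintro ⟨heq, hW⟩
        exact ⟨Or.inl ⟨heq, (by decide : ((3:ℕ) + 1 = 2 ∨ (2:ℕ) + 1 = 3))⟩, hW⟩
    have e3 : (if (cellAdj (i, (3:Fin 4)) (x, (3:Fin 4)) ∧ W (x, 3) = true) then (1:ℕ) else 0) = (if ((i.val + 1 = x.val ∨ x.val + 1 = i.val) ∧ W (x, 3) = true) then (1:ℕ) else 0) := by
      refine if_congr ?_ rfl rfl
      constructor
      · rintro ⟨⟨-, hor⟩ | ⟨-, hor⟩, hW⟩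
        · exact absurd hor (by decide : ¬((3:ℕ) + 1 = 3 ∨ (3:ℕ) + 1 = 3))
        · exact ⟨hor, hW⟩
      · rintro ⟨hor, hW⟩
        exact ⟨Or.inr ⟨rfl, hor⟩, hW⟩
    rw [e0, e1, e2, e3]
  · simp only [add_zero, zero_add]
    rw [Finset.sum_add_distrib]
    rw [sumB (fun x => W (x, 3)) i, sumA (fun x => W (x, 2)) i]
    try (first
      | omega
      | (simp only []; omega))


end Stmt10Aux

open Stmt10Aux in
theorem stmt10 (h : ℕ) (hh : 4 ≤ h) (W : Fin h × Fin 4 → Bool) (hdeg : degLEW W 2) :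
    filledCount W ≤
      (if h % 3 = 1 then (8 * h + 4) / 3
       else if h % 3 = 0 then (8 * h + 3) / 3
       else (8 * h + 2) / 3) := by
  set r : ℕ → R4 := fun n =>
    if hn : n < h then (W (⟨n, hn⟩, 0), W (⟨n, hn⟩, 1), W (⟨n, hn⟩, 2), W (⟨n, hn⟩, 3))
    else eR with hrdef
  have hend : r h = eR := by simp [hrdef]
  have htn : ∀ b : Bool, (if b = true then (1:ℕ) else 0) = b.toNat := fun b => by
    cases b <;> rfl
  have hsum : filledCount W = ∑ n ∈ Finset.range h, popR (r n) := by
    rw [filledCount, Finset.card_filter, Fintype.sum_prod_type,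
      ← Fin.sum_univ_eq_sum_range (fun n => popR (r n)) h]
    refine Finset.sum_congr rfl fun x _ => ?_
    have hx : r x.val = (W (x, 0), W (x, 1), W (x, 2), W (x, 3)) := by
      simp [hrdef, x.isLt]
    rw [Fin.sum_univ_four, hx, popR]
    simp only [htn]
  have hok : ∀ i, i < h → okP (if i = 0 then eR else r (i-1)) (r i) (r (i+1)) := by
    intro i hi
    have d0 := deg0 W ⟨i, hi⟩
    have d1 := deg1 W ⟨i, hi⟩
    have d2 := deg2 W ⟨i, hi⟩
    have d3 := deg3 W ⟨i, hi⟩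
    simp only [Fin.val_mk] at d0 d1 d2 d3
    have hB : r i = (W (⟨i, hi⟩, 0), W (⟨i, hi⟩, 1), W (⟨i, hi⟩, 2), W (⟨i, hi⟩, 3)) := by
      simp [hrdef, hi]
    by_cases hup : i + 1 < h
    · have hC : r (i+1) = (W (⟨i+1, hup⟩, 0), W (⟨i+1, hup⟩, 1),
          W (⟨i+1, hup⟩, 2), W (⟨i+1, hup⟩, 3)) := by
        simp [hrdef, hup]
      rw [dif_pos hup] at d0 d1 d2 d3
      by_cases hdn : 1 ≤ i
      · have hd1 : i - 1 < h := by omega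
        have hA : r (i-1) = (W (⟨i-1, hd1⟩, 0), W (⟨i-1, hd1⟩, 1),
            W (⟨i-1, hd1⟩, 2), W (⟨i-1, hd1⟩, 3)) := by
          simp [hrdef, hd1]
        rw [dif_pos hdn] at d0 d1 d2 d3
        rw [if_neg (by omega : ¬ i = 0), hA, hB, hC]
        refine ⟨fun hw => ?_, fun hw => ?_, fun hw => ?_, fun hw => ?_⟩
        · have hb := hdeg (⟨i, hi⟩, 0) hw; rw [d0] at hb; simp only; omega
        · have hb := hdeg (⟨i, hi⟩, 1) hw; rw [d1] at hb; simp only; omega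
        · have hb := hdeg (⟨i, hi⟩, 2) hw; rw [d2] at hb; simp only; omega
        · have hb := hdeg (⟨i, hi⟩, 3) hw; rw [d3] at hb; simp only; omega
      · rw [dif_neg hdn] at d0 d1 d2 d3
        rw [if_pos (by omega : i = 0), hB, hC]
        refine ⟨fun hw => ?_, fun hw => ?_, fun hw => ?_, fun hw => ?_⟩
        · have hb := hdeg (⟨i, hi⟩, 0) hw; rw [d0] at hb; simp only [eR, Bool.toNat_false]; omega
        · have hb := hdeg (⟨i, hi⟩, 1) hw; rw [d1] at hb; simp only [eR, Bool.toNat_false]; omega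
        · have hb := hdeg (⟨i, hi⟩, 2) hw; rw [d2] at hb; simp only [eR, Bool.toNat_false]; omega
        · have hb := hdeg (⟨i, hi⟩, 3) hw; rw [d3] at hb; simp only [eR, Bool.toNat_false]; omega
    · have hC : r (i+1) = eR := by simp [hrdef, hup]
      rw [dif_neg hup] at d0 d1 d2 d3
      by_cases hdn : 1 ≤ i
      · have hd1 : i - 1 < h := by omega
        have hA : r (i-1) = (W (⟨i-1, hd1⟩, 0), W (⟨i-1, hd1⟩, 1),
            W (⟨i-1, hd1⟩, 2), W (⟨i-1, hd1⟩, 3)) := by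
          simp [hrdef, hd1]
        rw [dif_pos hdn] at d0 d1 d2 d3
        rw [if_neg (by omega : ¬ i = 0), hA, hB, hC]
        refine ⟨fun hw => ?_, fun hw => ?_, fun hw => ?_, fun hw => ?_⟩
        · have hb := hdeg (⟨i, hi⟩, 0) hw; rw [d0] at hb; simp only [eR, Bool.toNat_false]; omega
        · have hb := hdeg (⟨i, hi⟩, 1) hw; rw [d1] at hb; simp only [eR, Bool.toNat_false]; omega
        · have hb := hdeg (⟨i, hi⟩, 2) hw; rw [d2] at hb; simp only [eR, Bool.toNat_false]; omega
        · have hb := hdeg (⟨i, hi⟩, 3) hw; rw [d3] at hb; simp only [eR, Bool.toNat_false]; omega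
      · rw [dif_neg hdn] at d0 d1 d2 d3
        rw [if_pos (by omega : i = 0), hB, hC]
        refine ⟨fun hw => ?_, fun hw => ?_, fun hw => ?_, fun hw => ?_⟩
        · have hb := hdeg (⟨i, hi⟩, 0) hw; rw [d0] at hb; simp only [eR, Bool.toNat_false]; omega
        · have hb := hdeg (⟨i, hi⟩, 1) hw; rw [d1] at hb; simp only [eR, Bool.toNat_false]; omega
        · have hb := hdeg (⟨i, hi⟩, 2) hw; rw [d2] at hb; simp only [eR, Bool.toNat_false]; omega
        · have hb := hdeg (⟨i, hi⟩, 3) hw; rw [d3] at hb; simp only [eR, Bool.toNat_false]; omega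
  have hb := seq_bound h hh r hend hok
  rw [← hsum] at hb
  have h3 : h % 3 = 0 ∨ h % 3 = 1 ∨ h % 3 = 2 := by omega
  rcases h3 with h3 | h3 | h3
  · rw [if_neg (by omega : ¬ h % 3 = 1), if_pos h3]
    rw [if_neg (by omega : ¬ (h-1) % 3 = 0), if_neg (by omega : ¬ (h-1) % 3 = 1)] at hb
    omega
  · rw [if_pos h3]
    rw [if_pos (by omega : (h-1) % 3 = 0)] at hb
    omega
  · rw [if_neg (by omega : ¬ h % 3 = 1), if_neg (by omega : ¬ h % 3 = 0)]
    rw [if_neg (by omega : ¬ (h-1) % 3 = 0), if_pos (by omega : (h-1) % 3 = 1)] at hb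
    omega
end

section
/- Let h ≥ 5 and let W : Fin h × Fin 5 → Bool have every filled cell with at most 2 filled orthogonal neighbors. If h ≡ 0 (mod 3) then the number of filled cells is at most 10h/3 + 1; if h ≡ 1 (mod 3) then it is at most (10h + 2)/3; if h ≡ 2 (mod 3) then it is at most (10h + 4)/3. Moreover, each of these bounds is attained by some such word. -/
namespace S14
def tab0 : Nat := 2785056937239384572775966774928968302079473313485444634269379672433788874446422343916393488992317699547596579375877258203154875684183662122345772132016061883690651046815847182419895607613980096090160100789740312724465907415839651873021451953347902648986325210819181263396815595705973669644614647931298203674924084960098603726151392557760993811203949381525146743505783083778661263379819016629827474883561418189848232483230188342105292504672130777113874696054397076726246741857805062791690677182214058118369776922160098889159902570708402257952635678553165740052949829356161706672481268455162630565805044088689138038057643825998229551144998211315341963980678341541244428250199579767043959470948282586757990718570741295384037524534197345485327526887136005950332754785529910204626931150790683889354461447500445434503754321947700338386032995955717004955951298880729187291697498929255540821982656346020186227049579461328055438741738725437055054789525425519492401903082919266944212446205205538556619469784712627401429847907637407465691759701708541663958574447007760784859633046364392057170572289794911766499531063042942195383413821084804124528210947313137598899896182670719140143415669224814732426505068377506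41756438734807356124147896042564
def tab1 : Nat := 6174954795062932811805835015106583219810582802941663339459964373230237068984762660534412484778402382759929178606162975050474071360439584002198560391114138201181637658071717296081619979321506195065840031112000886479026173996678696525134189615389831462251913510212676480677169562324665307201071133660125801383745448199900818690285815548621431787073677418113140620141243871601608345351657119545938807986346780056083185344659948511866716642740184934058163844137336141369929653966681964665742241577930546248272328993577431335850555835946850678217616346811582094284867827649012268635429674500181701968693983026971702080543851877775179394817685291502340599638748507043506698193445019072171369200160129804213469380437693328236508496048280674544777672494201533593580075197327269355136777412639398078733481871641427666937506900312816097364481707124355575021079980550131300382635924612154276644017236670241221310489334891350235382147411899100552874769244020066305663007765638194814399606016358003898223867254679885843978920626811926330128154047769456506184031618308316527056861711094801060867097313665383503482755544964316384302106045229781327080304686094100173556327407803768217795197320016516176048024516939901151458894533576943920562464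
def tab2 : Nat := 3183043585431353047879431961546665659415299232498480697771699726598390081707439473265061519953836553417484217912453567264419215604678427179776468525143773032845714987476949830872413107630327206042012427198859139276947914847469079392550062258186854765330873167944100941675342654693319832245151376104082746064953162844918027635019954080116853858147852451514930922733891681789178077144656240347340660068234058709662285087049818333589774081083569855523923714735103455064222083552838708543554591843845556347193465519627342119926411513349977632502297784883794781383262123869066916291294819524822254870751218225231816848663932158117791004938465514712688104058451102671037280276244185305514289153299652806219273547771129091693899069230238986418734212490218579528958287272577375098260387745994582593081786190375861131516553130133057563111198016820428763660928676596979679265087743972204024431481689284358861516134506340195682017319661989564774088072265350197676283927577481536062243293702490538157891426311493762477675656300634075700259680196892720392516223403110720702291360368574352705279627836555393319493462152200761879350418231408775930546254278151528732276551876880512121727074606700942847733038253966728179313648867029212709601568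
def tab3 : Nat := 3183043585428578842578769739312418852660461900445972670159622139705515342927791788055045965930307050126108860869931189684336930771311241610354572001028799259900490691780573321214118219495617064020282882523692637220074669674627183378275498730014820073628076804720334454211443148158139466848477892854704951470102409469532778246174197905964116185729342023851205764497621545046563723101381032074010174980408341910129780566011019892129646324800906669844257768945093205748185873991999269364510955444963622933341019280420012889708614389272326648275740750665764884277267093333978578592430227386449711971381421037251068781364077623096581122211002986458654603576984169330752920319377600327409490649340814050662647848888130314466585583507830170973921412414121709493244404482864689204017817617597288982451225267993132995858166293056735670854300328142762895574399280248541109373065988451570295768274004528255332051858706348590153768432856136837399963568714098680062954496617957643489355699883639539117195350322176091786734881465795083001394691616565994453651937229086789667103519972068311393815763075305672658474710890292167709262176366914760269131080088549560183935476707365306994148972807492869185973039595635981163291546059262770583519504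
def tab4 : Nat := 3183042635562424592939143634634041607027571831298975117025974352878723109266319829810564893344484308421446596741155492754493359911923745717289057393443190646202525849834029708247426837571704000848469782058135401813383357481177487639060551692712632641505357666995192627790714450023287726436737416078077995879566295968323729732089745176276641791735199052175816994212008329099519579140865583173030622412344758923701519321926811713985932510506466916951226518625307386475850088512286457700577187494324940826994342727377746324774061975598659276965610151407599881740974555635050880735789559870516834548907332593846560409936131559521867250491114327342663529977397122548074061810539362229958884856949409214644149657169750715496507753195737648261709479623126901356493313348209033148755033098483702866556638996690226558960628202462559526323408849142586399132216319024295274911780704820095245675507227348521880137757195436570002645643463012965378176162558923554609779769312980314365988166957435973262151068299517492293962581373468794448914481577738407995866412638052724463942569142331928911790063965947578656659523529166583546039152353773981384484695531747376635446492587914037610337611099838492358386221392872393880321939025904196134125840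

def bitc (m j : ℕ) : ℕ := m >>> j % 2
def wt (m : ℕ) : ℕ := bitc m 0 + bitc m 1 + bitc m 2 + bitc m 3 + bitc m 4
def cnt (a b c j : ℕ) : ℕ :=
  (if j = 0 then 0 else bitc b (j-1)) + bitc b (j+1) + bitc a j + bitc c j
def okb (a b c : ℕ) : Bool :=
  (List.range 5).all fun j => (bitc b j == 0) || Nat.ble (cnt a b c j) 2
def lkp (t a b : ℕ) : ℕ := t >>> (4*(32*a+b)) % 16

def keysB : Bool :=
  (List.range 32).all fun a => (List.range 32).all fun b => (List.range 32).all fun c =>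
    !(okb a b c) ||
    (Nat.ble (3 * wt b + lkp tab0 b c) (10 + lkp tab0 a b) &&
     Nat.ble (3 * wt b + lkp tab0 b c) (10 + lkp tab1 a b) &&
     Nat.ble (3 * wt b + lkp tab1 b c) (10 + lkp tab2 a b) &&
     Nat.ble (3 * wt b + lkp tab2 b c) (10 + lkp tab3 a b) &&
     Nat.ble (3 * wt b + lkp tab3 b c) (10 + lkp tab4 a b))

set_option maxHeartbeats 8000000 in
theorem keysB_eq : keysB = true := by decide

theorem all_range (n : ℕ) (p : ℕ → Bool) (H : (List.range n).all p = true) :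
    ∀ i, i < n → p i = true := fun i hi => List.all_eq_true.mp H i (List.mem_range.mpr hi)

theorem keys : ∀ a, a < 32 → ∀ b, b < 32 → ∀ c, c < 32 → okb a b c = true →
    (3 * wt b + lkp tab0 b c ≤ 10 + lkp tab0 a b ∧
     3 * wt b + lkp tab0 b c ≤ 10 + lkp tab1 a b ∧
     3 * wt b + lkp tab1 b c ≤ 10 + lkp tab2 a b ∧
     3 * wt b + lkp tab2 b c ≤ 10 + lkp tab3 a b ∧
     3 * wt b + lkp tab3 b c ≤ 10 + lkp tab4 a b) := by
  intro a ha b hb c hc hok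
  have h1 := all_range 32 _ keysB_eq a ha
  have h2 := all_range 32 _ h1 b hb
  have h3 := all_range 32 _ h2 c hc
  simp only [hok, Bool.not_true, Bool.false_or, Bool.and_eq_true, Nat.ble_eq] at h3
  tauto

theorem base4 : ∀ a < 32, 4 ≤ lkp tab0 a 0 := by decide
theorem top8 : ∀ b < 32, lkp tab4 0 b ≤ 8 := by decide

theorem bitc_zero (i : ℕ) : bitc 0 i = 0 := by
  simp [bitc, Nat.zero_shiftRight]

theorem okb_zero (a c : ℕ) : okb a 0 c = true := by
  simp [okb, bitc_zero]

theorem bitc_big (m : ℕ) (hm : m < 32) (i : ℕ) (hi : 5 ≤ i) : bitc m i = 0 := by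
  unfold bitc
  rw [Nat.shiftRight_eq_div_pow]
  have h1 : (2:ℕ)^5 ≤ 2^i := Nat.pow_le_pow_right (by norm_num) hi
  have h2 : m / 2^i = 0 := Nat.div_eq_of_lt (by norm_num at h1 ⊢; omega)
  simp [h2]

theorem okb_iff (a b c : ℕ) : okb a b c = true ↔
    ∀ j, j < 5 → bitc b j = 1 → cnt a b c j ≤ 2 := by
  unfold okb
  rw [List.all_eq_true]
  constructor
  · intro H j hj hb
    have := H j (List.mem_range.mpr hj)
    simp only [Bool.or_eq_true, beq_iff_eq, Nat.ble_eq] at this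
    omega
  · intro H j hj
    rw [List.mem_range] at hj
    simp only [Bool.or_eq_true, beq_iff_eq, Nat.ble_eq]
    have hb2 : bitc b j < 2 := Nat.mod_lt _ (by norm_num)
    by_cases hb : bitc b j = 1
    · exact Or.inr (H j hj hb)
    · exact Or.inl (by omega)

/-! ### encoding rows -/

def enc (f : Fin 5 → Bool) : ℕ :=
  (cond (f 0) 1 0) + 2 * cond (f 1) 1 0 + 4 * cond (f 2) 1 0 +
  8 * cond (f 3) 1 0 + 16 * cond (f 4) 1 0

theorem enc_lt : ∀ f : Fin 5 → Bool, enc f < 32 := by decide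

theorem enc_bit : ∀ f : Fin 5 → Bool, ∀ j : Fin 5,
    bitc (enc f) j.val = if f j = true then 1 else 0 := by decide

theorem wt_enc : ∀ f : Fin 5 → Bool,
    wt (enc f) = ∑ j : Fin 5, (if f j = true then 1 else 0) := by decide

theorem enc_dec : ∀ m, m < 32 → enc (fun j => bitc m j.val == 1) = m := by decide

variable {h : ℕ}

def mk (W : Fin h × Fin 5 → Bool) (i : ℕ) : ℕ :=
  if hi : 1 ≤ i ∧ i ≤ h then enc (fun j => W (⟨i-1, by omega⟩, j)) else 0

theorem mk_lt (W : Fin h × Fin 5 → Bool) (i : ℕ) : mk W i < 32 := by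
  unfold mk; split
  · exact enc_lt _
  · norm_num

theorem mk_zero (W : Fin h × Fin 5 → Bool) : mk W 0 = 0 := by simp [mk]

theorem mk_big (W : Fin h × Fin 5 → Bool) (i : ℕ) (hi : h < i) : mk W i = 0 := by
  rw [mk, dif_neg]; omega

theorem mk_eq (W : Fin h × Fin 5 → Bool) (t : Fin h) :
    mk W (t.val + 1) = enc (fun j => W (t, j)) := by
  have ht : 1 ≤ t.val + 1 ∧ t.val + 1 ≤ h := ⟨by omega, t.isLt⟩
  rw [mk, dif_pos ht]
  congr 1

theorem deg_eq (W : Fin h × Fin 5 → Bool) (t : Fin h) (j : Fin 5) :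
    degW W (t, j) = cnt (mk W t.val) (mk W (t.val+1)) (mk W (t.val+2)) j.val := by
  have hb : mk W (t.val+1) = enc (fun x => W (t, x)) := mk_eq W t
  rw [degW, Finset.card_filter, Fintype.sum_prod_type]
  have split1 : ∀ r : Fin h, ∀ c : Fin 5,
      (if cellAdj (t,j) (r,c) ∧ W (r,c) = true then 1 else 0) =
      ((if (t = r ∧ (j.val + 1 = c.val ∨ c.val + 1 = j.val)) ∧ W (r,c) = true then 1 else 0) +
       ((if (j = c ∧ (t.val + 1 = r.val ∨ r.val + 1 = t.val)) ∧ W (r,c) = true then 1 else 0))) := by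
    intro r c
    by_cases h1 : t = r ∧ (j.val + 1 = c.val ∨ c.val + 1 = j.val) <;>
      by_cases h2 : j = c ∧ (t.val + 1 = r.val ∨ r.val + 1 = t.val)
    · exfalso
      obtain ⟨ht1, hor⟩ := h1
      obtain ⟨hj1, _⟩ := h2
      have := congrArg Fin.val hj1
      rcases hor with ho | ho <;> omega
    · simp [cellAdj, h1, h2]
    · simp [cellAdj, h1, h2]
    · simp [cellAdj, h1, h2]
  rw [Finset.sum_congr rfl fun r _ => Finset.sum_congr rfl fun c _ => split1 r c]
  simp only [Finset.sum_add_distrib]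
  have Hhoriz : (∑ r : Fin h, ∑ c : Fin 5,
      (if (t = r ∧ (j.val + 1 = c.val ∨ c.val + 1 = j.val)) ∧ W (r,c) = true then 1 else 0)) =
      bitc (mk W (t.val+1)) (j.val+1) + (if j.val = 0 then 0 else bitc (mk W (t.val+1)) (j.val-1)) := by
    rw [Finset.sum_eq_single t]
    · have split2 : ∀ c : Fin 5,
          (if (t = t ∧ (j.val + 1 = c.val ∨ c.val + 1 = j.val)) ∧ W (t,c) = true then 1 else 0) =
          ((if j.val + 1 = c.val ∧ W (t,c) = true then 1 else 0) +
           (if c.val + 1 = j.val ∧ W (t,c) = true then 1 else 0)) := by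
        intro c
        by_cases hA : j.val + 1 = c.val <;> by_cases hB : c.val + 1 = j.val
        · omega
        · simp [hA, hB]
        · simp [hA, hB]
        · simp [hA, hB]
      rw [Finset.sum_congr rfl fun c _ => split2 c, Finset.sum_add_distrib]
      congr 1
      · -- right neighbor
        rw [hb]
        by_cases hj : j.val + 1 < 5
        · have hc : ∀ c : Fin 5, (j.val + 1 = c.val ∧ W (t,c) = true) ↔
              (c = (⟨j.val+1, hj⟩ : Fin 5) ∧ W (t,c) = true) := by
            intro c; rw [Fin.ext_iff]; simp; omega
          simp only [hc]
          have e2 : ∀ c : Fin 5, (if c = (⟨j.val+1, hj⟩ : Fin 5) ∧ W (t,c) = true then 1 else 0)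
              = if c = (⟨j.val+1, hj⟩ : Fin 5) then (if W (t,c) = true then (1:ℕ) else 0) else 0 := by
            intro c
            by_cases hc1 : c = (⟨j.val+1, hj⟩ : Fin 5) <;> simp [hc1]
          rw [Finset.sum_congr rfl fun c _ => e2 c, Finset.sum_ite_eq']
          simp [enc_bit (fun x => W (t,x)) ⟨j.val+1, hj⟩]
        · rw [bitc_big _ (enc_lt _) _ (by omega)]
          apply Finset.sum_eq_zero
          intro c _
          rw [if_neg]
          rintro ⟨hc, -⟩
          have := c.isLt; omega
      · -- left neighbor
        by_cases hj : j.val = 0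
        · rw [if_pos hj]
          apply Finset.sum_eq_zero
          intro c _
          rw [if_neg]
          rintro ⟨hc, -⟩
          omega
        · rw [if_neg hj, hb]
          have hjm : j.val - 1 < 5 := by omega
          have hc : ∀ c : Fin 5, (c.val + 1 = j.val ∧ W (t,c) = true) ↔
              (c = (⟨j.val-1, hjm⟩ : Fin 5) ∧ W (t,c) = true) := by
            intro c; rw [Fin.ext_iff]; simp; omega
          simp only [hc]
          have e2 : ∀ c : Fin 5, (if c = (⟨j.val-1, hjm⟩ : Fin 5) ∧ W (t,c) = true then 1 else 0)
              = if c = (⟨j.val-1, hjm⟩ : Fin 5) then (if W (t,c) = true then (1:ℕ) else 0) else 0 := by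
            intro c
            by_cases hc1 : c = (⟨j.val-1, hjm⟩ : Fin 5) <;> simp [hc1]
          rw [Finset.sum_congr rfl fun c _ => e2 c, Finset.sum_ite_eq']
          simp [enc_bit (fun x => W (t,x)) ⟨j.val-1, hjm⟩]
    · intro r _ hrt
      apply Finset.sum_eq_zero
      intro c _
      rw [if_neg]
      rintro ⟨⟨h', -⟩, -⟩
      exact hrt h'.symm
    · intro habs; exact absurd (Finset.mem_univ t) habs
  have Hvert : (∑ r : Fin h, ∑ c : Fin 5,
      (if (j = c ∧ (t.val + 1 = r.val ∨ r.val + 1 = t.val)) ∧ W (r,c) = true then 1 else 0)) =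
      bitc (mk W (t.val+2)) j.val + bitc (mk W t.val) j.val := by
    have inner : ∀ r : Fin h, (∑ c : Fin 5,
        (if (j = c ∧ (t.val + 1 = r.val ∨ r.val + 1 = t.val)) ∧ W (r,c) = true then 1 else 0)) =
        (if (t.val + 1 = r.val ∨ r.val + 1 = t.val) ∧ W (r,j) = true then 1 else 0) := by
      intro r
      have e2 : ∀ c : Fin 5, (if (j = c ∧ (t.val + 1 = r.val ∨ r.val + 1 = t.val)) ∧ W (r,c) = true then 1 else 0)
          = if c = j then (if (t.val + 1 = r.val ∨ r.val + 1 = t.val) ∧ W (r,c) = true then (1:ℕ) else 0) else 0 := by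
        intro c
        by_cases hc1 : c = j
        · subst hc1; simp [and_assoc]
        · have : ¬(j = c) := fun hh => hc1 hh.symm
          simp [hc1, this]
      rw [Finset.sum_congr rfl fun c _ => e2 c, Finset.sum_ite_eq']
      simp
    rw [Finset.sum_congr rfl fun r _ => inner r]
    have split3 : ∀ r : Fin h,
        (if (t.val + 1 = r.val ∨ r.val + 1 = t.val) ∧ W (r,j) = true then (1:ℕ) else 0) =
        ((if t.val + 1 = r.val ∧ W (r,j) = true then 1 else 0) +
         (if r.val + 1 = t.val ∧ W (r,j) = true then 1 else 0)) := by
      intro r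
      by_cases hA : t.val + 1 = r.val <;> by_cases hB : r.val + 1 = t.val
      · omega
      · simp [hA, hB]
      · simp [hA, hB]
      · simp [hA, hB]
    rw [Finset.sum_congr rfl fun r _ => split3 r, Finset.sum_add_distrib]
    congr 1
    · -- down neighbor (row t+1)
      by_cases ht : t.val + 1 < h
      · have hc : ∀ r : Fin h, (t.val + 1 = r.val ∧ W (r,j) = true) ↔
            (r = (⟨t.val+1, ht⟩ : Fin h) ∧ W (r,j) = true) := by
          intro r; rw [Fin.ext_iff]; simp; omega
        simp only [hc]
        have e2 : ∀ r : Fin h, (if r = (⟨t.val+1, ht⟩ : Fin h) ∧ W (r,j) = true then 1 else 0)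
            = if r = (⟨t.val+1, ht⟩ : Fin h) then (if W (r,j) = true then (1:ℕ) else 0) else 0 := by
          intro r
          by_cases hc1 : r = (⟨t.val+1, ht⟩ : Fin h) <;> simp [hc1]
        rw [Finset.sum_congr rfl fun r _ => e2 r, Finset.sum_ite_eq']
        have e3 : t.val + 2 = ((⟨t.val+1, ht⟩ : Fin h)).val + 1 := by simp
        rw [e3, mk_eq W ⟨t.val+1, ht⟩]
        simp [enc_bit (fun x => W (⟨t.val+1, ht⟩, x)) j]
      · rw [mk_big W (t.val+2) (by omega), bitc_zero]
        apply Finset.sum_eq_zero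
        intro r _
        rw [if_neg]
        rintro ⟨hr, -⟩
        have := r.isLt; omega
    · -- up neighbor (row t-1)
      by_cases ht : t.val = 0
      · rw [ht, mk_zero, bitc_zero]
        apply Finset.sum_eq_zero
        intro r _
        rw [if_neg]
        rintro ⟨hr, -⟩
        omega
      · have htm : t.val - 1 < h := by have := t.isLt; omega
        have hc : ∀ r : Fin h, (r.val + 1 = t.val ∧ W (r,j) = true) ↔
            (r = (⟨t.val-1, htm⟩ : Fin h) ∧ W (r,j) = true) := by
          intro r; rw [Fin.ext_iff]; simp; omega
        simp only [hc]
        have e2 : ∀ r : Fin h, (if r = (⟨t.val-1, htm⟩ : Fin h) ∧ W (r,j) = true then 1 else 0)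
            = if r = (⟨t.val-1, htm⟩ : Fin h) then (if W (r,j) = true then (1:ℕ) else 0) else 0 := by
          intro r
          by_cases hc1 : r = (⟨t.val-1, htm⟩ : Fin h) <;> simp [hc1]
        rw [Finset.sum_congr rfl fun r _ => e2 r, Finset.sum_ite_eq']
        have e3 : t.val = ((⟨t.val-1, htm⟩ : Fin h)).val + 1 := by simp; omega
        conv_rhs => rw [e3]
        rw [mk_eq W ⟨t.val-1, htm⟩]
        simp [enc_bit (fun x => W (⟨t.val-1, htm⟩, x)) j]
  rw [Hhoriz, Hvert, cnt]
  ring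

theorem okb_mk (W : Fin h × Fin 5 → Bool) (hdeg : degLEW W 2) :
    ∀ i, okb (mk W i) (mk W (i+1)) (mk W (i+2)) = true := by
  intro i
  by_cases hi : i < h
  · set t : Fin h := ⟨i, hi⟩ with htdef
    rw [okb_iff]
    intro x hx hbit
    set jF : Fin 5 := ⟨x, hx⟩ with hjdef
    have hmk : mk W (i+1) = enc (fun j => W (t, j)) := mk_eq W t
    have hW : W (t, jF) = true := by
      rw [hmk] at hbit
      have := enc_bit (fun j => W (t, j)) jF
      simp only [hjdef] at this
      rw [this] at hbit
      by_cases hw : W (t, jF) = true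
      · exact hw
      · simp [hw] at hbit; exact absurd hbit hw
    have hd := hdeg (t, jF) hW
    rw [deg_eq] at hd
    exact hd
  · have : mk W (i+1) = 0 := mk_big W (i+1) (by omega)
    rw [this]
    exact okb_zero _ _

theorem degLE_of_okb (W : Fin h × Fin 5 → Bool)
    (hOK : ∀ i, okb (mk W i) (mk W (i+1)) (mk W (i+2)) = true) : degLEW W 2 := by
  rintro ⟨t, j⟩ hp
  rw [deg_eq]
  apply (okb_iff _ _ _).mp (hOK t.val) j.val j.isLt
  rw [mk_eq W t]
  have := enc_bit (fun x => W (t, x)) j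
  rw [this]
  simp [hp]

theorem fc (W : Fin h × Fin 5 → Bool) :
    filledCount W = ∑ i ∈ Finset.range h, wt (mk W (i+1)) := by
  rw [filledCount, Finset.card_filter, Fintype.sum_prod_type]
  rw [← Fin.sum_univ_eq_sum_range (fun i => wt (mk W (i+1)))]
  apply Finset.sum_congr rfl
  intro t _
  rw [mk_eq W t, wt_enc]

theorem tele (W : Fin h × Fin 5 → Bool) (hdeg : degLEW W 2) :
    ∀ k, k ≤ h → (∑ i ∈ Finset.Ico (h-k) h, 3 * wt (mk W (i+1))) + 4 ≤
      10*k + lkp tab0 (mk W (h-k)) (mk W (h-k+1)) := by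
  intro k
  induction k with
  | zero =>
    intro _
    simp only [Nat.sub_zero, Finset.Ico_self, Finset.sum_empty, Nat.mul_zero, Nat.zero_add]
    rw [show h + 1 = h + 1 from rfl, mk_big W (h+1) (by omega)]
    exact Nat.zero_add 4 ▸ (base4 (mk W h) (mk_lt W h))
  | succ k ih =>
    intro hk1
    have hk : k ≤ h := by omega
    have hlt : h - (k+1) < h := by omega
    rw [Finset.sum_eq_sum_Ico_succ_bot hlt]
    have e1 : h - (k+1) + 1 = h - k := by omega
    have e2 : h - (k+1) + 2 = h - k + 1 := by omega
    rw [e1]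
    have hOK := okb_mk W hdeg (h-(k+1))
    rw [e1, e2] at hOK
    have K := (keys _ (mk_lt W _) _ (mk_lt W _) _ (mk_lt W _) hOK).1
    have IH := ih hk
    linarith [IH, K]

theorem upper_main (W : Fin h × Fin 5 → Bool) (hdeg : degLEW W 2) (hh : 5 ≤ h) :
    3 * filledCount W ≤ 10 * h + 4 := by
  have T := tele W hdeg (h-4) (by omega)
  rw [show h - (h-4) = 4 from by omega] at T
  norm_num at T
  have K1 := (keys _ (mk_lt W 3) _ (mk_lt W 4) _ (mk_lt W 5) (okb_mk W hdeg 3)).2.1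
  have K2 := (keys _ (mk_lt W 2) _ (mk_lt W 3) _ (mk_lt W 4) (okb_mk W hdeg 2)).2.2.1
  have K3 := (keys _ (mk_lt W 1) _ (mk_lt W 2) _ (mk_lt W 3) (okb_mk W hdeg 1)).2.2.2.1
  have K4 := (keys _ (mk_lt W 0) _ (mk_lt W 1) _ (mk_lt W 2) (okb_mk W hdeg 0)).2.2.2.2
  rw [mk_zero W] at K4
  have K5 := top8 (mk W 1) (mk_lt W 1)
  have peel : (∑ i ∈ Finset.Ico 0 h, 3 * wt (mk W (i+1))) =
      3 * wt (mk W 1) + 3 * wt (mk W 2) + 3 * wt (mk W 3) + 3 * wt (mk W 4) +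
      ∑ i ∈ Finset.Ico 4 h, 3 * wt (mk W (i+1)) := by
    rw [Finset.sum_eq_sum_Ico_succ_bot (show 0 < h by omega),
        Finset.sum_eq_sum_Ico_succ_bot (show 1 < h by omega),
        Finset.sum_eq_sum_Ico_succ_bot (show 2 < h by omega),
        Finset.sum_eq_sum_Ico_succ_bot (show 3 < h by omega)]
    ring
  have fce : 3 * filledCount W = ∑ i ∈ Finset.Ico 0 h, 3 * wt (mk W (i+1)) := by
    rw [fc W, ← Finset.range_eq_Ico, Finset.mul_sum]
  rw [fce, peel]
  have e40 : 10*(h-4) + 40 = 10*h := by omega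
  linarith [T, K1, K2, K3, K4, K5]

/-! ### constructions -/

def mu1 (i : ℕ) : ℕ := if i % 3 = 0 then 27 else if i % 3 = 1 then 13 else 22
def mu0 (h i : ℕ) : ℕ := if i = h - 1 then 23 else mu1 i
def mu2 (h i : ℕ) : ℕ := if i = 0 then 29 else if i = h - 1 then 23 else mu1 (i+1)

theorem mu1_lt (i : ℕ) : mu1 i < 32 := by unfold mu1; split_ifs <;> norm_num
theorem mu0_lt (h i : ℕ) : mu0 h i < 32 := by
  unfold mu0; split_ifs
  · norm_num
  · exact mu1_lt _
theorem mu2_lt (h i : ℕ) : mu2 h i < 32 := by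
  unfold mu2; split_ifs
  · norm_num
  · norm_num
  · exact mu1_lt _

def Wof (μ : ℕ → ℕ) : Fin h × Fin 5 → Bool := fun p => bitc (μ p.1.val) p.2.val == 1

theorem mk_Wof (μ : ℕ → ℕ) (hμ : ∀ i, μ i < 32) (i : ℕ) :
    mk (Wof (h := h) μ) i = if 1 ≤ i ∧ i ≤ h then μ (i-1) else 0 := by
  unfold mk
  split
  · exact enc_dec _ (hμ _)
  · rfl

theorem count_Wof (μ : ℕ → ℕ) (hμ : ∀ i, μ i < 32) :
    filledCount (Wof (h := h) μ) = ∑ i ∈ Finset.range h, wt (μ i) := by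
  rw [fc]
  apply Finset.sum_congr rfl
  intro i hi
  rw [Finset.mem_range] at hi
  rw [mk_Wof μ hμ (i+1), if_pos (by omega)]
  norm_num

theorem ok_mu1 (hh : 5 ≤ h) (i : ℕ) :
    okb (mk (Wof (h := h) mu1) i) (mk (Wof (h := h) mu1) (i+1)) (mk (Wof (h := h) mu1) (i+2)) = true := by
  have L := mk_Wof (h := h) mu1 mu1_lt
  rw [L i, L (i+1), L (i+2)]
  by_cases hi0 : i = 0
  · subst hi0
    rw [if_neg (show ¬(1 ≤ 0 ∧ 0 ≤ h) by omega),
        if_pos (show 1 ≤ 0+1 ∧ 0+1 ≤ h by omega),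
        if_pos (show 1 ≤ 0+2 ∧ 0+2 ≤ h by omega)]
    decide
  by_cases him : 1 ≤ i ∧ i + 2 ≤ h
  · rw [if_pos (show 1 ≤ i ∧ i ≤ h by omega),
        if_pos (show 1 ≤ i+1 ∧ i+1 ≤ h by omega),
        if_pos (show 1 ≤ i+2 ∧ i+2 ≤ h by omega)]
    rcases (show i % 3 = 0 ∨ i % 3 = 1 ∨ i % 3 = 2 by omega) with h3 | h3 | h3
    · rw [show mu1 (i-1) = 22 from by unfold mu1; rw [show (i-1)%3 = 2 by omega]; norm_num,
          show mu1 (i+1-1) = 27 from by unfold mu1; rw [show (i+1-1)%3 = 0 by omega]; norm_num,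
          show mu1 (i+2-1) = 13 from by unfold mu1; rw [show (i+2-1)%3 = 1 by omega]; norm_num]
      decide
    · rw [show mu1 (i-1) = 27 from by unfold mu1; rw [show (i-1)%3 = 0 by omega]; norm_num,
          show mu1 (i+1-1) = 13 from by unfold mu1; rw [show (i+1-1)%3 = 1 by omega]; norm_num,
          show mu1 (i+2-1) = 22 from by unfold mu1; rw [show (i+2-1)%3 = 2 by omega]; norm_num]
      decide
    · rw [show mu1 (i-1) = 13 from by unfold mu1; rw [show (i-1)%3 = 1 by omega]; norm_num,
          show mu1 (i+1-1) = 22 from by unfold mu1; rw [show (i+1-1)%3 = 2 by omega]; norm_num,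
          show mu1 (i+2-1) = 27 from by unfold mu1; rw [show (i+2-1)%3 = 0 by omega]; norm_num]
      decide
  by_cases hil : i = h - 1
  · rw [if_pos (show 1 ≤ i ∧ i ≤ h by omega),
        if_pos (show 1 ≤ i+1 ∧ i+1 ≤ h by omega),
        if_neg (show ¬(1 ≤ i+2 ∧ i+2 ≤ h) by omega)]
    rcases (show i % 3 = 0 ∨ i % 3 = 1 ∨ i % 3 = 2 by omega) with h3 | h3 | h3
    · rw [show mu1 (i-1) = 22 from by unfold mu1; rw [show (i-1)%3 = 2 by omega]; norm_num,
          show mu1 (i+1-1) = 27 from by unfold mu1; rw [show (i+1-1)%3 = 0 by omega]; norm_num]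
      decide
    · rw [show mu1 (i-1) = 27 from by unfold mu1; rw [show (i-1)%3 = 0 by omega]; norm_num,
          show mu1 (i+1-1) = 13 from by unfold mu1; rw [show (i+1-1)%3 = 1 by omega]; norm_num]
      decide
    · rw [show mu1 (i-1) = 13 from by unfold mu1; rw [show (i-1)%3 = 1 by omega]; norm_num,
          show mu1 (i+1-1) = 22 from by unfold mu1; rw [show (i+1-1)%3 = 2 by omega]; norm_num]
      decide
  · rw [show (if 1 ≤ i+1 ∧ i+1 ≤ h then mu1 (i+1-1) else 0) = 0 from if_neg (by omega)]
    exact okb_zero _ _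

theorem ok_mu0 (hh : 5 ≤ h) (hm : h % 3 = 0) (i : ℕ) :
    okb (mk (Wof (h := h) (mu0 h)) i) (mk (Wof (h := h) (mu0 h)) (i+1)) (mk (Wof (h := h) (mu0 h)) (i+2)) = true := by
  have L := mk_Wof (h := h) (mu0 h) (mu0_lt h)
  rw [L i, L (i+1), L (i+2)]
  by_cases hi0 : i = 0
  · subst hi0
    rw [if_neg (show ¬(1 ≤ 0 ∧ 0 ≤ h) by omega),
        if_pos (show 1 ≤ 0+1 ∧ 0+1 ≤ h by omega),
        if_pos (show 1 ≤ 0+2 ∧ 0+2 ≤ h by omega)]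
    rw [show mu0 h (0+1-1) = 27 from by rw [mu0, if_neg (by omega)]; decide,
        show mu0 h (0+2-1) = 13 from by rw [mu0, if_neg (by omega)]; decide]
    decide
  by_cases him : 1 ≤ i ∧ i + 2 ≤ h - 1
  · rw [if_pos (show 1 ≤ i ∧ i ≤ h by omega),
        if_pos (show 1 ≤ i+1 ∧ i+1 ≤ h by omega),
        if_pos (show 1 ≤ i+2 ∧ i+2 ≤ h by omega)]
    rw [show mu0 h (i-1) = mu1 (i-1) from by rw [mu0, if_neg (by omega)],
        show mu0 h (i+1-1) = mu1 (i+1-1) from by rw [mu0, if_neg (by omega)],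
        show mu0 h (i+2-1) = mu1 (i+2-1) from by rw [mu0, if_neg (by omega)]]
    rcases (show i % 3 = 0 ∨ i % 3 = 1 ∨ i % 3 = 2 by omega) with h3 | h3 | h3
    · rw [show mu1 (i-1) = 22 from by unfold mu1; rw [show (i-1)%3 = 2 by omega]; norm_num,
          show mu1 (i+1-1) = 27 from by unfold mu1; rw [show (i+1-1)%3 = 0 by omega]; norm_num,
          show mu1 (i+2-1) = 13 from by unfold mu1; rw [show (i+2-1)%3 = 1 by omega]; norm_num]
      decide
    · rw [show mu1 (i-1) = 27 from by unfold mu1; rw [show (i-1)%3 = 0 by omega]; norm_num,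
          show mu1 (i+1-1) = 13 from by unfold mu1; rw [show (i+1-1)%3 = 1 by omega]; norm_num,
          show mu1 (i+2-1) = 22 from by unfold mu1; rw [show (i+2-1)%3 = 2 by omega]; norm_num]
      decide
    · rw [show mu1 (i-1) = 13 from by unfold mu1; rw [show (i-1)%3 = 1 by omega]; norm_num,
          show mu1 (i+1-1) = 22 from by unfold mu1; rw [show (i+1-1)%3 = 2 by omega]; norm_num,
          show mu1 (i+2-1) = 27 from by unfold mu1; rw [show (i+2-1)%3 = 0 by omega]; norm_num]
      decide
  by_cases hie : i = h - 2
  · rw [if_pos (show 1 ≤ i ∧ i ≤ h by omega),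
        if_pos (show 1 ≤ i+1 ∧ i+1 ≤ h by omega),
        if_pos (show 1 ≤ i+2 ∧ i+2 ≤ h by omega)]
    rw [show mu0 h (i-1) = 27 from by
          rw [mu0, if_neg (by omega)]; unfold mu1; rw [show (i-1)%3 = 0 by omega]; norm_num,
        show mu0 h (i+1-1) = 13 from by
          rw [mu0, if_neg (by omega)]; unfold mu1; rw [show (i+1-1)%3 = 1 by omega]; norm_num,
        show mu0 h (i+2-1) = 23 from by rw [mu0, if_pos (by omega)]]
    decide
  by_cases hil : i = h - 1
  · rw [if_pos (show 1 ≤ i ∧ i ≤ h by omega),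
        if_pos (show 1 ≤ i+1 ∧ i+1 ≤ h by omega),
        if_neg (show ¬(1 ≤ i+2 ∧ i+2 ≤ h) by omega)]
    rw [show mu0 h (i-1) = 13 from by
          rw [mu0, if_neg (by omega)]; unfold mu1; rw [show (i-1)%3 = 1 by omega]; norm_num,
        show mu0 h (i+1-1) = 23 from by rw [mu0, if_pos (by omega)]]
    decide
  · rw [show (if 1 ≤ i+1 ∧ i+1 ≤ h then mu0 h (i+1-1) else 0) = 0 from if_neg (by omega)]
    exact okb_zero _ _

theorem ok_mu2 (hh : 5 ≤ h) (hm : h % 3 = 2) (i : ℕ) :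
    okb (mk (Wof (h := h) (mu2 h)) i) (mk (Wof (h := h) (mu2 h)) (i+1)) (mk (Wof (h := h) (mu2 h)) (i+2)) = true := by
  have L := mk_Wof (h := h) (mu2 h) (mu2_lt h)
  rw [L i, L (i+1), L (i+2)]
  by_cases hi0 : i = 0
  · subst hi0
    rw [if_neg (show ¬(1 ≤ 0 ∧ 0 ≤ h) by omega),
        if_pos (show 1 ≤ 0+1 ∧ 0+1 ≤ h by omega),
        if_pos (show 1 ≤ 0+2 ∧ 0+2 ≤ h by omega)]
    rw [show mu2 h (0+1-1) = 29 from by rw [mu2, if_pos rfl],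
        show mu2 h (0+2-1) = 22 from by rw [mu2, if_neg (by omega), if_neg (by omega)]; decide]
    decide
  by_cases hi1 : i = 1
  · subst hi1
    rw [if_pos (show 1 ≤ 1 ∧ 1 ≤ h by omega),
        if_pos (show 1 ≤ 1+1 ∧ 1+1 ≤ h by omega),
        if_pos (show 1 ≤ 1+2 ∧ 1+2 ≤ h by omega)]
    rw [show mu2 h (1-1) = 29 from by rw [mu2, if_pos rfl],
        show mu2 h (1+1-1) = 22 from by rw [mu2, if_neg (by omega), if_neg (by omega)]; decide,
        show mu2 h (1+2-1) = 27 from by rw [mu2, if_neg (by omega), if_neg (by omega)]; decide]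
    decide
  by_cases him : 2 ≤ i ∧ i + 2 ≤ h - 1
  · rw [if_pos (show 1 ≤ i ∧ i ≤ h by omega),
        if_pos (show 1 ≤ i+1 ∧ i+1 ≤ h by omega),
        if_pos (show 1 ≤ i+2 ∧ i+2 ≤ h by omega)]
    rw [show mu2 h (i-1) = mu1 (i-1+1) from by rw [mu2, if_neg (by omega), if_neg (by omega)],
        show mu2 h (i+1-1) = mu1 (i+1-1+1) from by rw [mu2, if_neg (by omega), if_neg (by omega)],
        show mu2 h (i+2-1) = mu1 (i+2-1+1) from by rw [mu2, if_neg (by omega), if_neg (by omega)]]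
    rcases (show i % 3 = 0 ∨ i % 3 = 1 ∨ i % 3 = 2 by omega) with h3 | h3 | h3
    · rw [show mu1 (i-1+1) = 27 from by unfold mu1; rw [show (i-1+1)%3 = 0 by omega]; norm_num,
          show mu1 (i+1-1+1) = 13 from by unfold mu1; rw [show (i+1-1+1)%3 = 1 by omega]; norm_num,
          show mu1 (i+2-1+1) = 22 from by unfold mu1; rw [show (i+2-1+1)%3 = 2 by omega]; norm_num]
      decide
    · rw [show mu1 (i-1+1) = 13 from by unfold mu1; rw [show (i-1+1)%3 = 1 by omega]; norm_num,
          show mu1 (i+1-1+1) = 22 from by unfold mu1; rw [show (i+1-1+1)%3 = 2 by omega]; norm_num,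
          show mu1 (i+2-1+1) = 27 from by unfold mu1; rw [show (i+2-1+1)%3 = 0 by omega]; norm_num]
      decide
    · rw [show mu1 (i-1+1) = 22 from by unfold mu1; rw [show (i-1+1)%3 = 2 by omega]; norm_num,
          show mu1 (i+1-1+1) = 27 from by unfold mu1; rw [show (i+1-1+1)%3 = 0 by omega]; norm_num,
          show mu1 (i+2-1+1) = 13 from by unfold mu1; rw [show (i+2-1+1)%3 = 1 by omega]; norm_num]
      decide
  by_cases hie : i = h - 2
  · rw [if_pos (show 1 ≤ i ∧ i ≤ h by omega),
        if_pos (show 1 ≤ i+1 ∧ i+1 ≤ h by omega),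
        if_pos (show 1 ≤ i+2 ∧ i+2 ≤ h by omega)]
    rw [show mu2 h (i-1) = 27 from by
          rw [mu2, if_neg (by omega), if_neg (by omega)]; unfold mu1; rw [show (i-1+1)%3 = 0 by omega]; norm_num,
        show mu2 h (i+1-1) = 13 from by
          rw [mu2, if_neg (by omega), if_neg (by omega)]; unfold mu1; rw [show (i+1-1+1)%3 = 1 by omega]; norm_num,
        show mu2 h (i+2-1) = 23 from by rw [mu2, if_neg (by omega), if_pos (by omega)]]
    decide
  by_cases hil : i = h - 1
  · rw [if_pos (show 1 ≤ i ∧ i ≤ h by omega),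
        if_pos (show 1 ≤ i+1 ∧ i+1 ≤ h by omega),
        if_neg (show ¬(1 ≤ i+2 ∧ i+2 ≤ h) by omega)]
    rw [show mu2 h (i-1) = 13 from by
          rw [mu2, if_neg (by omega), if_neg (by omega)]; unfold mu1; rw [show (i-1+1)%3 = 1 by omega]; norm_num,
        show mu2 h (i+1-1) = 23 from by rw [mu2, if_neg (by omega), if_pos (by omega)]]
    decide
  · rw [show (if 1 ≤ i+1 ∧ i+1 ≤ h then mu2 h (i+1-1) else 0) = 0 from if_neg (by omega)]
    exact okb_zero _ _

theorem sum_mu1 (n : ℕ) : ∑ i ∈ Finset.range n, wt (mu1 i) =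
    10*(n/3) + (if n % 3 = 1 then 4 else if n % 3 = 2 then 7 else 0) := by
  induction n with
  | zero => simp
  | succ n ih =>
    rw [Finset.sum_range_succ, ih]
    rcases (show n % 3 = 0 ∨ n % 3 = 1 ∨ n % 3 = 2 by omega) with h3 | h3 | h3
    · have e : wt (mu1 n) = 4 := by unfold mu1; rw [h3]; decide
      rw [e, h3, show (n+1)%3 = 1 by omega]
      norm_num
      omega
    · have e : wt (mu1 n) = 3 := by unfold mu1; rw [h3]; decide
      rw [e, h3, show (n+1)%3 = 2 by omega]
      norm_num
      omega
    · have e : wt (mu1 n) = 3 := by unfold mu1; rw [h3]; decide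
      rw [e, h3, show (n+1)%3 = 0 by omega]
      norm_num
      omega

theorem sum_mu1s (n : ℕ) : ∑ i ∈ Finset.range n, wt (mu1 (i+2)) =
    10*(n/3) + (if n % 3 = 1 then 3 else if n % 3 = 2 then 7 else 0) := by
  induction n with
  | zero => simp
  | succ n ih =>
    rw [Finset.sum_range_succ, ih]
    rcases (show n % 3 = 0 ∨ n % 3 = 1 ∨ n % 3 = 2 by omega) with h3 | h3 | h3
    · have e : wt (mu1 (n+2)) = 3 := by unfold mu1; rw [show (n+2)%3 = 2 by omega]; decide
      rw [e, h3, show (n+1)%3 = 1 by omega]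
      norm_num
      omega
    · have e : wt (mu1 (n+2)) = 4 := by unfold mu1; rw [show (n+2)%3 = 0 by omega]; decide
      rw [e, h3, show (n+1)%3 = 2 by omega]
      norm_num
      omega
    · have e : wt (mu1 (n+2)) = 3 := by unfold mu1; rw [show (n+2)%3 = 1 by omega]; decide
      rw [e, h3, show (n+1)%3 = 0 by omega]
      norm_num
      omega

theorem count1 (hh : 5 ≤ h) (hm : h % 3 = 1) :
    filledCount (Wof (h := h) mu1) = (10*h+2)/3 := by
  rw [count_Wof mu1 mu1_lt, sum_mu1, hm]
  norm_num
  omega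

theorem count0 (hh : 5 ≤ h) (hm : h % 3 = 0) :
    filledCount (Wof (h := h) (mu0 h)) = 10*h/3 + 1 := by
  rw [count_Wof _ (fun i => mu0_lt h i)]
  obtain ⟨m, rfl⟩ : ∃ m, h = m + 1 := ⟨h-1, by omega⟩
  rw [Finset.sum_range_succ]
  rw [show mu0 (m+1) m = 23 from by rw [mu0, if_pos (by omega)]]
  rw [Finset.sum_congr rfl (fun i hi => by
    rw [show mu0 (m+1) i = mu1 i from by
      rw [mu0, if_neg (by have := Finset.mem_range.mp hi; omega)]])]
  rw [sum_mu1, show m % 3 = 2 by omega, show wt 23 = 4 from by decide]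
  norm_num
  omega

theorem count2 (hh : 5 ≤ h) (hm : h % 3 = 2) :
    filledCount (Wof (h := h) (mu2 h)) = (10*h+4)/3 := by
  rw [count_Wof _ (fun i => mu2_lt h i)]
  obtain ⟨m, rfl⟩ : ∃ m, h = m + 2 := ⟨h-2, by omega⟩
  rw [show m+2 = (m+1)+1 from rfl, Finset.sum_range_succ', Finset.sum_range_succ]
  rw [show mu2 (m+1+1) 0 = 29 from by rw [mu2, if_pos rfl]]
  rw [show mu2 (m+1+1) (m+1) = 23 from by rw [mu2, if_neg (by omega), if_pos (by omega)]]
  rw [Finset.sum_congr rfl (fun i hi => by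
    rw [show mu2 (m+1+1) (i+1) = mu1 (i+2) from by
      rw [mu2, if_neg (by omega),
          if_neg (by have := Finset.mem_range.mp hi; omega),
          show i+1+1 = i+2 from rfl]])]
  rw [sum_mu1s, show m % 3 = 0 by omega, show wt 23 = 4 from by decide,
      show wt 29 = 4 from by decide]
  norm_num
  omega

end S14

theorem stmt14 (h : ℕ) (hh : 5 ≤ h) :
    (∀ W : Fin h × Fin 5 → Bool, degLEW W 2 →
      filledCount W ≤
        (if h % 3 = 0 then 10 * h / 3 + 1
         else if h % 3 = 1 then (10 * h + 2) / 3
         else (10 * h + 4) / 3)) ∧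
    (∃ W : Fin h × Fin 5 → Bool, degLEW W 2 ∧
      filledCount W =
        (if h % 3 = 0 then 10 * h / 3 + 1
         else if h % 3 = 1 then (10 * h + 2) / 3
         else (10 * h + 4) / 3)) := by
  constructor
  · intro W hdeg
    have H := S14.upper_main W hdeg hh
    split_ifs with h0 h1 <;> omega
  · rcases (show h % 3 = 0 ∨ h % 3 = 1 ∨ h % 3 = 2 by omega) with hm | hm | hm
    · exact ⟨S14.Wof (S14.mu0 h), S14.degLE_of_okb _ (S14.ok_mu0 hh hm), by
        rw [S14.count0 hh hm]; simp [hm]⟩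
    · exact ⟨S14.Wof S14.mu1, S14.degLE_of_okb _ (S14.ok_mu1 hh), by
        rw [S14.count1 hh hm]; simp [hm]⟩
    · exact ⟨S14.Wof (S14.mu2 h), S14.degLE_of_okb _ (S14.ok_mu2 hh hm), by
        rw [S14.count2 hh hm]; simp [hm]⟩
end
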